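/- arXiv:2402.07683 — 12 statements merged into one kernel-verified Lean document; each statement's English description precedes it below -/
import Mathlib

section
/- Let d ≥ 1 and n_1,…,n_d ≥ 1. Let σ be an orientation of the grid Γ with vertex set V(Γ) = ∏_{i=1}^d {0,1,…,n_i} (two vertices adjacent iff they differ in exactly one coordinate), i.e., a function assigning to every ordered pair (v,w) of adjacent vertices a value σ(v,w) ∈ {0,1} with σ(v,w) = 1 − σ(w,v). Assume σ is a grid unique sink orientation. Let C be the hypercube whose vertices are families J = (J_{i,h}) with i ∈ {1,…,d}, h ∈ {1,…,n_i} and J_{i,h} ∈ {0,1}. For a cube vertex J and each i, define the color j_i := max({0} ∪ {h : J_{i,h} = 1}) and the secondary color j_i^* := max({0} ∪ {h ≠ j_i : J_{i,h} = 1}), and let v(J) := (j_1,…,j_d) ∈ V(Γ). Define an orientation O of C by: O(J)_{i,h} := σ(v(J), v(J)[i↦h]) XOR J_{i,h} if h < j_i; O(J)_{i,h} := σ(v(J), v(J)[i↦h]) if h > j_i; and O(J)_{i,h} := σ(v(J), v(J)[i↦j_i^*]) if h = j_i, where v[i↦h] denotes v with its i-th coordinate replaced by h. Then O is a unique sink orientation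 of the cube C: for every pair of cube vertices A ≤ B (componentwise), there is exactly one vertex X with A ≤ X ≤ B such that O(X)_{i,h} = 0 for every coordinate (i,h) with A_{i,h} ≠ B_{i,h}. -/
/-- The color `j_i` of a cube vertex `J` in grid dimension `i`:
`max({0} ∪ {h : J_{i,h} = 1})`, where `k : Fin (n i)` encodes `h = k + 1`. -/
def gridColor {d : ℕ} {n : Fin d → ℕ} (J : ∀ i : Fin d, Fin (n i) → Bool)
    (i : Fin d) : ℕ :=
  (Finset.univ.filter fun k : Fin (n i) => J i k = true).sup fun k => (k : ℕ) + 1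

/-- The secondary color `j_i^*` of a cube vertex `J` in grid dimension `i`:
`max({0} ∪ {h ≠ j_i : J_{i,h} = 1})`. -/
def gridColor2 {d : ℕ} {n : Fin d → ℕ} (J : ∀ i : Fin d, Fin (n i) → Bool)
    (i : Fin d) : ℕ :=
  (Finset.univ.filter fun k : Fin (n i) =>
    J i k = true ∧ (k : ℕ) + 1 ≠ gridColor J i).sup fun k => (k : ℕ) + 1

/-- The grid vertex `v(J) = (j_1, …, j_d)` associated with a cube vertex `J`. -/
def gridVert {d : ℕ} {n : Fin d → ℕ} (J : ∀ i : Fin d, Fin (n i) → Bool)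
    (i : Fin d) : Fin (n i + 1) :=
  ⟨gridColor J i, Nat.lt_succ_of_le (Finset.sup_le fun k _ => k.isLt)⟩

/-- The cube orientation `O` constructed from a grid orientation `σ`:
`O(J)_{i,h} = σ(v(J), v(J)[i ↦ h]) XOR J_{i,h}` if `h < j_i`,
`O(J)_{i,h} = σ(v(J), v(J)[i ↦ h])` if `h > j_i`, and
`O(J)_{i,h} = σ(v(J), v(J)[i ↦ j_i^*])` if `h = j_i`,
where `k : Fin (n i)` encodes `h = k + 1` and `true` encodes an outgoing edge. -/
def cubeOrient {d : ℕ} {n : Fin d → ℕ}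
    (σ : (∀ i : Fin d, Fin (n i + 1)) → (∀ i : Fin d, Fin (n i + 1)) → Bool)
    (J : ∀ i : Fin d, Fin (n i) → Bool) (i : Fin d) (k : Fin (n i)) : Bool :=
  if (k : ℕ) + 1 < gridColor J i then
    Bool.xor
      (σ (gridVert J)
        (Function.update (gridVert J) i ⟨(k : ℕ) + 1, Nat.succ_lt_succ k.isLt⟩))
      (J i k)
  else if (k : ℕ) + 1 = gridColor J i then
    σ (gridVert J)
      (Function.update (gridVert J) i
        ⟨gridColor2 J i, Nat.lt_succ_of_le (Finset.sup_le fun k' _ => k'.isLt)⟩)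
  else
    σ (gridVert J)
      (Function.update (gridVert J) i ⟨(k : ℕ) + 1, Nat.succ_lt_succ k.isLt⟩)

/-- Two grid vertices are adjacent iff they differ in exactly one coordinate. -/
def GridAdj {d : ℕ} {n : Fin d → ℕ} (v w : ∀ i : Fin d, Fin (n i + 1)) : Prop :=
  ∃ i, v i ≠ w i ∧ ∀ j, j ≠ i → v j = w j


section helpers
variable {d : ℕ} {n : Fin d → ℕ}

lemma le_gridColor (J : ∀ i : Fin d, Fin (n i) → Bool) (i : Fin d) (k : Fin (n i))
    (h : J i k = true) : (k : ℕ) + 1 ≤ gridColor J i := by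
  unfold gridColor
  exact Finset.le_sup (f := fun k : Fin (n i) => (k : ℕ) + 1) (by simp [h])

lemma gridColor_le (J : ∀ i : Fin d, Fin (n i) → Bool) (i : Fin d) (m : ℕ)
    (h : ∀ k : Fin (n i), J i k = true → (k : ℕ) + 1 ≤ m) : gridColor J i ≤ m :=
  Finset.sup_le fun k hk => h k (by simpa using hk)

lemma gridColor_spec (J : ∀ i : Fin d, Fin (n i) → Bool) (i : Fin d)
    (h : gridColor J i ≠ 0) :
    ∃ k : Fin (n i), (k : ℕ) + 1 = gridColor J i ∧ J i k = true := by
  have hne : (Finset.univ.filter fun k : Fin (n i) => J i k = true).Nonempty := by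
    by_contra hc
    rw [Finset.not_nonempty_iff_eq_empty] at hc
    apply h
    unfold gridColor
    rw [hc]
    rfl
  obtain ⟨k, hk, hks⟩ :=
    Finset.exists_mem_eq_sup (Finset.univ.filter fun k : Fin (n i) => J i k = true) hne
      (fun k => (k : ℕ) + 1)
  exact ⟨k, hks.symm, by simpa using hk⟩

lemma le_gridColor2 (J : ∀ i : Fin d, Fin (n i) → Bool) (i : Fin d) (k : Fin (n i))
    (h : J i k = true) (hne : (k : ℕ) + 1 ≠ gridColor J i) :
    (k : ℕ) + 1 ≤ gridColor2 J i := by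
  unfold gridColor2
  exact Finset.le_sup (f := fun k : Fin (n i) => (k : ℕ) + 1) (by simp [h, hne])

lemma gridColor2_le (J : ∀ i : Fin d, Fin (n i) → Bool) (i : Fin d) (m : ℕ)
    (h : ∀ k : Fin (n i), J i k = true → (k : ℕ) + 1 ≠ gridColor J i → (k : ℕ) + 1 ≤ m) :
    gridColor2 J i ≤ m :=
  Finset.sup_le fun k hk => by
    simp only [Finset.mem_filter] at hk
    exact h k hk.2.1 hk.2.2
end helpers

/-- If `σ` is a grid unique sink orientation (every induced subgrid
`N 1 × ⋯ × N d` has exactly one sink), then the constructed cube orientation is a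
unique sink orientation: every subcube (given by `A ≤ B` componentwise) contains
exactly one vertex `X` whose edges inside the subcube are all incoming. -/
theorem gridUSO_to_cubeUSO {d : ℕ} (hd : 1 ≤ d) {n : Fin d → ℕ}
    (hn : ∀ i, 1 ≤ n i)
    (σ : (∀ i : Fin d, Fin (n i + 1)) → (∀ i : Fin d, Fin (n i + 1)) → Bool)
    (hσ : ∀ v w, GridAdj v w → σ v w = !σ w v)
    (hUSO : ∀ N : ∀ i : Fin d, Finset (Fin (n i + 1)), (∀ i, (N i).Nonempty) →
      ∃! v : ∀ i : Fin d, Fin (n i + 1),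
        (∀ i, v i ∈ N i) ∧
        ∀ i : Fin d, ∀ h ∈ N i, h ≠ v i → σ v (Function.update v i h) = false) :
    ∀ A B : ∀ i : Fin d, Fin (n i) → Bool, (∀ i k, A i k ≤ B i k) →
      ∃! X : ∀ i : Fin d, Fin (n i) → Bool,
        (∀ (i : Fin d) (k : Fin (n i)), A i k ≤ X i k ∧ X i k ≤ B i k) ∧
        ∀ (i : Fin d) (k : Fin (n i)), A i k ≠ B i k →
          cubeOrient σ X i k = false := by
  intro A B hAB
  classical
  have hfree : ∀ i k, A i k ≠ B i k → (A i k = false ∧ B i k = true) := by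
    intro i k h
    have hle := hAB i k
    revert h hle
    cases A i k <;> cases B i k <;> decide
  -- the subgrid
  set N : ∀ i : Fin d, Finset (Fin (n i + 1)) := fun i =>
    Finset.univ.filter fun h : Fin (n i + 1) =>
      (h : ℕ) = gridColor A i ∨
        (gridColor A i < (h : ℕ) ∧ ∃ k : Fin (n i), (k : ℕ) + 1 = (h : ℕ) ∧ A i k ≠ B i k)
    with hN
  have hmemN : ∀ (i : Fin d) (h : Fin (n i + 1)), h ∈ N i ↔
      ((h : ℕ) = gridColor A i ∨
        (gridColor A i < (h : ℕ) ∧ ∃ k : Fin (n i), (k : ℕ) + 1 = (h : ℕ) ∧ A i k ≠ B i k)) := by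
    intro i h
    simp [hN]
  have hNa : ∀ i, gridVert A i ∈ N i := fun i => (hmemN i _).2 (Or.inl rfl)
  have hNne : ∀ i, (N i).Nonempty := fun i => ⟨gridVert A i, hNa i⟩
  obtain ⟨v, ⟨hvN, hvsink⟩, hvuniq⟩ := hUSO N hNne
  have hav : ∀ i, gridColor A i ≤ (v i : ℕ) := by
    intro i
    rcases (hmemN i (v i)).1 (hvN i) with h | h
    · omega
    · omega
  have hmemfree : ∀ (i : Fin d) (k : Fin (n i)), A i k ≠ B i k → gridColor A i < (k : ℕ) + 1 →
      (⟨(k : ℕ) + 1, Nat.succ_lt_succ k.isLt⟩ : Fin (n i + 1)) ∈ N i :=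
    fun i k hf hlt => (hmemN i _).2 (Or.inr ⟨hlt, k, rfl, hf⟩)
  -- the candidate sink
  set X0 : ∀ i : Fin d, Fin (n i) → Bool := fun i k =>
    if A i k = B i k then A i k
    else if (k : ℕ) + 1 < (v i : ℕ) then
      σ v (Function.update v i ⟨(k : ℕ) + 1, Nat.succ_lt_succ k.isLt⟩)
    else decide ((k : ℕ) + 1 = (v i : ℕ)) with hX0def
  have hX0AB : ∀ i k, A i k ≤ X0 i k ∧ X0 i k ≤ B i k := by
    intro i k
    by_cases hf : A i k = B i k
    · simp [hX0def, hf]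
    · obtain ⟨hA, hB⟩ := hfree i k hf
      simp [hX0def, hf, hA, hB]
  have hX0col : ∀ i, gridColor X0 i = (v i : ℕ) := by
    intro i
    apply le_antisymm
    · apply gridColor_le
      intro k hk
      by_cases hf : A i k = B i k
      · have hAk : A i k = true := by simpa [hX0def, hf] using hk
        have h1 := le_gridColor A i k hAk
        have h2 := hav i
        omega
      · by_cases h1 : (k : ℕ) + 1 < (v i : ℕ)
        · omega
        · have : X0 i k = decide ((k : ℕ) + 1 = (v i : ℕ)) := by simp [hX0def, hf, h1]
          rw [this] at hk
          have := of_decide_eq_true hk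
          omega
    · rcases Nat.eq_zero_or_pos (v i : ℕ) with h0 | hpos
      · omega
      rcases (hmemN i (v i)).1 (hvN i) with hva | ⟨hlt, k, hk1, hkf⟩
      · obtain ⟨k, hk1, hkA⟩ := gridColor_spec A i (by omega)
        have hBk : B i k = true := by
          have h2 := hAB i k
          rw [hkA] at h2
          exact le_antisymm (by simp) h2
        have hfix : A i k = B i k := by rw [hkA, hBk]
        have hX0k : X0 i k = true := by simp [hX0def, hfix, hkA, hBk]
        have := le_gridColor X0 i k hX0k
        omega
      · have hX0k : X0 i k = true := by
          have h1 : ¬ ((k : ℕ) + 1 < (v i : ℕ)) := by omega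
          simp [hX0def, hkf, h1, hk1]
        have := le_gridColor X0 i k hX0k
        omega
  have hX0vert : gridVert X0 = v := funext fun i => Fin.ext (hX0col i)
  -- strictness at a free top coordinate
  have hstrict : ∀ (i : Fin d) (k : Fin (n i)), A i k ≠ B i k → (k : ℕ) + 1 = (v i : ℕ) →
      gridColor A i < (v i : ℕ) := by
    intro i k hf hkv
    rcases Nat.lt_or_ge (gridColor A i) (v i : ℕ) with h | h
    · exact h
    · exfalso
      have heq : gridColor A i = (v i : ℕ) := le_antisymm (hav i) h
      obtain ⟨k', hk1, hkA⟩ := gridColor_spec A i (by omega)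
      have hkk : k' = k := Fin.ext (by omega)
      rw [hkk, (hfree i k hf).1] at hkA
      exact Bool.false_ne_true hkA
  -- secondary color of X0 when the top coordinate is free
  have hX0col2 : ∀ (i : Fin d) (k : Fin (n i)), A i k ≠ B i k → (k : ℕ) + 1 = (v i : ℕ) →
      gridColor2 X0 i = gridColor A i := by
    intro i k hf hkv
    have hva : gridColor A i < (v i : ℕ) := hstrict i k hf hkv
    apply le_antisymm
    · apply gridColor2_le
      intro k' hk' hne
      rw [hX0col i] at hne
      by_cases hfix : A i k' = B i k'
      · have : A i k' = true := by simpa [hX0def, hfix] using hk'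
        exact le_gridColor A i k' this
      · by_cases h1 : (k' : ℕ) + 1 < (v i : ℕ)
        · have hσv : X0 i k' =
              σ v (Function.update v i ⟨(k' : ℕ) + 1, Nat.succ_lt_succ k'.isLt⟩) := by
            simp [hX0def, hfix, h1]
          by_contra hgt
          push_neg at hgt
          have hmem := hmemfree i k' hfix hgt
          have hnev : (⟨(k' : ℕ) + 1, Nat.succ_lt_succ k'.isLt⟩ : Fin (n i + 1)) ≠ v i := by
            intro hcon
            have := congrArg Fin.val hcon
            simp at this
            omega
          have hzero := hvsink i _ hmem hnev
          rw [hσv, hzero] at hk'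
          exact Bool.false_ne_true hk'
        · have : X0 i k' = false := by
            have h2 : ¬ ((k' : ℕ) + 1 = (v i : ℕ)) := hne
            simp [hX0def, hfix, h1, h2]
          rw [this] at hk'
          exact absurd hk' (by decide)
    · rcases Nat.eq_zero_or_pos (gridColor A i) with h0 | hpos
      · omega
      obtain ⟨k', hk1, hkA⟩ := gridColor_spec A i (by omega)
      have hBk : B i k' = true := by
        have h2 := hAB i k'
        rw [hkA] at h2
        exact le_antisymm (by simp) h2
      have hX0k : X0 i k' = true := by
        have hfix : A i k' = B i k' := by rw [hkA, hBk]
        simp [hX0def, hfix, hkA, hBk]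
      have := le_gridColor2 X0 i k' hX0k (by rw [hX0col i]; omega)
      omega
  have hX0sink : ∀ i k, A i k ≠ B i k → cubeOrient σ X0 i k = false := by
    intro i k hf
    simp only [cubeOrient, hX0vert, hX0col]
    by_cases h1 : (k : ℕ) + 1 < (v i : ℕ)
    · rw [if_pos h1]
      have hXk : X0 i k = σ v (Function.update v i ⟨(k : ℕ) + 1, Nat.succ_lt_succ k.isLt⟩) := by
        simp [hX0def, hf, h1]
      rw [hXk, Bool.xor_self]
    · rw [if_neg h1]
      by_cases h2 : (k : ℕ) + 1 = (v i : ℕ)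
      · rw [if_pos h2]
        have hg2 : (⟨gridColor2 X0 i, Nat.lt_succ_of_le (Finset.sup_le fun k' _ => k'.isLt)⟩ :
            Fin (n i + 1)) = gridVert A i := Fin.ext (hX0col2 i k hf h2)
        rw [hg2]
        apply hvsink i _ (hNa i)
        intro hcon
        have := congrArg Fin.val hcon
        have hva := hstrict i k hf h2
        simp [gridVert] at this
        omega
      · rw [if_neg h2]
        have hgt : (v i : ℕ) < (k : ℕ) + 1 := by omega
        have hgtA : gridColor A i < (k : ℕ) + 1 := lt_of_le_of_lt (hav i) hgt
        apply hvsink i _ (hmemfree i k hf hgtA)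
        intro hcon
        have := congrArg Fin.val hcon
        simp at this
        omega
  -- uniqueness
  have key : ∀ X : ∀ i : Fin d, Fin (n i) → Bool,
      (∀ i k, A i k ≤ X i k ∧ X i k ≤ B i k) →
      (∀ i k, A i k ≠ B i k → cubeOrient σ X i k = false) → X = X0 := by
    intro X hXab hXs
    have hAX : ∀ i k, A i k = true → X i k = true := by
      intro i k h
      have h1 := (hXab i k).1
      rw [h] at h1
      exact le_antisymm (by simp) h1
    have hXB : ∀ i k, X i k = true → B i k = true := by
      intro i k h
      have h2 := (hXab i k).2
      rw [h] at h2
      exact le_antisymm (by simp) h2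
    have hfixX : ∀ i k, A i k = B i k → X i k = A i k := by
      intro i k h
      have h1 := (hXab i k).1
      have h2 := (hXab i k).2
      rw [← h] at h2
      exact le_antisymm h2 h1
    have hcolAX : ∀ i, gridColor A i ≤ gridColor X i := by
      intro i
      apply gridColor_le
      intro k hk
      exact le_gridColor X i k (hAX i k hk)
    have hC4 : ∀ (i : Fin d) (k : Fin (n i)), A i k ≠ B i k → (k : ℕ) + 1 < gridColor X i →
        X i k = σ (gridVert X)
          (Function.update (gridVert X) i ⟨(k : ℕ) + 1, Nat.succ_lt_succ k.isLt⟩) := by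
      intro i k hf hlt
      have hs := hXs i k hf
      rw [cubeOrient, if_pos hlt] at hs
      revert hs
      cases hb : σ (gridVert X)
          (Function.update (gridVert X) i ⟨(k : ℕ) + 1, Nat.succ_lt_succ k.isLt⟩) <;>
        cases hXb : X i k <;> intro hs <;> first | rfl | exact absurd hs (by decide)
    have hC5 : ∀ (i : Fin d) (k : Fin (n i)), A i k ≠ B i k → gridColor X i < (k : ℕ) + 1 →
        σ (gridVert X)
          (Function.update (gridVert X) i ⟨(k : ℕ) + 1, Nat.succ_lt_succ k.isLt⟩) = false := by
      intro i k hf hlt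
      have hs := hXs i k hf
      rw [cubeOrient, if_neg (by omega), if_neg (by omega)] at hs
      exact hs
    have hwN : ∀ i, gridVert X i ∈ N i := by
      intro i
      rcases Nat.lt_or_ge (gridColor A i) (gridColor X i) with hlt | hge
      · obtain ⟨k, hk1, hkX⟩ := gridColor_spec X i (by omega)
        have hAk : A i k ≠ B i k := by
          intro hfix
          have := hfixX i k hfix
          rw [this] at hkX
          have := le_gridColor A i k hkX
          omega
        apply (hmemN i _).2
        refine Or.inr ⟨?_, k, ?_, hAk⟩
        · show gridColor A i < gridColor X i
          omega
        · show (k : ℕ) + 1 = gridColor X i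
          omega
      · have heq : gridColor X i = gridColor A i := le_antisymm hge (hcolAX i)
        exact (hmemN i _).2 (Or.inl heq)
    have hC6 : ∀ i, ∀ h ∈ N i, (h : ℕ) < gridColor X i →
        σ (gridVert X) (Function.update (gridVert X) i h) = false := by
      intro i h hmem hlt
      by_contra htrue
      rw [Bool.not_eq_false] at htrue
      set M := (N i).filter (fun h' : Fin (n i + 1) =>
        (h' : ℕ) < gridColor X i ∧
          σ (gridVert X) (Function.update (gridVert X) i h') = true) with hM
      have hMne : M.Nonempty := ⟨h, by simp only [hM, Finset.mem_filter]; exact ⟨hmem, hlt, htrue⟩⟩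
      set h0 := M.max' hMne with hh0def
      have hh0M : h0 ∈ M := M.max'_mem hMne
      rw [hM, Finset.mem_filter] at hh0M
      obtain ⟨hh0N, hh0lt, hh0σ⟩ := hh0M
      have hmax : ∀ x ∈ M, x ≤ h0 := fun x hx => M.le_max' x hx
      have hah0 : gridColor A i ≤ (h0 : ℕ) := by
        rcases (hmemN i h0).1 hh0N with hc | hc
        · omega
        · omega
      have hg2 : gridColor2 X i = (h0 : ℕ) := by
        apply le_antisymm
        · apply gridColor2_le
          intro k hk hne
          have hkle := le_gridColor X i k hk
          have hklt : (k : ℕ) + 1 < gridColor X i := by omega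
          by_cases hfix : A i k = B i k
          · have hAk : A i k = true := by rw [← hfixX i k hfix]; exact hk
            have := le_gridColor A i k hAk
            omega
          · rcases Nat.lt_or_ge (gridColor A i) ((k : ℕ) + 1) with hgt | hle
            · have hmemk := hmemfree i k hfix hgt
              have hσk : σ (gridVert X)
                  (Function.update (gridVert X) i ⟨(k : ℕ) + 1, Nat.succ_lt_succ k.isLt⟩) = true := by
                rw [← hC4 i k hfix hklt]
                exact hk
              have hkM : (⟨(k : ℕ) + 1, Nat.succ_lt_succ k.isLt⟩ : Fin (n i + 1)) ∈ M := by
                rw [hM, Finset.mem_filter]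
                exact ⟨hmemk, hklt, hσk⟩
              have := hmax _ hkM
              exact this
            · omega
        · rcases Nat.eq_zero_or_pos (h0 : ℕ) with h0z | h0pos
          · omega
          rcases (hmemN i h0).1 hh0N with hc | ⟨hagt, k, hk1, hkf⟩
          · obtain ⟨k, hk1, hkA⟩ := gridColor_spec A i (by omega)
            have hXk := hAX i k hkA
            have := le_gridColor2 X i k hXk (by omega)
            omega
          · have hklt : (k : ℕ) + 1 < gridColor X i := by omega
            have hfin : (⟨(k : ℕ) + 1, Nat.succ_lt_succ k.isLt⟩ : Fin (n i + 1)) = h0 :=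
              Fin.ext hk1
            have hXk : X i k = true := by
              rw [hC4 i k hkf hklt, hfin]
              exact hh0σ
            have := le_gridColor2 X i k hXk (by omega)
            omega
      -- now derive the contradiction at the top coordinate
      obtain ⟨km, hkm1, hkmX⟩ := gridColor_spec X i (by omega)
      have hkmf : A i km ≠ B i km := by
        intro hfix
        have := hfixX i km hfix
        rw [this] at hkmX
        have h1 := le_gridColor A i km hkmX
        omega
      have hs := hXs i km hkmf
      rw [cubeOrient, if_neg (by omega), if_pos hkm1] at hs
      have hfin2 : (⟨gridColor2 X i, Nat.lt_succ_of_le (Finset.sup_le fun k' _ => k'.isLt)⟩ :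
          Fin (n i + 1)) = h0 := Fin.ext hg2
      rw [hfin2] at hs
      rw [hh0σ] at hs
      exact absurd hs (by decide)
    have hwsink : ∀ i, ∀ h ∈ N i, h ≠ gridVert X i →
        σ (gridVert X) (Function.update (gridVert X) i h) = false := by
      intro i h hmem hne
      rcases Nat.lt_trichotomy (h : ℕ) (gridColor X i) with hlt | heq | hgt
      · exact hC6 i h hmem hlt
      · exact absurd (Fin.ext heq) hne
      · rcases (hmemN i h).1 hmem with hc | ⟨hagt, k, hk1, hkf⟩
        · have := hcolAX i
          omega
        · have hfin : (⟨(k : ℕ) + 1, Nat.succ_lt_succ k.isLt⟩ : Fin (n i + 1)) = h :=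
            Fin.ext hk1
          have := hC5 i k hkf (by omega)
          rwa [hfin] at this
    have hwv : gridVert X = v := hvuniq (gridVert X) ⟨hwN, hwsink⟩
    have hXcol : ∀ i, gridColor X i = (v i : ℕ) := by
      intro i
      have := congrFun hwv i
      exact congrArg Fin.val this
    funext i k
    by_cases hfix : A i k = B i k
    · rw [hfixX i k hfix]
      simp [hX0def, hfix]
    · have hXc := hXcol i
      rcases Nat.lt_trichotomy ((k : ℕ) + 1) ((v i : ℕ)) with hlt | heq | hgt
      · rw [hC4 i k hfix (by omega), hwv]
        simp [hX0def, hfix, hlt]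
      · obtain ⟨k', hk1, hkX⟩ := gridColor_spec X i (by omega)
        have hkk : k' = k := Fin.ext (by omega)
        rw [hkk] at hkX
        rw [hkX]
        have h1 : ¬ ((k : ℕ) + 1 < (v i : ℕ)) := by omega
        simp [hX0def, hfix, h1, heq]
      · have hXf : X i k = false := by
          cases hXv : X i k
          · rfl
          · have := le_gridColor X i k hXv
            rw [hXcol i] at this
            omega
        rw [hXf]
        have h1 : ¬ ((k : ℕ) + 1 < (v i : ℕ)) := by omega
        have h2 : ¬ ((k : ℕ) + 1 = (v i : ℕ)) := by omega
        simp [hX0def, hfix, h1, h2]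
  exact ⟨X0, ⟨hX0AB, hX0sink⟩, fun X hX => key X hX.1 hX.2⟩
end

section
/- Let d ≥ 1 and n_1,…,n_d ≥ 1, and let σ be an orientation of the grid Γ with vertex set ∏_{i=1}^d {0,1,…,n_i}, i.e., σ(v,w) ∈ {0,1} for adjacent v,w with σ(v,w) = 1 − σ(w,v). Define the cube orientation O from σ as follows: cube vertices are families J = (J_{i,h})_{i∈{1,…,d}, h∈{1,…,n_i}} with J_{i,h} ∈ {0,1}; for a cube vertex J set j_i := max({0} ∪ {h : J_{i,h} = 1}), j_i^* := max({0} ∪ {h ≠ j_i : J_{i,h} = 1}), v(J) := (j_1,…,j_d); then O(J)_{i,h} := σ(v(J), v(J)[i↦h]) XOR J_{i,h} if h < j_i, O(J)_{i,h} := σ(v(J), v(J)[i↦h]) if h > j_i, and O(J)_{i,h} := σ(v(J), v(J)[i↦j_i^*]) if h = j_i. Suppose v* ∈ V(Γ) is a sink of σ, i.e., σ(v*, w) = 0 for every vertex w adjacent to v*. Then the cube vertex J* defined by J*_{i,h} = 1 iff h = v*_i is a sink of O, i.e., O(J*)_{i,h} = 0 for all i ∈ {1,…,d} and h ∈ {1,…,n_i}.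 -/
lemma gridColor_star {d : ℕ} {n : Fin d → ℕ} (vstar : ∀ i : Fin d, Fin (n i + 1))
    (i : Fin d) :
    gridColor (n := n) (fun i' k' => decide ((k' : ℕ) + 1 = (vstar i' : ℕ))) i = (vstar i : ℕ) := by
  unfold gridColor
  apply le_antisymm
  · apply Finset.sup_le
    intro k hk
    simp [Finset.mem_filter] at hk
    omega
  · rcases Nat.eq_zero_or_pos (vstar i : ℕ) with h | h
    · omega
    · have hlt : (vstar i : ℕ) - 1 < n i := by have := (vstar i).isLt; omega
      have hmem : (⟨(vstar i : ℕ) - 1, hlt⟩ : Fin (n i)) ∈ Finset.univ.filter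
          (fun k : Fin (n i) =>
            (fun i' (k' : Fin (n i')) => decide ((k' : ℕ) + 1 = (vstar i' : ℕ))) i k = true) := by
        rw [Finset.mem_filter]
        refine ⟨Finset.mem_univ _, ?_⟩
        show decide ((vstar i : ℕ) - 1 + 1 = (vstar i : ℕ)) = true
        simp only [decide_eq_true_eq]
        omega
      have h2 := Finset.le_sup (f := fun k : Fin (n i) => (k : ℕ) + 1) hmem
      simp only [Fin.val_mk] at h2 ⊢
      omega

lemma gridVert_star {d : ℕ} {n : Fin d → ℕ} (vstar : ∀ i : Fin d, Fin (n i + 1)) :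
    gridVert (n := n) (fun i' k' => decide ((k' : ℕ) + 1 = (vstar i' : ℕ))) = vstar := by
  funext i
  exact Fin.ext (gridColor_star vstar i)

lemma gridColor2_star {d : ℕ} {n : Fin d → ℕ} (vstar : ∀ i : Fin d, Fin (n i + 1))
    (i : Fin d) :
    gridColor2 (n := n) (fun i' k' => decide ((k' : ℕ) + 1 = (vstar i' : ℕ))) i = 0 := by
  unfold gridColor2
  convert Finset.sup_empty
  rw [Finset.filter_eq_empty_iff]
  intro k _
  rw [gridColor_star]
  simp
  rfl

/-- If `v*` is a sink of the grid orientation `σ`, then the cube vertex `J*` with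
`J*_{i,h} = 1` iff `h = v*_i` is a sink of the constructed cube orientation. -/
theorem grid_sink_to_cube_sink {d : ℕ} (hd : 1 ≤ d) {n : Fin d → ℕ}
    (hn : ∀ i, 1 ≤ n i)
    (σ : (∀ i : Fin d, Fin (n i + 1)) → (∀ i : Fin d, Fin (n i + 1)) → Bool)
    (hσ : ∀ v w, GridAdj v w → σ v w = !σ w v)
    (vstar : ∀ i : Fin d, Fin (n i + 1))
    (hsink : ∀ (i : Fin d) (h : Fin (n i + 1)), h ≠ vstar i →
      σ vstar (Function.update vstar i h) = false) :
    ∀ (i : Fin d) (k : Fin (n i)),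
      cubeOrient σ (fun i' k' => decide ((k' : ℕ) + 1 = (vstar i' : ℕ))) i k =
        false := by
  intro i k
  unfold cubeOrient
  rw [gridColor_star, gridVert_star]
  split_ifs with h1 h2
  · have hσ0 := hsink i ⟨(k : ℕ) + 1, Nat.succ_lt_succ k.isLt⟩
      (by intro he; have := congrArg Fin.val he; simp at this; omega)
    simp only [hσ0, Bool.false_xor, decide_eq_false_iff_not]
    omega
  · apply hsink
    intro he
    have h3 := congrArg Fin.val he
    have h4 : gridColor2 (n := n)
        (fun i' k' => decide ((k' : ℕ) + 1 = (vstar i' : ℕ))) i = (vstar i : ℕ) := h3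
    rw [gridColor2_star] at h4
    omega
  · exact hsink i ⟨(k : ℕ) + 1, Nat.succ_lt_succ k.isLt⟩
      (by intro he; have := congrArg Fin.val he; simp at this; omega)
end

section
/- Let n ≥ 1, let L, R be n×n real matrices and S ⊆ {1,…,n}. If for every q ∈ ℝ^n the Lin-Bellman system (L, R, q, S) has exactly one solution x ∈ ℝ^n, then the matrix R − I (where I is the n×n identity matrix) is invertible. -/
/-- A vector `x` is a solution of the Lin-Bellman system `(L, R, q, S)`:
for every `i`, `x i = max ((Lx + q) i) ((Rx) i)` if `i ∈ S` and
`x i = min ((Lx + q) i) ((Rx) i)` otherwise. -/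
def LinBellmanSol {n : ℕ} (L R : Matrix (Fin n) (Fin n) ℝ) (q : Fin n → ℝ)
    (S : Finset (Fin n)) (x : Fin n → ℝ) : Prop :=
  ∀ i : Fin n,
    x i = if i ∈ S then max ((L.mulVec x + q) i) (R.mulVec x i)
          else min ((L.mulVec x + q) i) (R.mulVec x i)

/-- If for every `q` the Lin-Bellman system `(L, R, q, S)` has exactly one solution,
then `R - I` is invertible. -/
theorem linBellman_unique_imp_isUnit_R_sub_one {n : ℕ} (hn : 1 ≤ n)
    (L R : Matrix (Fin n) (Fin n) ℝ) (S : Finset (Fin n))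
    (huniq : ∀ q : Fin n → ℝ, ∃! x : Fin n → ℝ, LinBellmanSol L R q S x) :
    IsUnit (R - (1 : Matrix (Fin n) (Fin n) ℝ)) := by
  by_contra h
  rw [Matrix.isUnit_iff_isUnit_det, isUnit_iff_ne_zero, not_ne_iff] at h
  obtain ⟨v, hv, hvz⟩ := (Matrix.exists_mulVec_eq_zero_iff).2 h
  have hRv : R.mulVec v = v := by
    have := hvz
    rw [Matrix.sub_mulVec, Matrix.one_mulVec, sub_eq_zero] at this
    exact this
  set q : Fin n → ℝ := fun i =>
    if i ∈ S then min 0 (v i - L.mulVec v i) else max 0 (v i - L.mulVec v i) with hq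
  have h0 : LinBellmanSol L R q S 0 := by
    intro i
    simp only [Matrix.mulVec_zero, Pi.add_apply, Pi.zero_apply, zero_add, hq]
    split_ifs with hi
    · simp [hi, max_eq_right, min_le_left (0:ℝ) (v i - L.mulVec v i)]
    · simp [hi, min_eq_right, le_max_left (0:ℝ) (v i - L.mulVec v i)]
  have hvsol : LinBellmanSol L R q S v := by
    intro i
    rw [hRv]
    simp only [Pi.add_apply, hq]
    split_ifs with hi
    · rw [max_eq_right]
      linarith [min_le_right (0:ℝ) (v i - L.mulVec v i)]
    · rw [min_eq_right]
      linarith [le_max_right (0:ℝ) (v i - L.mulVec v i)]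
  obtain ⟨x, _, hx⟩ := huniq q
  exact hv ((hx v hvsol).trans (hx 0 h0).symm)
end

section
/- Let M be an n×n real P-matrix. Then for every q ∈ ℝ^n there exists exactly one vector z ∈ ℝ^n satisfying z_i = min((Mz + z + q)_i, 2z_i) for every i ∈ {1,…,n}; that is, the Lin-Bellman system (M + I, 2I, q, ∅) has a unique solution for every q. -/
open Matrix

set_option linter.unusedSectionVars false
set_option linter.unusedVariables false
set_option maxHeartbeats 1600000

section Helpers

variable {α : Type*} [Fintype α] [DecidableEq α]

def PMat (M : Matrix α α ℝ) : Prop :=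
  ∀ s : Finset α, s.Nonempty →
    0 < (M.submatrix (Subtype.val : {i // i ∈ s} → α) Subtype.val).det

variable {β : Type*} [Fintype β] [DecidableEq β]

theorem PMat.det_submatrix_pos {M : Matrix α α ℝ} (hM : PMat M) [Nonempty β]
    (f : β → α) (hf : Function.Injective f) :
    0 < (M.submatrix f f).det := by
  classical
  set u : Finset α := Finset.univ.image f with hu
  have hne : u.Nonempty := ⟨f (Classical.arbitrary β), Finset.mem_image_of_mem f (Finset.mem_univ _)⟩
  have hmem : ∀ b : β, f b ∈ u := fun b => Finset.mem_image_of_mem f (Finset.mem_univ _)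
  let e : β ≃ {i // i ∈ u} := Equiv.ofBijective (fun b => ⟨f b, hmem b⟩)
    ⟨fun b₁ b₂ h => hf (by simpa using congrArg Subtype.val h), by
      rintro ⟨a, ha⟩
      obtain ⟨b, -, rfl⟩ := Finset.mem_image.mp ha
      exact ⟨b, rfl⟩⟩
  have : M.submatrix f f =
      (M.submatrix (Subtype.val : {i // i ∈ u} → α) Subtype.val).submatrix e e := by
    ext i j; rfl
  rw [this, Matrix.det_submatrix_equiv_self]
  exact hM u hne

theorem PMat.submatrix {M : Matrix α α ℝ} (hM : PMat M)
    (f : β → α) (hf : Function.Injective f) : PMat (M.submatrix f f) := by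
  intro t ht
  have : Nonempty {i // i ∈ t} := ⟨⟨ht.choose, ht.choose_spec⟩⟩
  show 0 < ((M.submatrix f f).submatrix (Subtype.val : {i // i ∈ t} → β)
      (Subtype.val : {i // i ∈ t} → β)).det
  have : ((M.submatrix f f).submatrix (Subtype.val : {i // i ∈ t} → β)
      (Subtype.val : {i // i ∈ t} → β))
      = M.submatrix (f ∘ (Subtype.val : {i // i ∈ t} → β)) (f ∘ Subtype.val) := rfl
  rw [this]
  exact hM.det_submatrix_pos _ (hf.comp Subtype.val_injective)

theorem det_updateRow_single (B : Matrix α α ℝ) (i : α) :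
    (B.updateRow i (Pi.single i 1)).det
      = (B.submatrix (Subtype.val : {j // j ≠ i} → α) Subtype.val).det := by
  classical
  let e : {j // j ≠ i} ⊕ Unit ≃ α :=
    { toFun := fun x => Sum.elim Subtype.val (fun _ => i) x
      invFun := fun a => if h : a = i then Sum.inr () else Sum.inl ⟨a, h⟩
      left_inv := by
        rintro (⟨a, ha⟩ | ⟨⟩)
        · simp [ha]
        · simp
      right_inv := by
        intro a
        by_cases h : a = i <;> simp [h] }
  have h1 : (B.updateRow i (Pi.single i 1)).det
      = ((B.updateRow i (Pi.single i 1)).submatrix e e).det :=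
    (Matrix.det_submatrix_equiv_self e _).symm
  rw [h1]
  have h2 : (B.updateRow i (Pi.single i 1)).submatrix e e =
      Matrix.fromBlocks (B.submatrix Subtype.val Subtype.val)
        (fun j _ => B j.1 i) 0 1 := by
    ext x y
    rcases x with x | x <;> rcases y with y | y
    · simp [e, Matrix.fromBlocks, Matrix.updateRow_apply, x.2]
    · simp [e, Matrix.fromBlocks, Matrix.updateRow_apply, x.2]
    · simp only [e, Matrix.fromBlocks, Matrix.updateRow_apply, Pi.single_apply]
      simp [y.2]
    · simp [e, Matrix.fromBlocks, Matrix.updateRow_apply, Pi.single_apply]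
  rw [h2]
  simpa using Matrix.det_fromBlocks_zero₂₁ (B.submatrix Subtype.val Subtype.val)
    (fun j _ => B j.1 i : Matrix {j // j ≠ i} Unit ℝ) (1 : Matrix Unit Unit ℝ)

theorem PMat.det_pos {M : Matrix α α ℝ} (hM : PMat M) [Nonempty α] : 0 < M.det := by
  have := hM.det_submatrix_pos id Function.injective_id
  simpa using this

theorem det_add_diagonal_pos_aux :
    ∀ (N : ℕ) {α : Type} [Fintype α] [DecidableEq α], Fintype.card α ≤ N →
      ∀ (A : Matrix α α ℝ), PMat A → ∀ (s : Finset α) (d : α → ℝ),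
        (∀ i, 0 ≤ d i) → (∀ i ∉ s, d i = 0) →
        0 < (A + Matrix.diagonal d).det := by
  intro N
  induction N with
  | zero =>
    intro α _ _ hc A hA s d hd hsupp
    have : IsEmpty α := Fintype.card_eq_zero_iff.mp (Nat.le_zero.mp hc)
    simp [Matrix.det_isEmpty]
  | succ N ih =>
    intro α _ _ hc A hA s
    induction s using Finset.induction with
    | empty =>
      intro d hd hsupp
      have hd0 : d = 0 := funext fun i => hsupp i (Finset.notMem_empty i)
      rcases isEmpty_or_nonempty α with h | h
      · simp [Matrix.det_isEmpty]
      · have hz : Matrix.diagonal d = 0 := by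
          ext a b; simp [Matrix.diagonal_apply, hd0]
        rw [hz, add_zero]
        exact hA.det_pos
    | @insert i s hi ihs =>
      intro d hd hsupp
      set d' : α → ℝ := Function.update d i 0 with hd'
      have hrow : A + Matrix.diagonal d =
          (A + Matrix.diagonal d').updateRow i
            ((A + Matrix.diagonal d') i + d i • (Pi.single i 1 : α → ℝ)) := by
        ext a b
        by_cases ha : a = i
        · by_cases hb : b = i
          · simp [Matrix.updateRow_apply, ha, hb, Matrix.diagonal_apply, d',
              Pi.single_apply, Function.update_self]
          · simp [Matrix.updateRow_apply, ha, hb, Matrix.diagonal_apply, d',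
              Pi.single_apply, Ne.symm hb]
        · rw [Matrix.updateRow_ne ha]
          by_cases hab2 : a = b
          · subst hab2
            simp [Matrix.diagonal_apply, d', Function.update_of_ne ha]
          · simp [Matrix.diagonal_apply, hab2]
      have hdet : (A + Matrix.diagonal d).det =
          (A + Matrix.diagonal d').det +
            d i * ((A + Matrix.diagonal d').updateRow i (Pi.single i 1)).det := by
        rw [hrow, Matrix.det_updateRow_add, Matrix.det_updateRow_smul,
          Matrix.updateRow_eq_self]
      have h1 : 0 < (A + Matrix.diagonal d').det := by
        refine ihs d' (fun j => ?_) (fun j hj => ?_)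
        · by_cases hji : j = i
          · simp [d', hji]
          · simp [d', Function.update_of_ne hji, hd j]
        · by_cases hji : j = i
          · simp [d', hji]
          · rw [hd', Function.update_of_ne hji]
            exact hsupp j (by simp [hji, hj])
      have h2 : 0 ≤ d i * ((A + Matrix.diagonal d').updateRow i (Pi.single i 1)).det := by
        refine mul_nonneg (hd i) ?_
        rw [det_updateRow_single]
        have hsub : (A + Matrix.diagonal d').submatrix
              (Subtype.val : {j // j ≠ i} → α) Subtype.val
            = A.submatrix (Subtype.val : {j // j ≠ i} → α) Subtype.val
              + Matrix.diagonal (fun j : {j // j ≠ i} => d' j.1) := by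
          ext a b
          by_cases hab : a = b
          · subst hab; simp [Matrix.diagonal_apply]
          · have hv : ¬ (a.1 = b.1) := fun h => hab (Subtype.ext h)
            simp [Matrix.diagonal_apply, hab, Matrix.submatrix_apply, hv]
        rw [hsub]
        have hcard : Fintype.card {j // j ≠ i} ≤ N := by
          have h2 : Fintype.card {j // j ≠ i} < Fintype.card α := by
            simpa using Fintype.card_subtype_lt (p := fun j => j ≠ i) (x := i) (by simp)
          omega
        refine le_of_lt (ih hcard _ (hA.submatrix _ Subtype.val_injective)
          Finset.univ _ (fun j => ?_) (fun j hj => absurd (Finset.mem_univ j) hj))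
        by_cases hji : j.1 = i <;> simp [d', Function.update, hji, hd]
      rw [hdet]; linarith

end Helpers

section Helpers2

variable {α : Type} [Fintype α] [DecidableEq α]

theorem PMat.sign_reversal {M : Matrix α α ℝ} (hM : PMat M) {x : α → ℝ}
    (hx : x ≠ 0) : ∃ i, 0 < x i * M.mulVec x i := by
  classical
  by_contra hcon
  push_neg at hcon
  obtain ⟨i₀, hi₀⟩ : ∃ i, x i ≠ 0 := Function.ne_iff.mp hx
  set s : Finset α := Finset.univ.filter (fun i => x i ≠ 0) with hs
  have hmem : ∀ i : α, i ∈ s ↔ x i ≠ 0 := by simp [hs]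
  haveI : Nonempty {i // i ∈ s} := ⟨⟨i₀, (hmem i₀).mpr hi₀⟩⟩
  set A' : Matrix {i // i ∈ s} {i // i ∈ s} ℝ :=
    M.submatrix Subtype.val Subtype.val with hA'def
  have hA' : PMat A' := hM.submatrix _ Subtype.val_injective
  set d : {i // i ∈ s} → ℝ :=
    fun i => -(M.mulVec x i.1 * x i.1) / (x i.1 * x i.1) with hd_def
  have hxne : ∀ i : {i // i ∈ s}, x i.1 ≠ 0 := fun i => (hmem i.1).mp i.2
  have hd : ∀ i, 0 ≤ d i := by
    intro i
    apply div_nonneg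
    · have := hcon i.1
      nlinarith
    · have := mul_self_nonneg (x i.1); linarith
  have hdx : ∀ i : {i // i ∈ s}, d i * x i.1 = -(M.mulVec x i.1) := by
    intro i
    have h := hxne i
    simp only [hd_def]
    rw [div_mul_eq_mul_div, div_eq_iff (mul_ne_zero h h)]
    ring
  have hker : (A' + Matrix.diagonal d).mulVec (fun i => x i.1) = 0 := by
    funext i
    have hsum : ∑ j : {i // i ∈ s}, M i.1 j.1 * x j.1 = ∑ j : α, M i.1 j * x j := by
      have h0 : ∑ j ∈ s, (M i.1 j * x j) = ∑ j : {i // i ∈ s}, M i.1 j.1 * x j.1 :=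
        Finset.sum_subtype s (fun _ => Iff.rfl) _
      rw [← h0]
      refine Finset.sum_subset (Finset.subset_univ s) ?_
      intro j _ hj
      have : x j = 0 := by_contra fun h => hj ((hmem j).mpr h)
      simp [this]
    have : (A' + Matrix.diagonal d).mulVec (fun i => x i.1) i
        = (∑ j : {i // i ∈ s}, M i.1 j.1 * x j.1) + d i * x i.1 := by
      simp [Matrix.mulVec, dotProduct, add_mul, Finset.sum_add_distrib,
        Matrix.diagonal_apply, Finset.sum_ite_eq', Matrix.add_apply, hA'def,
        Matrix.submatrix_apply]
    rw [Pi.zero_apply, this, hsum, hdx i]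
    have : M.mulVec x i.1 = ∑ j : α, M i.1 j * x j := by
      simp [Matrix.mulVec, dotProduct]
    rw [← this]; ring
  have hdetpos : 0 < (A' + Matrix.diagonal d).det :=
    det_add_diagonal_pos_aux (Fintype.card {i // i ∈ s}) le_rfl A' hA'
      Finset.univ d hd (fun j hj => absurd (Finset.mem_univ j) hj)
  have hvne : (fun i : {i // i ∈ s} => x i.1) ≠ 0 := by
    intro h
    exact hxne ⟨i₀, (hmem i₀).mpr hi₀⟩ (congrFun h _)
  have : (A' + Matrix.diagonal d).det = 0 :=
    (Matrix.exists_mulVec_eq_zero_iff).mp ⟨_, hvne, hker⟩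
  linarith

theorem PMat.exists_const {n : ℕ} (hn : 0 < n) {M : Matrix (Fin n) (Fin n) ℝ}
    (hM : PMat M) :
    ∃ c : ℝ, 0 < c ∧ ∀ x : Fin n → ℝ, ∃ i, c * ‖x‖ ^ 2 ≤ x i * M.mulVec x i := by
  haveI : NeZero n := ⟨hn.ne'⟩
  have hune : (Finset.univ : Finset (Fin n)).Nonempty := Finset.univ_nonempty
  set f : (Fin n → ℝ) → ℝ :=
    fun x => Finset.univ.sup' hune (fun i => x i * M.mulVec x i) with hf_def
  have hfc : Continuous f := by
    apply Continuous.finset_sup'_apply hune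
    intro i _
    have hmv : Continuous fun x : Fin n → ℝ => M.mulVec x i := by
      have : Continuous fun x : Fin n → ℝ => ∑ j, M i j * x j :=
        continuous_finset_sum _ fun j _ => continuous_const.mul (continuous_apply j)
      exact this.congr fun x => by simp [Matrix.mulVec, dotProduct]
    exact (continuous_apply i).mul hmv
  have hcomp : IsCompact (Metric.sphere (0 : Fin n → ℝ) 1) := isCompact_sphere 0 1
  have hsne : (Metric.sphere (0 : Fin n → ℝ) 1).Nonempty :=
    NormedSpace.sphere_nonempty.mpr zero_le_one
  obtain ⟨x₀, hx₀s, hx₀min'⟩ := hcomp.exists_isMinOn hsne hfc.continuousOn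
  have hx₀min : ∀ y ∈ Metric.sphere (0 : Fin n → ℝ) 1, f x₀ ≤ f y :=
    fun y hy => hx₀min' hy
  have hx₀n : ‖x₀‖ = 1 := mem_sphere_zero_iff_norm.mp hx₀s
  have hx₀ne : x₀ ≠ 0 := fun h => by simp [h] at hx₀n
  have hc : 0 < f x₀ := by
    obtain ⟨i, hi⟩ := hM.sign_reversal hx₀ne
    have h2 : x₀ i * M.mulVec x₀ i ≤
        Finset.univ.sup' hune (fun j => x₀ j * M.mulVec x₀ j) :=
      Finset.le_sup' (fun j => x₀ j * M.mulVec x₀ j) (Finset.mem_univ i)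
    exact lt_of_lt_of_le hi h2
  refine ⟨f x₀, hc, fun x => ?_⟩
  rcases eq_or_ne x 0 with rfl | hxne
  · exact ⟨⟨0, hn⟩, by simp⟩
  · have hnx : 0 < ‖x‖ := norm_pos_iff.mpr hxne
    set y : Fin n → ℝ := ‖x‖⁻¹ • x with hy_def
    have hym : y ∈ Metric.sphere (0 : Fin n → ℝ) 1 :=
      mem_sphere_zero_iff_norm.mpr (norm_smul_inv_norm (𝕜 := ℝ) hxne)
    obtain ⟨i, -, hieq⟩ := Finset.exists_mem_eq_sup' hune
      (fun i => y i * M.mulVec y i)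
    refine ⟨i, ?_⟩
    have h1 : f x₀ ≤ y i * M.mulVec y i := hieq ▸ hx₀min y hym
    have h2 : y i * M.mulVec y i = ‖x‖⁻¹ ^ 2 * (x i * M.mulVec x i) := by
      rw [hy_def, Matrix.mulVec_smul]
      simp [smul_eq_mul]
      ring
    rw [h2] at h1
    have h3 := mul_le_mul_of_nonneg_left h1 (le_of_lt (pow_pos hnx 2))
    calc f x₀ * ‖x‖ ^ 2 = ‖x‖ ^ 2 * f x₀ := by ring
    _ ≤ ‖x‖ ^ 2 * (‖x‖⁻¹ ^ 2 * (x i * M.mulVec x i)) := h3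
    _ = x i * M.mulVec x i := by
        field_simp

def SolLCP {n : ℕ} (M : Matrix (Fin n) (Fin n) ℝ) (q z : Fin n → ℝ) : Prop :=
  ∀ i, min ((M.mulVec z + q) i) (z i) = 0

theorem key_prod {a b a' b' : ℝ} (h1 : min a b = 0) (h2 : min a' b' = 0) :
    (b - b') * (a - a') ≤ 0 := by
  have ha : 0 ≤ a := h1 ▸ min_le_left a b
  have hb : 0 ≤ b := h1 ▸ min_le_right a b
  have ha' : 0 ≤ a' := h2 ▸ min_le_left a' b'
  have hb' : 0 ≤ b' := h2 ▸ min_le_right a' b'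
  have hab : a * b = 0 := by
    rcases min_eq_iff.mp h1 with ⟨h, -⟩ | ⟨h, -⟩ <;> simp [h]
  have hab' : a' * b' = 0 := by
    rcases min_eq_iff.mp h2 with ⟨h, -⟩ | ⟨h, -⟩ <;> simp [h]
  nlinarith [mul_nonneg ha hb', mul_nonneg ha' hb]

theorem sol_lip {n : ℕ} {M : Matrix (Fin n) (Fin n) ℝ}
    {c : ℝ} (hc : 0 < c)
    (hcq : ∀ x : Fin n → ℝ, ∃ i, c * ‖x‖ ^ 2 ≤ x i * M.mulVec x i)
    {q1 q2 z1 z2 : Fin n → ℝ} (h1 : SolLCP M q1 z1) (h2 : SolLCP M q2 z2) :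
    c * ‖z1 - z2‖ ≤ ‖q1 - q2‖ := by
  rcases eq_or_ne z1 z2 with rfl | hne
  · simp [norm_nonneg]
  · set x : Fin n → ℝ := z1 - z2 with hx
    have hnx : 0 < ‖x‖ := norm_pos_iff.mpr (sub_ne_zero_of_ne hne)
    obtain ⟨i, hi⟩ := hcq x
    have hMx : x i * M.mulVec x i
        = (z1 i - z2 i) * ((M.mulVec z1 + q1) i - (M.mulVec z2 + q2) i)
          - (z1 i - z2 i) * (q1 i - q2 i) := by
      simp [hx, Matrix.mulVec_sub, Pi.sub_apply]
      ring
    have hcompl : (z1 i - z2 i) * ((M.mulVec z1 + q1) i - (M.mulVec z2 + q2) i) ≤ 0 :=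
      key_prod (h1 i) (h2 i)
    have hzb : |z1 i - z2 i| ≤ ‖x‖ := by
      have := norm_le_pi_norm x i
      simpa [hx, Real.norm_eq_abs] using this
    have hqb : |q1 i - q2 i| ≤ ‖q1 - q2‖ := by
      have := norm_le_pi_norm (q1 - q2) i
      simpa [Real.norm_eq_abs] using this
    have hbound : x i * M.mulVec x i ≤ ‖x‖ * ‖q1 - q2‖ := by
      rw [hMx]
      have h3 : -(z1 i - z2 i) * (q1 i - q2 i) ≤ |z1 i - z2 i| * |q1 i - q2 i| := by
        rw [← abs_mul]
        have := neg_abs_le ((z1 i - z2 i) * (q1 i - q2 i))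
        nlinarith [abs_nonneg ((z1 i - z2 i) * (q1 i - q2 i))]
      have h4 : |z1 i - z2 i| * |q1 i - q2 i| ≤ ‖x‖ * ‖q1 - q2‖ :=
        mul_le_mul hzb hqb (abs_nonneg _) (le_of_lt hnx)
      nlinarith
    have : c * ‖x‖ ^ 2 ≤ ‖x‖ * ‖q1 - q2‖ := le_trans hi hbound
    have hfin : c * ‖x‖ ≤ ‖q1 - q2‖ := by
      nlinarith
    exact hfin

theorem sol_unique {n : ℕ} {M : Matrix (Fin n) (Fin n) ℝ}
    {c : ℝ} (hc : 0 < c)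
    (hcq : ∀ x : Fin n → ℝ, ∃ i, c * ‖x‖ ^ 2 ≤ x i * M.mulVec x i)
    {q z1 z2 : Fin n → ℝ} (h1 : SolLCP M q z1) (h2 : SolLCP M q z2) :
    z1 = z2 := by
  have := sol_lip hc hcq h1 h2
  simp only [sub_self, norm_zero] at this
  have : ‖z1 - z2‖ ≤ 0 := by nlinarith [norm_nonneg (z1 - z2)]
  have := le_antisymm this (norm_nonneg _)
  exact sub_eq_zero.mp (norm_eq_zero.mp this)

/-- Lipschitz constant for the solution map, valid also for `n = 0`. -/
theorem exists_lip {n : ℕ} {M : Matrix (Fin n) (Fin n) ℝ} (hM : PMat M) :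
    ∃ c : ℝ, 0 < c ∧ ∀ q1 q2 z1 z2 : Fin n → ℝ,
      SolLCP M q1 z1 → SolLCP M q2 z2 → c * ‖z1 - z2‖ ≤ ‖q1 - q2‖ := by
  rcases Nat.eq_zero_or_pos n with rfl | hn
  · refine ⟨1, one_pos, fun q1 q2 z1 z2 _ _ => ?_⟩
    have : z1 = z2 := funext fun i => i.elim0
    simp [this, norm_nonneg]
  · obtain ⟨c, hc, hcq⟩ := hM.exists_const hn
    exact ⟨c, hc, fun q1 q2 z1 z2 h1 h2 => sol_lip hc hcq h1 h2⟩

theorem lcp_exists_unique :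
    ∀ (n : ℕ) (M : Matrix (Fin n) (Fin n) ℝ), PMat M →
      ∀ q : Fin n → ℝ, ∃! z, SolLCP M q z := by
  intro n
  induction n with
  | zero =>
    intro M hM q
    exact ⟨0, fun i => i.elim0, fun y hy => funext fun i => i.elim0⟩
  | succ n ih =>
    intro M hM q
    obtain ⟨c, hc, hcq⟩ := hM.exists_const (Nat.succ_pos n)
    set M' : Matrix (Fin n) (Fin n) ℝ := M.submatrix Fin.castSucc Fin.castSucc with hM'def
    have hM' : PMat M' := hM.submatrix _ (Fin.castSucc_injective n)
    obtain ⟨c', hc', hlip'⟩ := exists_lip hM'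
    have hsol := fun q' => ih M' hM' q'
    choose φ hφ hφu using hsol
    set V : Fin n → ℝ := fun j => M (Fin.castSucc j) (Fin.last n) with hVdef
    set Q : ℝ → (Fin n → ℝ) := fun t => (fun j => q (Fin.castSucc j)) + t • V with hQdef
    set Z : ℝ → (Fin (n + 1) → ℝ) := fun t => Fin.snoc (φ (Q t)) t with hZdef
    set W : ℝ → (Fin (n + 1) → ℝ) := fun t => M.mulVec (Z t) + q with hWdef
    -- the cast-indices of W t match the subproblem
    have hWc : ∀ (t : ℝ) (j : Fin n),
        W t (Fin.castSucc j) = (M'.mulVec (φ (Q t)) + Q t) j := by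
      intro t j
      simp only [hWdef, Pi.add_apply, Matrix.mulVec, dotProduct,
        Fin.sum_univ_castSucc, hZdef, Fin.snoc_castSucc, Fin.snoc_last,
        hM'def, Matrix.submatrix_apply, hQdef, hVdef, Pi.smul_apply, smul_eq_mul]
      ring
    have hcomp : ∀ (t : ℝ) (j : Fin n),
        min (W t (Fin.castSucc j)) (Z t (Fin.castSucc j)) = 0 := by
      intro t j
      rw [hWc t j]
      have : Z t (Fin.castSucc j) = φ (Q t) j := by
        simp [hZdef, Fin.snoc_castSucc]
      rw [this]
      exact hφ (Q t) j
    -- continuity of Z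
    have hφcont : Continuous fun t => φ (Q t) := by
      have hK : ∀ t1 t2 : ℝ, dist (φ (Q t1)) (φ (Q t2)) ≤ (c'⁻¹ * ‖V‖) * dist t1 t2 := by
        intro t1 t2
        have h1 : c' * ‖φ (Q t1) - φ (Q t2)‖ ≤ ‖Q t1 - Q t2‖ :=
          hlip' (Q t1) (Q t2) _ _ (hφ (Q t1)) (hφ (Q t2))
        have h2 : Q t1 - Q t2 = (t1 - t2) • V := by
          funext j; simp [hQdef]; ring
        have h3 : ‖Q t1 - Q t2‖ = |t1 - t2| * ‖V‖ := by
          rw [h2, norm_smul, Real.norm_eq_abs]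
        rw [dist_eq_norm, dist_eq_norm]
        rw [h3] at h1
        have h5 : ‖φ (Q t1) - φ (Q t2)‖ ≤ (|t1 - t2| * ‖V‖) / c' := by
          rw [le_div_iff₀ hc']
          linarith
        calc ‖φ (Q t1) - φ (Q t2)‖ ≤ (|t1 - t2| * ‖V‖) / c' := h5
        _ = c'⁻¹ * ‖V‖ * |t1 - t2| := by
            rw [div_eq_inv_mul]; ring
      have hnn : 0 ≤ c'⁻¹ * ‖V‖ := by positivity
      exact (LipschitzWith.of_dist_le_mul (K := ⟨c'⁻¹ * ‖V‖, hnn⟩)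
        (fun x y => hK x y)).continuous
    have hZcont : Continuous Z := by
      rw [hZdef]
      refine continuous_pi fun i => ?_
      induction i using Fin.lastCases with
      | last =>
        have : (fun t => Fin.snoc (α := fun _ => ℝ) (φ (Q t)) t (Fin.last n))
            = fun t => t := by
          funext t; simp [Fin.snoc_last]
        rw [this]
        exact continuous_id
      | cast j =>
        have : (fun t => Fin.snoc (α := fun _ => ℝ) (φ (Q t)) t (Fin.castSucc j))
            = fun t => φ (Q t) j := by
          funext t; simp [Fin.snoc_castSucc]
        rw [this]
        exact (continuous_apply j).comp hφcont
    have hWlast : Continuous fun t => W t (Fin.last n) := by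
      have h1 : Continuous fun t => M.mulVec (Z t) (Fin.last n) := by
        have : (fun t => M.mulVec (Z t) (Fin.last n))
            = fun t => ∑ j, M (Fin.last n) j * Z t j := by
          funext t; simp [Matrix.mulVec, dotProduct]
        rw [this]
        exact continuous_finset_sum _ fun j _ =>
          continuous_const.mul ((continuous_apply j).comp hZcont)
      have hc : Continuous fun _ : ℝ => q (Fin.last n) := continuous_const
      exact h1.add hc
    set g : ℝ → ℝ := fun t => min (W t (Fin.last n)) t with hgdef
    have hgcont : Continuous g := hWlast.min continuous_id
    -- growth estimate
    have hgrow : ∀ t1 t2 : ℝ, t1 < t2 →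
        c * (t2 - t1) ≤ W t2 (Fin.last n) - W t1 (Fin.last n) := by
      intro t1 t2 hlt
      set x : Fin (n + 1) → ℝ := Z t2 - Z t1 with hxdef
      have hxlast : x (Fin.last n) = t2 - t1 := by
        simp [hxdef, hZdef, Fin.snoc_last]
      have hMx : ∀ i, M.mulVec x i = W t2 i - W t1 i := by
        intro i
        simp [hxdef, hWdef, Matrix.mulVec_sub, Pi.sub_apply]
      obtain ⟨i, hi⟩ := hcq x
      induction i using Fin.lastCases with
      | cast j =>
        exfalso
        have hle : x (Fin.castSucc j) * M.mulVec x (Fin.castSucc j) ≤ 0 := by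
          rw [hMx]
          have := key_prod (hcomp t2 j) (hcomp t1 j)
          calc x (Fin.castSucc j) * (W t2 (Fin.castSucc j) - W t1 (Fin.castSucc j))
              = (Z t2 (Fin.castSucc j) - Z t1 (Fin.castSucc j)) *
                (W t2 (Fin.castSucc j) - W t1 (Fin.castSucc j)) := by
                simp [hxdef]
          _ ≤ 0 := this
        have hxne : x ≠ 0 := by
          intro h
          have := congrFun h (Fin.last n)
          rw [hxlast] at this
          simp at this; linarith
        have : 0 < c * ‖x‖ ^ 2 := by
          have := norm_pos_iff.mpr hxne
          positivity
        linarith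
      | last =>
        have hnx : |x (Fin.last n)| ≤ ‖x‖ := by
          have := norm_le_pi_norm x (Fin.last n)
          simpa [Real.norm_eq_abs] using this
        have h1 : c * (t2 - t1) ^ 2 ≤ x (Fin.last n) * M.mulVec x (Fin.last n) := by
          refine le_trans ?_ hi
          have h2 : (t2 - t1) ^ 2 ≤ ‖x‖ ^ 2 := by
            rw [← hxlast]
            calc x (Fin.last n) ^ 2 = |x (Fin.last n)| ^ 2 := (sq_abs _).symm
            _ ≤ ‖x‖ ^ 2 := by nlinarith [abs_nonneg (x (Fin.last n)), norm_nonneg x]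
          nlinarith
        rw [hMx, hxlast] at h1
        have hpos : 0 < t2 - t1 := by linarith
        nlinarith
    -- IVT
    have hg0 : g 0 ≤ 0 := min_le_right _ _
    set T : ℝ := max 1 ((1 + |W 0 (Fin.last n)|) / c) with hTdef
    have hT1 : (1 : ℝ) ≤ T := le_max_left _ _
    have hTpos : 0 < T := lt_of_lt_of_le one_pos hT1
    have hgT : 1 ≤ g T := by
      have hgr := hgrow 0 T hTpos
      have hcT : 1 + |W 0 (Fin.last n)| ≤ c * T := by
        have : (1 + |W 0 (Fin.last n)|) / c ≤ T := le_max_right _ _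
        calc 1 + |W 0 (Fin.last n)| = c * ((1 + |W 0 (Fin.last n)|) / c) := by
              field_simp
        _ ≤ c * T := by nlinarith
      have hW0 : -|W 0 (Fin.last n)| ≤ W 0 (Fin.last n) := neg_abs_le _
      have hWT : 1 ≤ W T (Fin.last n) := by
        have : c * (T - 0) ≤ W T (Fin.last n) - W 0 (Fin.last n) := hgr
        nlinarith
      exact le_min hWT hT1
    obtain ⟨t₀, ht₀mem, ht₀⟩ : ∃ t₀ ∈ Set.Icc (0 : ℝ) T, g t₀ = 0 := by
      have hsub := intermediate_value_Icc (le_of_lt hTpos) hgcont.continuousOn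
      have h0mem : (0 : ℝ) ∈ Set.Icc (g 0) (g T) := ⟨hg0, by linarith⟩
      obtain ⟨t₀, ht₀mem, ht₀⟩ := hsub h0mem
      exact ⟨t₀, ht₀mem, ht₀⟩
    -- the solution
    have hZsol : SolLCP M q (Z t₀) := by
      intro i
      induction i using Fin.lastCases with
      | last =>
        have hZl : Z t₀ (Fin.last n) = t₀ := by simp [hZdef, Fin.snoc_last]
        show min ((M.mulVec (Z t₀) + q) (Fin.last n)) (Z t₀ (Fin.last n)) = 0
        rw [hZl]
        exact ht₀
      | cast j => exact hcomp t₀ j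
    exact ⟨Z t₀, hZsol, fun y hy => sol_unique hc hcq hy hZsol⟩


/-- `M` is a P-matrix: every principal minor of `M` is positive. -/
def IsPMatrix {n : ℕ} (M : Matrix (Fin n) (Fin n) ℝ) : Prop :=
  ∀ s : Finset (Fin n), s.Nonempty →
    0 < (M.submatrix (Subtype.val : {i // i ∈ s} → Fin n)
          (Subtype.val : {i // i ∈ s} → Fin n)).det

/-- If `M` is a P-matrix, then for every `q` there is exactly one `z` with
`z i = min ((Mz + z + q) i) (2 z i)` for all `i`; i.e. the Lin-Bellman system
`(M + I, 2I, q, ∅)` has a unique solution for every `q`. -/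
theorem pmatrix_linBellman_unique {n : ℕ}
    (M : Matrix (Fin n) (Fin n) ℝ) (hM : IsPMatrix M) :
    ∀ q : Fin n → ℝ, ∃! z : Fin n → ℝ,
      ∀ i : Fin n, z i = min ((M.mulVec z + z + q) i) (2 * z i) := by
  intro q
  have hP : PMat M := hM
  have hiff : ∀ z : Fin n → ℝ,
      (∀ i : Fin n, z i = min ((M.mulVec z + z + q) i) (2 * z i)) ↔ SolLCP M q z := by
    intro z
    have hpt : ∀ i : Fin n,
        min ((M.mulVec z + z + q) i) (2 * z i)
          = min ((M.mulVec z + q) i) (z i) + z i := by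
      intro i
      have h1 : (M.mulVec z + z + q) i = (M.mulVec z + q) i + z i := by
        simp [Pi.add_apply]; ring
      have h2 : 2 * z i = z i + z i := by ring
      rw [h1, h2, min_add_add_right]
    constructor
    · intro h i
      have := h i
      rw [hpt i] at this
      linarith
    · intro h i
      rw [hpt i, h i]
      ring
  obtain ⟨z, hz, hu⟩ := lcp_exists_unique n M hP q
  exact ⟨z, (hiff z).mpr hz, fun y hy => hu y ((hiff y).mp hy)⟩
end Helpers2
end

section
/- Let L, R be n×n real matrices, q ∈ ℝ^n and S ⊆ {1,…,n}. A vector x ∈ ℝ^n is a solution of the Lin-Bellman system (L, R, q, S) if and only if there exist vectors w, z ∈ ℝ^n with w ≥ 0 and z ≥ 0 componentwise, w_i·z_i = 0 for all i, and such that for every i ∈ S: x_i − w_i = (Lx + q)_i and x_i − z_i = (Rx)_i, while for every i ∉ S: x_i + w_i = (Lx + q)_i and x_i + z_i = (Rx)_i. -/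
/-- `x` solves the Lin-Bellman system `(L, R, q, S)` iff there exist nonnegative
slack vectors `w, z` with `w i * z i = 0` for all `i`, such that for `i ∈ S`:
`x i - w i = (Lx + q) i` and `x i - z i = (Rx) i`, and for `i ∉ S`:
`x i + w i = (Lx + q) i` and `x i + z i = (Rx) i`. -/
theorem linBellman_iff_slack {n : ℕ} (L R : Matrix (Fin n) (Fin n) ℝ)
    (q : Fin n → ℝ) (S : Finset (Fin n)) (x : Fin n → ℝ) :
    LinBellmanSol L R q S x ↔
      ∃ w z : Fin n → ℝ,
        (∀ i, 0 ≤ w i) ∧ (∀ i, 0 ≤ z i) ∧ (∀ i, w i * z i = 0) ∧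
        (∀ i ∈ S, x i - w i = (L.mulVec x + q) i ∧ x i - z i = R.mulVec x i) ∧
        (∀ i ∉ S, x i + w i = (L.mulVec x + q) i ∧ x i + z i = R.mulVec x i) := by
  constructor
  · intro h
    refine ⟨fun i => if i ∈ S then x i - (L.mulVec x + q) i else (L.mulVec x + q) i - x i,
            fun i => if i ∈ S then x i - R.mulVec x i else R.mulVec x i - x i,
            ?_, ?_, ?_, ?_, ?_⟩
    · intro i; have := h i; by_cases hi : i ∈ S <;> simp [hi] at this ⊢ <;>
        simp [this, le_max_iff, min_le_iff, le_refl]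
    · intro i; have := h i; by_cases hi : i ∈ S <;> simp [hi] at this ⊢ <;>
        simp [this, le_max_iff, min_le_iff, le_refl]
    · intro i
      have hx := h i
      rw [mul_eq_zero]
      by_cases hi : i ∈ S <;>
        simp only [hi, if_true, if_false] at hx ⊢
      · rcases le_total ((L.mulVec x + q) i) (R.mulVec x i) with hle | hle
        · right; rw [hx, max_eq_right hle, sub_self]
        · left; rw [hx, max_eq_left hle, sub_self]
      · rcases le_total ((L.mulVec x + q) i) (R.mulVec x i) with hle | hle
        · left; rw [hx, min_eq_left hle, sub_self]
        · right; rw [hx, min_eq_right hle, sub_self]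
    · intro i hi; simp [hi]
    · intro i hi; simp [hi]
  · rintro ⟨w, z, hw, hz, hwz, hS, hSc⟩ i
    by_cases hi : i ∈ S
    · obtain ⟨h1, h2⟩ := hS i hi
      simp only [hi, if_pos]
      rcases mul_eq_zero.mp (hwz i) with h0 | h0
      · have : x i = (L.mulVec x + q) i := by linarith
        rw [← this, max_eq_left]; linarith [hz i]
      · have : x i = R.mulVec x i := by linarith
        rw [← this, max_eq_right]; linarith [hw i]
    · obtain ⟨h1, h2⟩ := hSc i hi
      simp only [hi, if_neg, if_false]
      rcases mul_eq_zero.mp (hwz i) with h0 | h0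
      · have : x i = (L.mulVec x + q) i := by linarith
        rw [← this, min_eq_left]; linarith [hz i]
      · have : x i = R.mulVec x i := by linarith
        rw [← this, min_eq_right]; linarith [hw i]
end

section
/- Let L, R be n×n real matrices, q ∈ ℝ^n and S ⊆ {1,…,n}. For an n×n matrix A let Â denote the matrix with Â_{ij} = A_{ij} if i ∈ S and Â_{ij} = −A_{ij} if i ∉ S. Assume Î − R̂ is invertible, and set M := (Î − L̂)(Î − R̂)^{-1} and q′ := −Îq. Then a vector x ∈ ℝ^n is a solution of the Lin-Bellman system (L, R, q, S) if and only if there exist vectors w, z ∈ ℝ^n such that (w, z) is a solution of LCP(M, q′) and, in addition, Îx = w + L̂x + Îq and Îx = z + R̂x. -/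
open scoped Matrix

/-- `(w, z)` is a solution of `LCP(M, q)`. -/
def LCPSol {n : ℕ} (M : Matrix (Fin n) (Fin n) ℝ) (q : Fin n → ℝ)
    (w z : Fin n → ℝ) : Prop :=
  w = M.mulVec z + q ∧ (∀ i, 0 ≤ w i) ∧ (∀ i, 0 ≤ z i) ∧ w ⬝ᵥ z = 0

/-- `Â`: the matrix obtained from `A` by negating the rows with index not in `S`. -/
def hatMat {n : ℕ} (S : Finset (Fin n)) (A : Matrix (Fin n) (Fin n) ℝ) :
    Matrix (Fin n) (Fin n) ℝ :=
  Matrix.of fun i j => if i ∈ S then A i j else -A i j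

lemma eq_max_iff' (x a b : ℝ) : x = max a b ↔ a ≤ x ∧ b ≤ x ∧ (x-a)*(x-b) = 0 := by
  constructor
  · rintro rfl
    refine ⟨le_max_left _ _, le_max_right _ _, ?_⟩
    rcases max_choice a b with h | h <;> rw [h] <;> ring_nf <;> simp
  · rintro ⟨ha, hb, hab⟩
    rcases mul_eq_zero.1 hab with h | h
    · have hx : x = a := by linarith
      subst hx; exact (max_eq_left hb).symm
    · have hx : x = b := by linarith
      subst hx; exact (max_eq_right ha).symm

lemma eq_min_iff' (x a b : ℝ) : x = min a b ↔ x ≤ a ∧ x ≤ b ∧ (x-a)*(x-b) = 0 := by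
  constructor
  · rintro rfl
    refine ⟨min_le_left _ _, min_le_right _ _, ?_⟩
    rcases min_choice a b with h | h <;> rw [h] <;> ring_nf <;> simp
  · rintro ⟨ha, hb, hab⟩
    rcases mul_eq_zero.1 hab with h | h
    · have hx : x = a := by linarith
      subst hx; exact (min_eq_left hb).symm
    · have hx : x = b := by linarith
      subst hx; exact (min_eq_right ha).symm

lemma hat_mulVec {n : ℕ} (S : Finset (Fin n)) (A : Matrix (Fin n) (Fin n) ℝ)
    (v : Fin n → ℝ) (i : Fin n) :
    (hatMat S A).mulVec v i = (if i ∈ S then (1:ℝ) else -1) * A.mulVec v i := by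
  simp only [hatMat, Matrix.mulVec, dotProduct, Matrix.of_apply]
  split_ifs <;> simp [neg_mul, Finset.mul_sum]

/-- Assume `Î - R̂` is invertible and set `M := (Î - L̂)(Î - R̂)⁻¹`, `q' := -Î q`.
Then `x` solves the Lin-Bellman system `(L, R, q, S)` iff there are `w, z` solving
`LCP(M, q')` with `Î x = w + L̂ x + Î q` and `Î x = z + R̂ x`. -/
theorem linBellman_iff_lcp_hat {n : ℕ} (L R : Matrix (Fin n) (Fin n) ℝ)
    (q : Fin n → ℝ) (S : Finset (Fin n))
    (hinv : IsUnit (hatMat S 1 - hatMat S R)) (x : Fin n → ℝ) :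
    LinBellmanSol L R q S x ↔
      ∃ w z : Fin n → ℝ,
        LCPSol ((hatMat S 1 - hatMat S L) * (hatMat S 1 - hatMat S R)⁻¹)
          (-(hatMat S 1).mulVec q) w z ∧
        (hatMat S 1).mulVec x = w + (hatMat S L).mulVec x + (hatMat S 1).mulVec q ∧
        (hatMat S 1).mulVec x = z + (hatMat S R).mulVec x := by
  have hdet : IsUnit (hatMat S 1 - hatMat S R).det :=
    (Matrix.isUnit_iff_isUnit_det _).mp hinv
  set ε : Fin n → ℝ := fun i => if i ∈ S then (1:ℝ) else -1 with hε
  have hεsq : ∀ i, ε i * ε i = 1 := by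
    intro i; simp only [hε]; split_ifs <;> norm_num
  set wv : Fin n → ℝ := fun i => ε i * (x i - (L.mulVec x + q) i) with hwv
  set zv : Fin n → ℝ := fun i => ε i * (x i - R.mulVec x i) with hzv
  -- zv is (Î - R̂).mulVec x
  have hz_lin : zv = (hatMat S 1 - hatMat S R).mulVec x := by
    funext i
    simp only [Matrix.sub_mulVec, hat_mulVec, hzv, hε, Pi.sub_apply, Matrix.one_mulVec]
    split_ifs <;> ring
  -- the key LCP matrix equation, from the definitions of wv, zv
  have hMz : ((hatMat S 1 - hatMat S L) * (hatMat S 1 - hatMat S R)⁻¹).mulVec zv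
      + (-(hatMat S 1).mulVec q) = wv := by
    rw [hz_lin, Matrix.mulVec_mulVec, Matrix.nonsing_inv_mul_cancel_right _ _ hdet]
    funext i
    simp only [Matrix.sub_mulVec, hat_mulVec, hwv, hε, Pi.sub_apply, Pi.add_apply,
      Pi.neg_apply, Matrix.one_mulVec]
    split_ifs <;> ring
  -- pointwise equivalence
  have hpt : ∀ i : Fin n,
      (x i = if i ∈ S then max ((L.mulVec x + q) i) (R.mulVec x i)
        else min ((L.mulVec x + q) i) (R.mulVec x i)) ↔
      (0 ≤ wv i ∧ 0 ≤ zv i ∧ wv i * zv i = 0) := by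
    intro i
    simp only [hwv, hzv, hε]
    split_ifs with h
    · rw [eq_max_iff']
      constructor <;> rintro ⟨h1, h2, h3⟩ <;>
        exact ⟨by linarith, by linarith, by nlinarith⟩
    · rw [eq_min_iff']
      constructor <;> rintro ⟨h1, h2, h3⟩ <;>
        exact ⟨by nlinarith, by nlinarith, by nlinarith⟩
  constructor
  · intro hsol
    refine ⟨wv, zv, ⟨hMz.symm, fun i => (hpt i).mp (hsol i) |>.1,
      fun i => (hpt i).mp (hsol i) |>.2.1, ?_⟩, ?_, ?_⟩
    · simp only [dotProduct]
      exact Finset.sum_eq_zero fun i _ => (hpt i).mp (hsol i) |>.2.2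
    · funext i
      simp only [hat_mulVec, hwv, hε, Pi.add_apply, Matrix.one_mulVec]
      split_ifs <;> ring
    · funext i
      simp only [hat_mulVec, hzv, hε, Pi.add_apply, Matrix.one_mulVec]
      split_ifs <;> ring
  · rintro ⟨w, z, ⟨-, hw0, hz0, hwz⟩, h1, h2⟩
    have hw : w = wv := by
      funext i
      have := congrFun h1 i
      simp only [Pi.add_apply, hat_mulVec, Matrix.one_mulVec] at this
      simp only [hwv, hε, Pi.add_apply]
      split_ifs at this ⊢ <;> linarith
    have hz : z = zv := by
      funext i
      have := congrFun h2 i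
      simp only [Pi.add_apply, hat_mulVec, Matrix.one_mulVec] at this
      simp only [hzv, hε]
      split_ifs at this ⊢ <;> linarith
    subst hw hz
    intro i
    refine (hpt i).mpr ⟨hw0 i, hz0 i, ?_⟩
    have hnn : ∀ j ∈ Finset.univ, 0 ≤ wv j * zv j :=
      fun j _ => mul_nonneg (hw0 j) (hz0 j)
    have := (Finset.sum_eq_zero_iff_of_nonneg hnn).mp hwz i (Finset.mem_univ i)
    exact this
end

section
/- Let L, R be n×n real matrices and S ⊆ {1,…,n}, and suppose that for every q′ ∈ ℝ^n the Lin-Bellman system (L, R, q′, S) has exactly one solution. Then the matrix Î − R̂ is invertible, and the matrix M := (Î − L̂)(Î − R̂)^{-1} is a P-matrix. -/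
/- ### Auxiliary lemmas -/

lemma aux_eq_max_iff (x a b : ℝ) : x = max a b ↔ min (x - a) (x - b) = 0 := by
  rcases le_total a b with h | h <;>
    rcases le_total (x - a) (x - b) with h2 | h2 <;>
    simp only [max_eq_right h, max_eq_left h, min_eq_left h2, min_eq_right h2] <;>
    constructor <;> intro hh <;> linarith

lemma aux_eq_min_iff (x a b : ℝ) : x = min a b ↔ min (a - x) (b - x) = 0 := by
  rcases le_total a b with h | h <;>
    rcases le_total (a - x) (b - x) with h2 | h2 <;>
    simp only [min_eq_left h, min_eq_right h, min_eq_left h2, min_eq_right h2] <;>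
    constructor <;> intro hh <;> linarith

lemma hatMat_mulVec {n : ℕ} (S : Finset (Fin n)) (A : Matrix (Fin n) (Fin n) ℝ)
    (v : Fin n → ℝ) (i : Fin n) :
    (hatMat S A).mulVec v i = if i ∈ S then A.mulVec v i else -(A.mulVec v i) := by
  simp only [hatMat, Matrix.mulVec, dotProduct, Matrix.of_apply]
  split <;> simp [neg_mul, Finset.sum_neg_distrib]

lemma hatMat_one_mulVec_hatMat_one_mulVec {n : ℕ} (S : Finset (Fin n)) (v : Fin n → ℝ) :
    (hatMat S 1).mulVec ((hatMat S 1).mulVec v) = v := by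
  funext i
  rw [hatMat_mulVec]
  split <;> rw [Matrix.one_mulVec, hatMat_mulVec] <;> split <;>
    simp_all [Matrix.one_mulVec]

/-- The Lin-Bellman system rewritten as a horizontal LCP. -/
lemma linBellman_iff_hlcp {n : ℕ} (L R : Matrix (Fin n) (Fin n) ℝ) (q : Fin n → ℝ)
    (S : Finset (Fin n)) (x : Fin n → ℝ) :
    LinBellmanSol L R q S x ↔ ∀ i,
      min ((hatMat S 1 - hatMat S L).mulVec x i - (hatMat S 1).mulVec q i)
          ((hatMat S 1 - hatMat S R).mulVec x i) = 0 := by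
  unfold LinBellmanSol
  refine forall_congr' fun i => ?_
  rw [Matrix.sub_mulVec, Matrix.sub_mulVec, Pi.sub_apply, Pi.sub_apply,
    hatMat_mulVec, hatMat_mulVec, hatMat_mulVec, hatMat_mulVec, Matrix.one_mulVec]
  by_cases hi : i ∈ S
  · simp only [hi, if_true]
    rw [aux_eq_max_iff]
    constructor <;> intro h <;> [skip; skip] <;>
      · convert h using 2 <;> simp [Pi.add_apply] <;> ring
  · simp only [hi, if_false]
    rw [aux_eq_min_iff]
    constructor <;> intro h <;>
      · convert h using 2 <;> simp [Pi.add_apply] <;> ring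

/-- Core linear-algebra lemma: a matrix that reverses the sign of no nonzero
vector has positive determinant (homotopy to the identity + IVT). -/
lemma det_pos_of_no_sign_reversal {ι : Type*} [Fintype ι] [DecidableEq ι]
    (N : Matrix ι ι ℝ)
    (h : ∀ z : ι → ℝ, z ≠ 0 → ∃ i, 0 < z i * N.mulVec z i) : 0 < N.det := by
  set f : ℝ → ℝ := fun t => ((1 - t) • (1 : Matrix ι ι ℝ) + t • N).det with hf
  have hcont : Continuous f := by
    apply Continuous.matrix_det
    exact ((continuous_const.sub continuous_id).smul continuous_const).add
      (continuous_id.smul continuous_const)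
  have hne : ∀ t ∈ Set.Icc (0 : ℝ) 1, f t ≠ 0 := by
    rintro t ⟨ht0, ht1⟩ h0
    obtain ⟨v, hv, hveq⟩ := Matrix.exists_mulVec_eq_zero_iff.mpr h0
    have hexp : (1 - t) • v + t • N.mulVec v = 0 := by
      have := hveq
      rw [Matrix.add_mulVec, Matrix.smul_mulVec, Matrix.smul_mulVec,
        Matrix.one_mulVec] at this
      exact this
    obtain ⟨i, hi⟩ := h v hv
    have hei : (1 - t) * v i + t * (N.mulVec v i) = 0 := by
      have := congrFun hexp i
      simpa using this
    rcases eq_or_lt_of_le ht0 with rfl | htpos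
    · have : v i = 0 := by linarith
      -- then v i * N.mulVec v i = 0, contradicting hi
      rw [this] at hi; simp at hi
    · have hkey : (1 - t) * (v i * v i) + t * (v i * N.mulVec v i) = 0 := by
        linear_combination v i * hei
      nlinarith [mul_pos htpos hi, mul_nonneg (sub_nonneg.2 ht1) (mul_self_nonneg (v i))]
  have h0 : f 0 = 1 := by simp [hf]
  have h1 : f 1 = N.det := by simp [hf]
  by_contra hle
  push_neg at hle
  have hne1 : f 1 ≠ 0 := hne 1 ⟨zero_le_one, le_refl 1⟩
  have hlt : f 1 < 0 := lt_of_le_of_ne (h1 ▸ hle) hne1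
  obtain ⟨t, ht, hft⟩ := intermediate_value_Icc' zero_le_one hcont.continuousOn
    (Set.mem_Icc.mpr ⟨le_of_lt hlt, by rw [h0]; norm_num⟩)
  exact hne t ht hft

/-- If for every `q'` the Lin-Bellman system `(L, R, q', S)` has exactly one solution,
then `Î - R̂` is invertible and `M := (Î - L̂)(Î - R̂)⁻¹` is a P-matrix. -/
theorem linBellman_unique_imp_pmatrix {n : ℕ}
    (L R : Matrix (Fin n) (Fin n) ℝ) (S : Finset (Fin n))
    (huniq : ∀ q' : Fin n → ℝ, ∃! x : Fin n → ℝ, LinBellmanSol L R q' S x) :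
    IsUnit (hatMat S 1 - hatMat S R) ∧
      IsPMatrix ((hatMat S 1 - hatMat S L) * (hatMat S 1 - hatMat S R)⁻¹) := by
  set D := hatMat S 1 with hD
  set A := hatMat S 1 - hatMat S L with hA
  set B := hatMat S 1 - hatMat S R with hB
  -- uniqueness for the horizontal LCP, for every right-hand side
  have huniq' : ∀ c : Fin n → ℝ, ∃! x : Fin n → ℝ,
      ∀ i, min (A.mulVec x i - c i) (B.mulVec x i) = 0 := by
    intro c
    obtain ⟨x, hx, hxu⟩ := huniq (D.mulVec c)
    have hiff : ∀ y, (∀ i, min (A.mulVec y i - c i) (B.mulVec y i) = 0) ↔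
        LinBellmanSol L R (D.mulVec c) S y := by
      intro y
      rw [linBellman_iff_hlcp]
      rw [show (hatMat S 1).mulVec ((hatMat S 1).mulVec c) = c from
        hatMat_one_mulVec_hatMat_one_mulVec S c]
    exact ⟨x, (hiff x).mpr hx, fun y hy => hxu y ((hiff y).mp hy)⟩
  -- B is invertible
  have hBdet : B.det ≠ 0 := by
    intro hdet
    obtain ⟨v, hv, hveq⟩ := Matrix.exists_mulVec_eq_zero_iff.mpr hdet
    set c : Fin n → ℝ := fun i => -|A.mulVec v i| - 1 with hc
    obtain ⟨x, hx, hxu⟩ := huniq' c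
    have h0 : ∀ i, min ((A.mulVec (0 : Fin n → ℝ)) i - c i) (B.mulVec 0 i) = 0 := by
      intro i
      simp only [Matrix.mulVec_zero, Pi.zero_apply, hc, zero_sub, neg_neg]
      rw [min_eq_right]
      have := abs_nonneg (A.mulVec v i)
      linarith
    have hv0 : ∀ i, min ((A.mulVec v) i - c i) (B.mulVec v i) = 0 := by
      intro i
      rw [hveq]
      simp only [Pi.zero_apply, hc]
      rw [min_eq_right]
      have := abs_nonneg (A.mulVec v i)
      have := neg_abs_le (A.mulVec v i)
      linarith
    exact hv ((hxu v hv0).trans (hxu 0 h0).symm)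
  have hBunit : IsUnit B := (Matrix.isUnit_iff_isUnit_det B).mpr (isUnit_iff_ne_zero.mpr hBdet)
  refine ⟨hBunit, ?_⟩
  set M := A * B⁻¹ with hM
  have hBB : B * B⁻¹ = 1 := Matrix.mul_nonsing_inv B (isUnit_iff_ne_zero.mpr hBdet)
  -- M reverses the sign of no nonzero vector
  have hrev : ∀ z : Fin n → ℝ, z ≠ 0 → ∃ i, 0 < z i * M.mulVec z i := by
    intro z hz
    by_contra hcon
    push_neg at hcon
    -- two distinct solutions of the same LCP
    set w1 : Fin n → ℝ := fun i => max (z i) 0 with hw1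
    set w2 : Fin n → ℝ := fun i => max (-z i) 0 with hw2
    have hw12 : w1 - w2 = z := by
      funext i
      simp only [hw1, hw2, Pi.sub_apply]
      rcases le_total (z i) 0 with h | h
      · rw [max_eq_right h, max_eq_left (by linarith)]; ring
      · rw [max_eq_left h, max_eq_right (by linarith)]; ring
    set c : Fin n → ℝ := fun i => min (M.mulVec w1 i) (M.mulVec w2 i) with hc
    set x1 : Fin n → ℝ := B⁻¹.mulVec w1 with hx1
    set x2 : Fin n → ℝ := B⁻¹.mulVec w2 with hx2
    have hbx1 : B.mulVec x1 = w1 := by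
      rw [hx1, Matrix.mulVec_mulVec, hBB, Matrix.one_mulVec]
    have hbx2 : B.mulVec x2 = w2 := by
      rw [hx2, Matrix.mulVec_mulVec, hBB, Matrix.one_mulVec]
    have hax1 : A.mulVec x1 = M.mulVec w1 := by
      rw [hx1, Matrix.mulVec_mulVec, hM]
    have hax2 : A.mulVec x2 = M.mulVec w2 := by
      rw [hx2, Matrix.mulVec_mulVec, hM]
    have hMz : M.mulVec w1 - M.mulVec w2 = M.mulVec z := by
      rw [← Matrix.mulVec_sub, hw12]
    obtain ⟨x, _, hxu⟩ := huniq' c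
    have hs1 : ∀ i, min (A.mulVec x1 i - c i) (B.mulVec x1 i) = 0 := by
      intro i
      rw [hax1, hbx1]
      rcases lt_trichotomy (z i) 0 with h | h | h
      · -- z i < 0 : w1 i = 0
        have : w1 i = 0 := by simp [hw1, le_of_lt h]
        rw [this, min_eq_right]
        simp only [hc, sub_nonneg]
        exact min_le_left _ _
      · -- z i = 0 : w1 i = 0
        have : w1 i = 0 := by simp [hw1, h]
        rw [this, min_eq_right]
        simp only [hc, sub_nonneg]
        exact min_le_left _ _
      · -- z i > 0 : M.mulVec z i ≤ 0, so c i = M.mulVec w1 i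
        have hmz : M.mulVec z i ≤ 0 := by
          by_contra hmz
          push_neg at hmz
          exact absurd (mul_pos h hmz) (not_lt.mpr (hcon i))
        have hle : M.mulVec w1 i ≤ M.mulVec w2 i := by
          have := congrFun hMz i
          simp only [Pi.sub_apply] at this
          linarith
        rw [min_eq_left]
        · simp [hc, min_eq_left hle]
        · have : w1 i = z i := by simp [hw1, le_of_lt h]
          rw [hc]; simp only [min_eq_left hle, sub_self]
          rw [this]; exact le_of_lt h
    have hs2 : ∀ i, min (A.mulVec x2 i - c i) (B.mulVec x2 i) = 0 := by
      intro i
      rw [hax2, hbx2]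
      rcases lt_trichotomy (z i) 0 with h | h | h
      · -- z i < 0 : M.mulVec z i ≥ 0, c i = M.mulVec w2 i
        have hmz : 0 ≤ M.mulVec z i := by
          by_contra hmz
          push_neg at hmz
          exact absurd (mul_pos_of_neg_of_neg h hmz) (not_lt.mpr (hcon i))
        have hle : M.mulVec w2 i ≤ M.mulVec w1 i := by
          have := congrFun hMz i
          simp only [Pi.sub_apply] at this
          linarith
        rw [min_eq_left]
        · simp [hc, min_eq_right hle]
        · have : w2 i = -z i := by simp [hw2, le_of_lt h]
          rw [hc]; simp only [min_eq_right hle, sub_self]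
          rw [this]; linarith
      · have : w2 i = 0 := by simp [hw2, h]
        rw [this, min_eq_right]
        simp only [hc, sub_nonneg]
        exact min_le_right _ _
      · have : w2 i = 0 := by simp [hw2, le_of_lt h]
        rw [this, min_eq_right]
        simp only [hc, sub_nonneg]
        exact min_le_right _ _
    have hx12 : x1 = x2 := (hxu x1 hs1).trans (hxu x2 hs2).symm
    have : w1 = w2 := by rw [← hbx1, ← hbx2, hx12]
    apply hz
    rw [← hw12, this, sub_self]
  -- P-matrix via the core lemma
  intro s hs
  apply det_pos_of_no_sign_reversal
  intro y hy
  set z : Fin n → ℝ := fun i => if h : i ∈ s then y ⟨i, h⟩ else 0 with hzdef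
  have hzne : z ≠ 0 := by
    intro hz0
    apply hy
    funext j
    have := congrFun hz0 (j : Fin n)
    simpa [hzdef, j.2] using this
  obtain ⟨i, hi⟩ := hrev z hzne
  have his : i ∈ s := by
    by_contra h
    rw [hzdef] at hi
    simp only [dif_neg h] at hi
    simp at hi
  refine ⟨⟨i, his⟩, ?_⟩
  have hMv : (M.submatrix (Subtype.val : {i // i ∈ s} → Fin n)
      (Subtype.val : {i // i ∈ s} → Fin n)).mulVec y ⟨i, his⟩ = M.mulVec z i := by
    simp only [Matrix.mulVec, dotProduct, Matrix.submatrix_apply]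
    have h1 : ∑ j : Fin n, M i j * z j = ∑ j ∈ s, M i j * z j :=
      (Finset.sum_subset s.subset_univ (by intro j _ hj; simp [hzdef, hj])).symm
    rw [h1, ← Finset.sum_coe_sort s (fun j => M i j * z j)]
    apply Finset.sum_congr rfl
    intro j _
    simp [hzdef, j.2]
  rw [hMv]
  have hzy : z i = y ⟨i, his⟩ := by simp [hzdef, his]
  rw [← hzy]
  exact hi
end

section
/- Let n ≥ 1, let b_1,…,b_n ≥ 1 be integers, let M be a vertical block matrix with blocks M_1,…,M_n where M_i ∈ ℝ^{b_i × n} (so M ∈ ℝ^{N×n} with N = b_1 + ⋯ + b_n), and let q ∈ ℝ^N with blocks q_i ∈ ℝ^{b_i}. Then a vector z ∈ ℝ^n satisfies z_i = min( min_{1 ≤ j ≤ b_i} ((Mz + q)_i^j + z_i), 2z_i ) for every i ∈ {1,…,n} if and only if the pair (w, z) with w := Mz + q is a solution of the generalized linear complementarity problem GLCP(M, q), i.e., w = Mz + q, w ≥ 0 and z ≥ 0 componentwise, and z_i · ∏_{j=1}^{b_i} w_i^j = 0 for every i. -/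
lemma glcp_aux {m : ℕ} (hm : (Finset.univ : Finset (Fin m)).Nonempty)
    (f : Fin m → ℝ) (z : ℝ) :
    z = min (Finset.univ.inf' hm (fun j => f j + z)) (2 * z) ↔
      (∀ j, 0 ≤ f j) ∧ 0 ≤ z ∧ (z = 0 ∨ ∃ j, f j = 0) := by
  constructor
  · intro h
    have h1 : z ≤ Finset.univ.inf' hm (fun j => f j + z) := by
      have := min_le_left (Finset.univ.inf' hm (fun j => f j + z)) (2 * z)
      rw [← h] at this; exact this
    have h2 : z ≤ 2 * z := by
      have := min_le_right (Finset.univ.inf' hm (fun j => f j + z)) (2 * z)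
      rw [← h] at this; exact this
    have hz : 0 ≤ z := by linarith
    have hf : ∀ j, 0 ≤ f j := by
      intro j
      have := (Finset.le_inf'_iff hm _).mp h1 j (Finset.mem_univ j)
      linarith
    refine ⟨hf, hz, ?_⟩
    rcases min_cases (Finset.univ.inf' hm (fun j => f j + z)) (2 * z) with ⟨he, _⟩ | ⟨he, _⟩
    · right
      obtain ⟨j, _, hj⟩ := Finset.exists_mem_eq_inf' hm (fun j => f j + z)
      refine ⟨j, ?_⟩
      rw [he, hj] at h
      linarith
    · left
      rw [he] at h
      linarith
  · rintro ⟨hf, hz, hc⟩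
    rcases hc with h0 | ⟨j0, hj0⟩
    · subst h0
      have hA : (0:ℝ) ≤ Finset.univ.inf' hm (fun j => f j + 0) :=
        Finset.le_inf' _ _ fun j _ => by simpa using hf j
      rw [mul_zero, min_eq_right hA]
    · have hA : Finset.univ.inf' hm (fun j => f j + z) = z :=
        le_antisymm
          (le_trans (Finset.inf'_le _ (Finset.mem_univ j0)) (by rw [hj0]; linarith))
          (Finset.le_inf' _ _ fun j _ => by have := hf j; linarith)
      rw [hA, min_eq_left (by linarith)]

/-- `z` satisfies `z i = min (min_j ((Mz + q)_i^j + z i)) (2 z i)` for every `i`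
iff `(w, z)` with `w := Mz + q` is a solution of the generalized LCP `GLCP(M, q)`:
`w = Mz + q`, `w ≥ 0`, `z ≥ 0`, and `z i * ∏_j w_i^j = 0` for every `i`.
Here block indices are modelled by the sigma type `Σ i : Fin n, Fin (b i)`. -/
theorem glcp_iff_linBellman {n : ℕ} (hn : 1 ≤ n) (b : Fin n → ℕ)
    (hb : ∀ i, 1 ≤ b i)
    (M : Matrix (Σ i : Fin n, Fin (b i)) (Fin n) ℝ)
    (q : (Σ i : Fin n, Fin (b i)) → ℝ) (z : Fin n → ℝ) :
    (∀ i : Fin n,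
        z i = min
          (Finset.univ.inf' (Finset.univ_nonempty_iff.mpr ⟨⟨0, hb i⟩⟩)
            fun j : Fin (b i) => (M.mulVec z + q) ⟨i, j⟩ + z i)
          (2 * z i)) ↔
      ((∀ s : Σ i : Fin n, Fin (b i), 0 ≤ (M.mulVec z + q) s) ∧
        (∀ i, 0 ≤ z i) ∧
        (∀ i : Fin n, z i * ∏ j : Fin (b i), (M.mulVec z + q) ⟨i, j⟩ = 0)) := by
  constructor
  · intro h
    have h' : ∀ i, (∀ j, 0 ≤ (M.mulVec z + q) ⟨i, j⟩) ∧ 0 ≤ z i ∧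
        (z i = 0 ∨ ∃ j, (M.mulVec z + q) ⟨i, j⟩ = 0) :=
      fun i => (glcp_aux _ _ _).mp (h i)
    refine ⟨fun s => (h' s.1).1 s.2, fun i => (h' i).2.1, fun i => ?_⟩
    rcases (h' i).2.2 with h0 | ⟨j, hj⟩
    · rw [h0, zero_mul]
    · rw [Finset.prod_eq_zero (Finset.mem_univ j) hj, mul_zero]
  · rintro ⟨hw, hz, hc⟩ i
    refine (glcp_aux _ _ _).mpr ⟨fun j => hw ⟨i, j⟩, hz i, ?_⟩
    rcases mul_eq_zero.mp (hc i) with h0 | hp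
    · exact Or.inl h0
    · obtain ⟨j, _, hj⟩ := Finset.prod_eq_zero_iff.mp hp
      exact Or.inr ⟨j, hj⟩
end

section
/- Let P_1,…,P_d ⊂ ℝ^d be nonempty finite point sets that are well-separated. Let p = (p_1,…,p_d) and p′ = (p′_1,…,p′_d) be two colorful selections (p_i, p′_i ∈ P_i), and suppose there exist v ∈ ℝ^d with v ≠ 0 and c ∈ ℝ such that ⟨v, p_i⟩ = c and ⟨v, p′_i⟩ = c for all i (i.e., all 2d points lie on a common hyperplane). Then the two colorful selections orient this hyperplane the same way: there exists λ > 0 such that D_p(x) = λ · D_{p′}(x) for all x ∈ ℝ^d. -/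
open scoped Matrix

/-- `D_p x`: the determinant of the `d × d` matrix whose `i`-th row is `p i - x`. -/
noncomputable def Dmap {d : ℕ} (p : Fin d → (Fin d → ℝ)) (x : Fin d → ℝ) : ℝ :=
  Matrix.det (Matrix.of fun i j => p i j - x j)

/-- Point sets `P 0, …, P (k-1)` in `ℝ^d` are well-separated: no affine subspace
of dimension at most `k - 2` intersects every convex hull `conv (P i)`. -/
def WellSeparated {d k : ℕ} (P : Fin k → Set (Fin d → ℝ)) : Prop :=
  ¬ ∃ F : AffineSubspace ℝ (Fin d → ℝ),
      (Module.finrank ℝ F.direction : ℤ) ≤ (k : ℤ) - 2 ∧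
      ∀ i, ((F : Set (Fin d → ℝ)) ∩ convexHull ℝ (P i)).Nonempty

lemma Dmap_expand {d : ℕ} (p : Fin d → Fin d → ℝ) (x : Fin d → ℝ) :
    Dmap p x = (Matrix.of p).det - ∑ i, ((Matrix.of p).updateRow i x).det := by
  classical
  have h0 : (Matrix.of fun i j => p i j - x j) = Matrix.of (p + fun _ => -x) := by
    ext i j; simp [sub_eq_add_neg]
  have h1 : Dmap p x
      = Matrix.detRowAlternating (R := ℝ) (n := Fin d) ((fun _ => -x) + p) := by
    rw [Dmap, h0]
    congr 1
    funext i j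
    simp [add_comm]
  rw [h1]
  have h2 := (Matrix.detRowAlternating (R := ℝ) (n := Fin d)).toMultilinearMap.map_add_univ
    (fun _ => -x) p
  rw [show ((Matrix.detRowAlternating (R := ℝ) (n := Fin d)).toMultilinearMap
      ((fun _ => -x) + p) : ℝ)
    = Matrix.detRowAlternating (R := ℝ) (n := Fin d) ((fun _ => -x) + p) from rfl] at h2
  rw [h2]
  have hcoe : ∀ m : Fin d → (Fin d → ℝ),
      ((Matrix.detRowAlternating (R := ℝ) (n := Fin d)).toMultilinearMap m : ℝ)
        = Matrix.detRowAlternating (R := ℝ) (n := Fin d) m := fun _ => rfl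
  simp only [hcoe]
  set f := Matrix.detRowAlternating (R := ℝ) (n := Fin d) with hf
  set T : Finset (Finset (Fin d)) := insert ∅ (Finset.univ.image fun i => ({i} : Finset (Fin d)))
    with hT
  have hzero : ∀ s ∈ (Finset.univ : Finset (Finset (Fin d))), s ∉ T →
      f (s.piecewise (fun _ => -x) p) = 0 := by
    intro s _ hs
    have hcard : 1 < s.card := by
      rcases Nat.lt_or_ge 1 s.card with h | h
      · exact h
      · exfalso
        interval_cases h' : s.card
        · exact hs (by simp [hT, Finset.card_eq_zero.mp h'])
        · obtain ⟨a, ha⟩ := Finset.card_eq_one.mp h'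
          exact hs (by simp [hT, ha])
    obtain ⟨a, hamem, b, hbmem, hab⟩ := Finset.one_lt_card.mp hcard
    refine f.map_eq_zero_of_eq _ ?_ hab
    rw [Finset.piecewise_eq_of_mem _ _ _ hamem, Finset.piecewise_eq_of_mem _ _ _ hbmem]
  rw [← Finset.sum_subset (Finset.subset_univ T) hzero]
  have hne : (∅ : Finset (Fin d)) ∉ Finset.univ.image fun i => ({i} : Finset (Fin d)) := by
    simp
  rw [hT, Finset.sum_insert hne]
  have hinj : ∀ a ∈ (Finset.univ : Finset (Fin d)), ∀ b ∈ Finset.univ,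
      ({a} : Finset (Fin d)) = {b} → a = b := by
    intro a _ b _ h; exact Finset.singleton_injective h
  rw [Finset.sum_image hinj]
  have hempty : f (Finset.piecewise ∅ (fun _ => -x) p) = (Matrix.of p).det := by
    rw [Finset.piecewise_empty]; rfl
  have hsingle : ∀ i, f (Finset.piecewise {i} (fun _ => -x) p)
      = -((Matrix.of p).updateRow i x).det := by
    intro i
    rw [Finset.piecewise_singleton]
    have : f (Function.update p i (-x)) = -f (Function.update p i x) :=
      f.toMultilinearMap.map_update_neg p i x
    rw [this]
    rfl
  rw [hempty]
  simp only [hsingle]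
  rw [Finset.sum_neg_distrib]
  ring

lemma Dmap_vanish {d : ℕ} {p : Fin d → Fin d → ℝ} {v : Fin d → ℝ} (hv : v ≠ 0) {c : ℝ}
    {x : Fin d → ℝ} (hp : ∀ i, v ⬝ᵥ p i = c) (hx : v ⬝ᵥ x = c) : Dmap p x = 0 := by
  classical
  apply Matrix.exists_mulVec_eq_zero_iff.mp
  refine ⟨v, hv, ?_⟩
  funext i
  have e : (((Matrix.of fun i j => p i j - x j)) *ᵥ v) i = (p i - x) ⬝ᵥ v := rfl
  show (((Matrix.of fun i j => p i j - x j)) *ᵥ v) i = (0 : Fin d → ℝ) i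
  rw [e, sub_dotProduct, dotProduct_comm, hp i, dotProduct_comm, hx,
    sub_self]
  rfl

lemma Dmap_rep {d : ℕ} {p : Fin d → Fin d → ℝ} {v : Fin d → ℝ} (hv : v ≠ 0) {c : ℝ}
    (hp : ∀ i, v ⬝ᵥ p i = c) :
    ∃ μ : ℝ, ∀ x, Dmap p x = μ * (c - v ⬝ᵥ x) := by
  classical
  set L : (Fin d → ℝ) → ℝ := fun y => ∑ i, ((Matrix.of p).updateRow i y).det with hL
  have Ladd : ∀ y z, L (y + z) = L y + L z := by
    intro y z
    simp only [hL, Matrix.det_updateRow_add, Finset.sum_add_distrib]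
  have Lsmul : ∀ (t : ℝ) y, L (t • y) = t * L y := by
    intro t y
    simp only [hL, Matrix.det_updateRow_smul, Finset.mul_sum, smul_eq_mul]
  have hvv : v ⬝ᵥ v ≠ 0 := fun h => hv (dotProduct_self_eq_zero.mp h)
  set w : Fin d → ℝ := (v ⬝ᵥ v)⁻¹ • v with hw
  have hvw : v ⬝ᵥ w = 1 := by
    rw [hw, dotProduct_smul, smul_eq_mul, inv_mul_cancel₀ hvv]
  refine ⟨L w, fun x => ?_⟩
  set t := v ⬝ᵥ x with ht
  set x₀ := x - (t - c) • w with hx₀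
  have hx₀c : v ⬝ᵥ x₀ = c := by
    rw [hx₀, dotProduct_sub, dotProduct_smul, hvw, ← ht]
    simp
  have h1 : Dmap p x₀ = 0 := Dmap_vanish hv hp hx₀c
  have h2 : Dmap p x₀ = (Matrix.of p).det - L x₀ := Dmap_expand p x₀
  have h3 : Dmap p x = (Matrix.of p).det - L x := Dmap_expand p x
  have hx : x = x₀ + (t - c) • w := by rw [hx₀]; abel
  have h4 : L x = L x₀ + (t - c) * L w := by rw [hx, Ladd, Lsmul]
  have h5 : (Matrix.of p).det = L x₀ := by rw [h2] at h1; linarith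
  rw [h3, h4, h5]
  ring

lemma Dmap_ne_zero {d : ℕ} {P : Fin d → Set (Fin d → ℝ)} (hws : WellSeparated P)
    {v : Fin d → ℝ} {c : ℝ} {r : Fin d → Fin d → ℝ}
    (hr : ∀ i, r i ∈ convexHull ℝ (P i)) (hrc : ∀ i, v ⬝ᵥ r i = c)
    {x : Fin d → ℝ} (hx : v ⬝ᵥ x ≠ c) : Dmap r x ≠ 0 := by
  classical
  intro h0
  set M : Matrix (Fin d) (Fin d) ℝ := Matrix.of fun i j => r i j - x j with hM
  have hdetT : Mᵀ.det = 0 := by rw [Matrix.det_transpose]; exact h0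
  obtain ⟨a, ha0, haM⟩ := Matrix.exists_mulVec_eq_zero_iff.mpr hdetT
  have key : ∀ j, ∑ i, a i * (r i j - x j) = 0 := by
    intro j
    have := congrFun haM j
    simpa [Matrix.mulVec, dotProduct, hM, mul_comm] using this
  have hcx : c - v ⬝ᵥ x ≠ 0 := sub_ne_zero_of_ne (Ne.symm hx)
  have hs : (∑ i, a i) = 0 := by
    have h1 : (∑ i, a i) * (c - v ⬝ᵥ x) = 0 := by
      have e1 : (∑ i, a i) * (c - v ⬝ᵥ x) = ∑ i, ∑ j, v j * (a i * (r i j - x j)) := by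
        rw [Finset.sum_mul]
        refine Finset.sum_congr rfl fun i _ => ?_
        have e2 : c - v ⬝ᵥ x = v ⬝ᵥ r i - v ⬝ᵥ x := by rw [hrc i]
        rw [e2]
        simp only [dotProduct, ← Finset.sum_sub_distrib, Finset.mul_sum]
        exact Finset.sum_congr rfl fun j _ => by ring
      rw [e1, Finset.sum_comm]
      simp only [← Finset.mul_sum, key, mul_zero, Finset.sum_const_zero]
    exact (mul_eq_zero.mp h1).resolve_right hcx
  have combo : ∑ i, a i • r i = (0 : Fin d → ℝ) := by
    funext j
    have h2 : ∑ i, a i * r i j = ∑ i, a i * (r i j - x j) + (∑ i, a i) * x j := by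
      rw [Finset.sum_mul, ← Finset.sum_add_distrib]
      exact Finset.sum_congr rfl fun i _ => by ring
    have h3 : (∑ i, a i • r i) j = ∑ i, a i * r i j := by
      simp [Finset.sum_apply]
    rw [h3, h2, key j, hs]
    simp
  obtain ⟨i₀, hi₀⟩ : ∃ i₀, a i₀ ≠ 0 := Function.ne_iff.mp ha0
  obtain ⟨i₁, hi₁ne, hi₁⟩ : ∃ i₁, i₁ ≠ i₀ ∧ a i₁ ≠ 0 := by
    by_contra h
    push_neg at h
    have : (∑ i, a i) = a i₀ :=
      Finset.sum_eq_single i₀ (fun b _ hb => h b hb) (fun h' => absurd (Finset.mem_univ i₀) h')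
    rw [hs] at this
    exact hi₀ this.symm
  set g : {i : Fin d // i ≠ i₀} → (Fin d → ℝ) := fun i => r i -ᵥ r i₀ with hg
  have hdep : ¬ LinearIndependent ℝ g := by
    intro hind
    have hsum : ∑ i : {i : Fin d // i ≠ i₀}, a i • g i = 0 := by
      have e1 : ∑ i ∈ Finset.univ.erase i₀, (fun i => a i • (r i - r i₀)) i
          = ∑ i : {i : Fin d // i ≠ i₀}, a i • g i := by
        refine Finset.sum_subtype _ (fun x => ?_) (fun i => a i • (r i - r i₀))
        simp
      rw [← e1, Finset.sum_erase _ (by simp)]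
      have : ∑ i, a i • (r i - r i₀) = ∑ i, a i • r i - (∑ i, a i) • r i₀ := by
        rw [Finset.sum_smul, ← Finset.sum_sub_distrib]
        exact Finset.sum_congr rfl fun i _ => by rw [smul_sub]
      rw [this, combo, hs]
      simp
    have := Fintype.linearIndependent_iff.mp hind (fun i => a i) hsum ⟨i₁, hi₁ne⟩
    exact hi₁ this
  have hd : 1 ≤ d := i₀.pos
  have hcard : Fintype.card {i : Fin d // i ≠ i₀} = d - 1 := by
    simpa [Fintype.card_subtype_eq] using Fintype.card_subtype_compl (fun i : Fin d => i = i₀)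
  have hlt : Module.finrank ℝ (Submodule.span ℝ (Set.range g)) < d - 1 := by
    have hle : Module.finrank ℝ (Submodule.span ℝ (Set.range g))
        ≤ Fintype.card {i : Fin d // i ≠ i₀} := finrank_range_le_card g
    have hne : Module.finrank ℝ (Submodule.span ℝ (Set.range g))
        ≠ Fintype.card {i : Fin d // i ≠ i₀} := by
      intro h
      exact hdep (linearIndependent_iff_card_eq_finrank_span.mpr h.symm)
    rw [hcard] at hle hne
    exact lt_of_le_of_ne hle hne
  refine hws ⟨affineSpan ℝ (Set.range r), ?_, fun i => ⟨r i, ?_, hr i⟩⟩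
  · rw [direction_affineSpan,
      vectorSpan_range_eq_span_range_vsub_right_ne ℝ r i₀]
    have e : Submodule.span ℝ (Set.range fun i : {i : Fin d // i ≠ i₀} => r ↑i -ᵥ r i₀)
        = Submodule.span ℝ (Set.range g) := by rw [hg]
    rw [e]
    omega
  · exact subset_affineSpan ℝ _ (Set.mem_range_self i)

lemma Dmap_update_combo {d : ℕ} (r : Fin d → Fin d → ℝ) (K : Fin d) (y z : Fin d → ℝ)
    {s u : ℝ} (hsu : s + u = 1) (x : Fin d → ℝ) :
    Dmap (Function.update r K (s • y + u • z)) x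
      = s * Dmap (Function.update r K y) x + u * Dmap (Function.update r K z) x := by
  classical
  have key : ∀ b : Fin d → ℝ, (Matrix.of fun i j => (Function.update r K b) i j - x j)
      = (Matrix.of fun i j => r i j - x j).updateRow K (b - x) := by
    intro b
    ext i j
    rcases eq_or_ne i K with rfl | h
    · simp
    · simp [Matrix.updateRow_ne h, Function.update_of_ne h]
  show Matrix.det _ = s * Matrix.det _ + u * Matrix.det _
  rw [key, key, key]
  have e : (s • y + u • z) - x = s • (y - x) + u • (z - x) := by
    funext j
    simp only [Pi.add_apply, Pi.sub_apply, Pi.smul_apply, smul_eq_mul]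
    linear_combination x j * hsu
  rw [e, Matrix.det_updateRow_add, Matrix.det_updateRow_smul, Matrix.det_updateRow_smul]

/-- In a well-separated family, any two colorful selections lying on a common
hyperplane orient it the same way: `D_p = λ • D_{p'}` for some `λ > 0`. -/
theorem colorful_same_orientation {d : ℕ}
    (P : Fin d → Set (Fin d → ℝ))
    (hfin : ∀ i, (P i).Finite) (hne : ∀ i, (P i).Nonempty)
    (hws : WellSeparated P)
    (p p' : Fin d → (Fin d → ℝ))
    (hp : ∀ i, p i ∈ P i) (hp' : ∀ i, p' i ∈ P i)
    (v : Fin d → ℝ) (hv : v ≠ 0) (c : ℝ)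
    (hvp : ∀ i, v ⬝ᵥ p i = c) (hvp' : ∀ i, v ⬝ᵥ p' i = c) :
    ∃ lam : ℝ, 0 < lam ∧ ∀ x : Fin d → ℝ, Dmap p x = lam * Dmap p' x := by
  classical
  have hvv : v ⬝ᵥ v ≠ 0 := fun h => hv (dotProduct_self_eq_zero.mp h)
  set w : Fin d → ℝ := (v ⬝ᵥ v)⁻¹ • v with hw
  have hvw : v ⬝ᵥ w = 1 := by
    rw [hw, dotProduct_smul, smul_eq_mul, inv_mul_cancel₀ hvv]
  set x₁ : Fin d → ℝ := c • w + w with hx₁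
  have hx₁v : v ⬝ᵥ x₁ = c + 1 := by
    rw [hx₁, dotProduct_add, dotProduct_smul, hvw, smul_eq_mul, mul_one]
  have hx₁ne : v ⬝ᵥ x₁ ≠ c := by rw [hx₁v]; intro h; linarith
  set q : ℕ → Fin d → Fin d → ℝ := fun k i => if (i : ℕ) < k then p' i else p i with hq
  have hq0 : q 0 = p := funext fun i => by simp [hq]
  have hqd : q d = p' := funext fun i => by simp [hq, i.isLt]
  have hqP : ∀ k i, q k i ∈ convexHull ℝ (P i) := by
    intro k i
    by_cases h : (i : ℕ) < k
    · simp only [hq, h, if_true]; exact subset_convexHull ℝ _ (hp' i)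
    · simp only [hq, h, if_false]; exact subset_convexHull ℝ _ (hp i)
  have hqc : ∀ k i, v ⬝ᵥ q k i = c := by
    intro k i
    by_cases h : (i : ℕ) < k
    · simp only [hq, h, if_true]; exact hvp' i
    · simp only [hq, h, if_false]; exact hvp i
  have hqne : ∀ k, Dmap (q k) x₁ ≠ 0 := fun k =>
    Dmap_ne_zero hws (hqP k) (hqc k) hx₁ne
  have hstep : ∀ k, k < d → 0 < Dmap (q k) x₁ * Dmap (q (k + 1)) x₁ := by
    intro k hk
    rcases lt_trichotomy (Dmap (q k) x₁ * Dmap (q (k + 1)) x₁) 0 with hneg | hzero | hpos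
    · exfalso
      set K : Fin d := ⟨k, hk⟩ with hK
      set A := Dmap (q k) x₁ with hA
      set B := Dmap (q (k + 1)) x₁ with hB
      have hABne : A - B ≠ 0 := by
        intro h
        have : A = B := by linarith
        rw [this] at hneg
        nlinarith [mul_self_nonneg B]
      set t : ℝ := A / (A - B) with htdef
      have ht0 : 0 ≤ t ∧ t ≤ 1 := by
        rcases mul_neg_iff.mp hneg with ⟨h1, h2⟩ | ⟨h1, h2⟩
        · constructor
          · exact div_nonneg h1.le (by linarith)
          · rw [div_le_one (by linarith)]; linarith
        · constructor
          · rw [div_nonneg_iff]; right; exact ⟨h1.le, by linarith⟩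
          · rw [div_le_one_iff]; right; right; exact ⟨by linarith, by linarith⟩
      set m : Fin d → ℝ := (1 - t) • p K + t • p' K with hm
      have hqkK : q k K = p K := by simp [hq, hK]
      have hupd1 : Function.update (q k) K (p K) = q k := by
        rw [← hqkK]; exact Function.update_eq_self K (q k)
      have hupd2 : Function.update (q k) K (p' K) = q (k + 1) := by
        funext i
        rcases eq_or_ne i K with rfl | hne
        · rw [Function.update_self]; simp [hq, hK]
        · rw [Function.update_of_ne hne]
          have hik : ((i : ℕ) < k + 1) ↔ ((i : ℕ) < k) := by
            constructor
            · intro h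
              rcases Nat.lt_succ_iff_lt_or_eq.mp h with h | h
              · exact h
              · exact absurd (Fin.ext h) hne
            · exact fun h => Nat.lt_succ_of_lt h
          simp [hq, hik]
      have hcombo := Dmap_update_combo (q k) K (p K) (p' K)
        (s := 1 - t) (u := t) (by ring) x₁
      rw [hupd1, hupd2] at hcombo
      have hmzero : Dmap (Function.update (q k) K m) x₁ = 0 := by
        rw [hm, hcombo, ← hA, ← hB]
        have hc : t * (A - B) = A := div_mul_cancel₀ A hABne
        nlinarith [hc]
      have hmem : ∀ i, Function.update (q k) K m i ∈ convexHull ℝ (P i) := by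
        intro i
        rcases eq_or_ne i K with rfl | hne
        · rw [Function.update_self]
          exact (convex_convexHull ℝ (P K)) (subset_convexHull ℝ _ (hp K))
            (subset_convexHull ℝ _ (hp' K)) (by linarith [ht0.2]) ht0.1 (by ring)
        · rw [Function.update_of_ne hne]; exact hqP k i
      have hplane : ∀ i, v ⬝ᵥ Function.update (q k) K m i = c := by
        intro i
        rcases eq_or_ne i K with rfl | hne
        · rw [Function.update_self, hm, dotProduct_add, dotProduct_smul,
            dotProduct_smul, hvp K, hvp' K, smul_eq_mul, smul_eq_mul]
          ring
        · rw [Function.update_of_ne hne]; exact hqc k i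
      exact Dmap_ne_zero hws hmem hplane hx₁ne hmzero
    · exact absurd hzero (mul_ne_zero (hqne k) (hqne (k + 1)))
    · exact hpos
  have hchain : ∀ k, k ≤ d → 0 < Dmap (q 0) x₁ * Dmap (q k) x₁ := by
    intro k
    induction k with
    | zero => intro _; exact mul_self_pos.mpr (hqne 0)
    | succ n ih =>
      intro hn
      have h1 := ih (by omega)
      have h2 := hstep n (by omega)
      nlinarith [h1, h2, mul_self_pos.mpr (hqne n)]
  obtain ⟨μ, hμ⟩ := Dmap_rep hv hvp
  obtain ⟨μ', hμ'⟩ := Dmap_rep hv hvp'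
  have hend := hchain d le_rfl
  rw [hq0, hqd] at hend
  have e1 : Dmap p x₁ = -μ := by rw [hμ x₁, hx₁v]; ring
  have e2 : Dmap p' x₁ = -μ' := by rw [hμ' x₁, hx₁v]; ring
  rw [e1, e2] at hend
  have hprod : 0 < μ * μ' := by nlinarith
  have hμ'ne : μ' ≠ 0 := by
    intro h
    rw [h, mul_zero] at hprod
    exact lt_irrefl 0 hprod
  refine ⟨μ / μ', ?_, fun x => ?_⟩
  · rcases mul_pos_iff.mp hprod with ⟨h1, h2⟩ | ⟨h1, h2⟩
    · exact div_pos h1 h2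
    · exact div_pos_of_neg_of_neg h1 h2
  · rw [hμ x, hμ' x]
    field_simp
end

section
/- Let P_1,…,P_d ⊂ ℝ^d be nonempty finite point sets with designated points b_i ∈ P_i for each i. Assume the points b_1,…,b_d affinely span a hyperplane H of ℝ^d and that, with π the orthogonal projection of ℝ^d onto H, the projected sets π(P_1),…,π(P_d) are well-separated (so the family P_1,…,P_d is strongly well-separated with base points b_1,…,b_d). For a colorful selection p = (p_1,…,p_d) with p_i ∈ P_i, let g_p ∈ ℝ^d denote the (constant) linear part of the affine map D_p, i.e., the unique vector with D_p(x) = D_p(0) + ⟨g_p, x⟩ for all x. Then for every colorful selection p, one has ⟨g_p, g_b⟩ > 0, where b = (b_1,…,b_d); in particular the positive-side normal vector of every colorful hyperplane has positive inner product with the positive-side normal vector of the hyperplane spanned by the base points. -/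
open scoped Matrix
open Finset

lemma swsep_of_update {d : ℕ} (v : Fin d → Fin d → ℝ) (i : Fin d) (r : Fin d → ℝ) :
    Matrix.of (Function.update v i r) = (Matrix.of v).updateRow i r := rfl

lemma swsep_det_update_update {d : ℕ} (v : Fin d → Fin d → ℝ) {i j : Fin d} (hij : i ≠ j)
    (w : Fin d → ℝ) :
    (Matrix.of (Function.update (Function.update v j w) i w)).det = 0 := by
  apply Matrix.det_zero_of_row_eq hij
  show Function.update (Function.update v j w) i w i = Function.update (Function.update v j w) i w j
  rw [Function.update_self, Function.update_of_ne hij.symm, Function.update_self]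

lemma swsep_det_piecewise {d : ℕ} (w c : Fin d → ℝ) (s : Finset (Fin d)) :
    ∀ v : Fin d → Fin d → ℝ,
      (Matrix.of (s.piecewise (fun i => v i + c i • w) v)).det
        = (Matrix.of v).det + ∑ i ∈ s, c i * (Matrix.of (Function.update v i w)).det := by
  classical
  induction s using Finset.induction_on with
  | empty => intro v; simp
  | @insert j s hj ih =>
    intro v
    have key : Matrix.of ((insert j s).piecewise (fun i => v i + c i • w) v)
        = Matrix.updateRow (Matrix.of (s.piecewise (fun i => v i + c i • w) v)) j
            (v j + c j • w) := by
      rw [Finset.piecewise_insert]; rfl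
    rw [key, Matrix.det_updateRow_add, Matrix.det_updateRow_smul]
    have h1 : Matrix.updateRow (Matrix.of (s.piecewise (fun i => v i + c i • w) v)) j (v j)
        = Matrix.of (s.piecewise (fun i => v i + c i • w) v) := by
      conv_lhs => rw [show v j = (s.piecewise (fun i => v i + c i • w) v) j from
        (Finset.piecewise_eq_of_notMem _ _ _ hj).symm]
      exact Matrix.updateRow_eq_self _ _
    have h2 : Matrix.updateRow (Matrix.of (s.piecewise (fun i => v i + c i • w) v)) j w
        = Matrix.of (s.piecewise (fun i => Function.update v j w i + c i • w)
            (Function.update v j w)) := by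
      ext i k
      by_cases hij : i = j
      · subst hij
        simp [Finset.piecewise_eq_of_notMem _ _ _ hj]
      · simp only [Matrix.updateRow_ne hij, Matrix.of_apply]
        by_cases his : i ∈ s
        · simp [Finset.piecewise_eq_of_mem _ _ _ his, Function.update_of_ne hij]
        · simp [Finset.piecewise_eq_of_notMem _ _ _ his, Function.update_of_ne hij]
    rw [h1, h2, ih v, ih (Function.update v j w)]
    have hz : ∑ i ∈ s, c i * (Matrix.of (Function.update (Function.update v j w) i w)).det
        = 0 := by
      apply Finset.sum_eq_zero
      intro i his
      have hij : i ≠ j := fun h => hj (h ▸ his)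
      rw [swsep_det_update_update v hij w, mul_zero]
    rw [hz, add_zero, Finset.sum_insert hj]
    ring

lemma swsep_det_rows_add_smul {d : ℕ} (v : Fin d → Fin d → ℝ) (c w : Fin d → ℝ) :
    (Matrix.of (fun i => v i + c i • w)).det
      = (Matrix.of v).det + ∑ i, c i * (Matrix.of (Function.update v i w)).det := by
  classical
  have h := swsep_det_piecewise w c Finset.univ v
  rwa [Finset.piecewise_univ] at h

lemma swsep_Dmap_expand {d : ℕ} (q : Fin d → Fin d → ℝ) (x : Fin d → ℝ) :
    Dmap q x = (Matrix.of q).det - ∑ i, (Matrix.of (Function.update q i x)).det := by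
  have h : (fun i j => q i j - x j) = fun i => q i + (-1 : ℝ) • x := by
    funext i j; simp; ring
  rw [Dmap, h, swsep_det_rows_add_smul]
  simp [neg_one_mul, sub_eq_add_neg, Finset.sum_neg_distrib]

lemma swsep_not_linearIndependent_iff_det {d : ℕ} (v : Fin d → Fin d → ℝ) :
    (Matrix.of v).det = 0 ↔ ∃ c : Fin d → ℝ, c ≠ 0 ∧ ∑ i, c i • v i = 0 := by
  classical
  have hvm : ∀ c : Fin d → ℝ, c ᵥ* (Matrix.of v) = ∑ i, c i • v i := by
    intro c; funext j
    simp [Matrix.vecMul, dotProduct, Finset.sum_apply]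
  rw [← Matrix.det_transpose, ← Matrix.exists_mulVec_eq_zero_iff]
  constructor
  · rintro ⟨c, hc, h⟩
    refine ⟨c, hc, ?_⟩
    rw [Matrix.mulVec_transpose, hvm] at h
    exact h
  · rintro ⟨c, hc, h⟩
    exact ⟨c, hc, by rw [Matrix.mulVec_transpose, hvm]; exact h⟩

lemma swsep_Dmap_ne_zero {d : ℕ} (v : Fin d → Fin d → ℝ) (x : Fin d → ℝ)
    (hv : AffineIndependent ℝ v) (hx : x ∉ affineSpan ℝ (Set.range v)) :
    Dmap v x ≠ 0 := by
  intro h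
  have h' : (Matrix.of (fun i => v i - x)).det = 0 := h
  obtain ⟨c, hc0, hcsum⟩ := (swsep_not_linearIndependent_iff_det _).1 h'
  have hsum : ∑ i, c i • v i = (∑ i, c i) • x := by
    have h2 : ∑ i, (c i • v i - c i • x) = 0 := by
      simpa [smul_sub] using hcsum
    rw [Finset.sum_sub_distrib, ← Finset.sum_smul, sub_eq_zero] at h2
    exact h2
  by_cases hs : (∑ i, c i) = 0
  · have hz := affineIndependent_iff.1 hv Finset.univ c hs
      (by rw [hsum, hs, zero_smul])
    exact hc0 (funext fun i => hz i (Finset.mem_univ i))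
  · apply hx
    have hw1 : ∑ i, ((∑ j, c j)⁻¹ * c i) = 1 := by
      rw [← Finset.mul_sum]; field_simp
    have hx_eq : x = ∑ i, ((∑ j, c j)⁻¹ * c i) • v i := by
      have h3 : ∑ i, ((∑ j, c j)⁻¹ * c i) • v i = (∑ j, c j)⁻¹ • ∑ i, c i • v i := by
        rw [Finset.smul_sum]
        exact Finset.sum_congr rfl fun i _ => by rw [smul_smul]
      rw [h3, hsum, smul_smul, inv_mul_cancel₀ hs, one_smul]
    rw [hx_eq, ← Finset.univ.affineCombination_eq_linear_combination v _ hw1]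
    exact affineCombination_mem_affineSpan hw1 v

/-- For a strongly well-separated family with base points `b i ∈ P i` spanning a
hyperplane `H` (with orthogonal projection `π` onto `H`, and the projected sets
well-separated), the linear part `g_p` of `D_p` for every colorful selection `p`
has positive inner product with the linear part `g_b` of `D_b`. -/
theorem stronglyWellSeparated_no_opposite_orientations {d : ℕ}
    (P : Fin d → Set (Fin d → ℝ))
    (hfin : ∀ i, (P i).Finite) (hne : ∀ i, (P i).Nonempty)
    (b : Fin d → (Fin d → ℝ)) (hb : ∀ i, b i ∈ P i)
    (hH : Module.finrank ℝ (affineSpan ℝ (Set.range b)).direction = d - 1)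
    (π : (Fin d → ℝ) → (Fin d → ℝ))
    (hπmem : ∀ x, π x ∈ affineSpan ℝ (Set.range b))
    (hπorth : ∀ x, ∀ y ∈ affineSpan ℝ (Set.range b), (x - π x) ⬝ᵥ (y - π x) = 0)
    (hws : WellSeparated fun i => π '' P i) :
    ∀ p : Fin d → (Fin d → ℝ), (∀ i, p i ∈ P i) →
      ∀ gp gb : Fin d → ℝ,
        (∀ x, Dmap p x = Dmap p 0 + gp ⬝ᵥ x) →
        (∀ x, Dmap b x = Dmap b 0 + gb ⬝ᵥ x) →
        0 < gp ⬝ᵥ gb := by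
  classical
  rcases Nat.eq_zero_or_pos d with hd0 | hd
  · exfalso
    subst hd0
    have h := hπmem 0
    rw [Set.range_eq_empty b, AffineSubspace.span_empty] at h
    exact AffineSubspace.notMem_bot ℝ _ _ h
  intro p hp gp gb hgp hgb
  set H := affineSpan ℝ (Set.range b) with hHdef
  have i0 : Fin d := ⟨0, hd⟩
  have hbH : ∀ i, b i ∈ H := fun i => mem_affineSpan ℝ ⟨i, rfl⟩
  -- finrank of the ambient space
  have hfr : Module.finrank ℝ (Fin d → ℝ) = d := by
    exact Module.finrank_fin_fun ℝ
  -- (1) Dmap b vanishes on H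
  have hDb0 : ∀ y ∈ H, Dmap b y = 0 := by
    intro y hy
    show (Matrix.of (fun i => b i - y)).det = 0
    rw [swsep_not_linearIndependent_iff_det]
    by_contra hno
    push_neg at hno
    have hli : LinearIndependent ℝ (fun i => b i - y) := by
      rw [Fintype.linearIndependent_iff]
      intro g hg
      by_contra hgg
      push_neg at hgg
      obtain ⟨i, hi⟩ := hgg
      exact hno g (fun h0 => hi (by rw [h0]; rfl)) hg
    have hle : Submodule.span ℝ (Set.range fun i => b i - y) ≤ H.direction :=
      Submodule.span_le.2 (by
        rintro _ ⟨i, rfl⟩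
        exact AffineSubspace.vsub_mem_direction (hbH i) hy)
    have h1 : Module.finrank ℝ (Submodule.span ℝ (Set.range fun i => b i - y)) = d := by
      rw [finrank_span_eq_card hli, Fintype.card_fin]
    have h2 := Submodule.finrank_mono hle
    rw [h1, hH] at h2
    omega
  -- (2) gb is orthogonal to the direction of H
  have hgbW : ∀ w ∈ H.direction, gb ⬝ᵥ w = 0 := by
    intro w hw
    have hy : w + b i0 ∈ H := AffineSubspace.vadd_mem_of_mem_direction hw (hbH i0)
    have e1 := hgb (w + b i0)
    have e2 := hgb (b i0)
    rw [hDb0 _ hy] at e1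
    rw [hDb0 _ (hbH i0)] at e2
    have e3 : gb ⬝ᵥ (w + b i0) = gb ⬝ᵥ w + gb ⬝ᵥ b i0 := dotProduct_add gb w (b i0)
    linarith
  -- (3) gb ≠ 0
  have hgbne : gb ≠ 0 := by
    intro h0
    have hconst : ∀ x, Dmap b x = 0 := by
      intro x
      have h1 := hgb x
      have h2 := hgb (b i0)
      rw [hDb0 _ (hbH i0)] at h2
      rw [h0, zero_dotProduct] at h1 h2
      linarith
    have hbind : AffineIndependent ℝ b := by
      rw [affineIndependent_iff_finrank_vectorSpan_eq ℝ b
        (n := d - 1) (by rw [Fintype.card_fin]; omega)]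
      rw [← direction_affineSpan]
      exact hH
    have hne_top : H ≠ ⊤ := by
      intro ht
      have hdt : Module.finrank ℝ H.direction = d := by
        rw [ht, AffineSubspace.direction_top, finrank_top]
        exact hfr
      omega
    obtain ⟨x, hx⟩ : ∃ x, x ∉ H := by
      by_contra hall
      push_neg at hall
      refine hne_top ?_
      ext x
      exact ⟨fun _ => AffineSubspace.mem_top ℝ _ x, fun _ => hall x⟩
    exact swsep_Dmap_ne_zero b x hbind hx (hconst x)
  have hgbgb : 0 < gb ⬝ᵥ gb := by
    have h1 : gb ⬝ᵥ gb ≠ 0 := fun h => hgbne (dotProduct_self_eq_zero.1 h)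
    have h2 : 0 ≤ gb ⬝ᵥ gb := Finset.sum_nonneg fun i _ => mul_self_nonneg _
    exact lt_of_le_of_ne h2 (Ne.symm h1)
  -- (4) the function Fm
  set Fm : (Fin d → Fin d → ℝ) → ℝ :=
    fun q => -∑ i, (Matrix.of (Function.update q i gb)).det with hFmdef
  have hFmDmap : ∀ (q : Fin d → Fin d → ℝ) x, Dmap q (x + gb) = Dmap q x + Fm q := by
    intro q x
    rw [swsep_Dmap_expand, swsep_Dmap_expand]
    have h : ∀ i ∈ Finset.univ, (Matrix.of (Function.update q i (x + gb))).det
        = (Matrix.of (Function.update q i x)).det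
          + (Matrix.of (Function.update q i gb)).det := by
      intro i _
      rw [swsep_of_update, swsep_of_update, swsep_of_update, Matrix.det_updateRow_add]
    rw [Finset.sum_congr rfl h, Finset.sum_add_distrib]
    ring
  have hgp_Fm : gp ⬝ᵥ gb = Fm p := by
    have h1 := hgp gb
    have h2 := hFmDmap p 0
    rw [zero_add] at h2
    linarith
  have hgb_Fm : gb ⬝ᵥ gb = Fm b := by
    have h1 := hgb gb
    have h2 := hFmDmap b 0
    rw [zero_add] at h2
    linarith
  -- (5) π fixes H
  have hπfix : ∀ y ∈ H, π y = y := by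
    intro y hy
    have h := hπorth y y hy
    have h2 := dotProduct_self_eq_zero.1 h
    exact (sub_eq_zero.1 h2).symm
  -- (6) the orthogonal complement of the direction is spanned by gb
  set V : Submodule ℝ (Fin d → ℝ) :=
    { carrier := {v | ∀ w ∈ H.direction, v ⬝ᵥ w = 0}
      add_mem' := fun ha hb' w hw => by
        rw [add_dotProduct, ha w hw, hb' w hw, add_zero]
      zero_mem' := fun w hw => zero_dotProduct w
      smul_mem' := fun c v hv w hw => by
        rw [smul_dotProduct, hv w hw, smul_zero] } with hVdef
  have hgbV : gb ∈ V := hgbW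
  have hVspan : Submodule.span ℝ {gb} = V := by
    apply Submodule.eq_of_le_of_finrank_le
    · rw [Submodule.span_le, Set.singleton_subset_iff]
      exact hgbV
    · rw [finrank_span_singleton hgbne]
      have hWV : H.direction ⊓ V = ⊥ := by
        rw [Submodule.eq_bot_iff]
        rintro v ⟨hvW, hvV⟩
        exact dotProduct_self_eq_zero.1 (hvV v hvW)
      have hsum := Submodule.finrank_sup_add_finrank_inf_eq H.direction V
      rw [hWV, finrank_bot] at hsum
      have hle := Submodule.finrank_le (H.direction ⊔ V)
      rw [hfr] at hle
      omega
  have hdecomp : ∀ z : Fin d → ℝ, ∃ t : ℝ, z - π z = t • gb := by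
    intro z
    have hzV : z - π z ∈ V := by
      intro w hw
      have hy : w + π z ∈ H := AffineSubspace.vadd_mem_of_mem_direction hw (hπmem z)
      have h := hπorth z (w + π z) hy
      simpa using h
    rw [← hVspan] at hzV
    obtain ⟨t, ht⟩ := Submodule.mem_span_singleton.1 hzV
    exact ⟨t, ht.symm⟩
  -- (7) Fm only depends on the projections
  have hFmπ : ∀ q : Fin d → Fin d → ℝ, Fm q = Fm (fun i => π (q i)) := by
    intro q
    have hFmRow : ∀ i, (Matrix.of (Function.update q i gb)).det
        = (Matrix.of (Function.update (fun j => π (q j)) i gb)).det := by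
      intro i
      choose t ht using fun j => hdecomp (q j)
      set c : Fin d → ℝ := fun j => if j = i then 0 else t j with hc
      have hrow : Function.update q i gb
          = fun j => Function.update (fun j' => π (q j')) i gb j + c j • gb := by
        funext j
        by_cases hji : j = i
        · subst hji
          simp [hc]
        · simp only [Function.update_of_ne hji, hc, if_neg hji]
          rw [← ht j]
          abel
      rw [hrow, swsep_det_rows_add_smul]
      have hz : ∑ j, c j * (Matrix.of (Function.update
          (Function.update (fun j' => π (q j')) i gb) j gb)).det = 0 := by
        apply Finset.sum_eq_zero
        intro j _
        by_cases hji : j = i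
        · subst hji
          simp [hc]
        · rw [swsep_det_update_update _ hji gb, mul_zero]
      rw [hz, add_zero]
    show -∑ i, _ = -∑ i, _
    rw [Finset.sum_congr rfl (fun i _ => hFmRow i)]
  -- (8) convex hulls of projections lie in H
  have hC : ∀ i, (convexHull ℝ (π '' P i)) ⊆ (H : Set (Fin d → ℝ)) := by
    intro i
    apply convexHull_min
    · rintro _ ⟨z, _, rfl⟩
      exact hπmem z
    · exact AffineSubspace.convex H
  -- (9) Fm is nonzero on colorful selections from the projected hulls
  have hFne : ∀ q : Fin d → Fin d → ℝ, (∀ i, q i ∈ convexHull ℝ (π '' P i)) → Fm q ≠ 0 := by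
    intro q hq h0
    have hqH : ∀ i, q i ∈ H := fun i => hC i (hq i)
    have hsub : affineSpan ℝ (Set.range q) ≤ H :=
      affineSpan_le.2 (by rintro _ ⟨i, rfl⟩; exact hqH i)
    have hdirle : (affineSpan ℝ (Set.range q)).direction ≤ H.direction :=
      AffineSubspace.direction_le hsub
    have hrle : Module.finrank ℝ (affineSpan ℝ (Set.range q)).direction ≤ d - 1 := by
      have := Submodule.finrank_mono hdirle
      omega
    by_cases hcase :
        (Module.finrank ℝ (affineSpan ℝ (Set.range q)).direction : ℤ) ≤ (d : ℤ) - 2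
    · exact hws ⟨affineSpan ℝ (Set.range q), hcase, fun i =>
        ⟨q i, mem_affineSpan ℝ ⟨i, rfl⟩, hq i⟩⟩
    · push_neg at hcase
      have hrk : Module.finrank ℝ (affineSpan ℝ (Set.range q)).direction = d - 1 := by
        omega
      have hqind : AffineIndependent ℝ q := by
        rw [affineIndependent_iff_finrank_vectorSpan_eq ℝ q
          (n := d - 1) (by rw [Fintype.card_fin]; omega)]
        rw [← direction_affineSpan]
        exact hrk
      have hD0 : Dmap q (q i0) = 0 := by
        show (Matrix.of (fun i j => q i j - q i0 j)).det = 0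
        exact Matrix.det_eq_zero_of_row_eq_zero i0 (fun j => sub_self _)
      have hFmq : Fm q = Dmap q (q i0 + gb) := by
        have h := hFmDmap q (q i0)
        rw [hD0, zero_add] at h
        exact h.symm
      have hnotin : q i0 + gb ∉ affineSpan ℝ (Set.range q) := by
        intro hin
        have hmem : gb ∈ (affineSpan ℝ (Set.range q)).direction := by
          have h := AffineSubspace.vsub_mem_direction hin (mem_affineSpan ℝ ⟨i0, rfl⟩)
          simpa using h
        exact hgbne (dotProduct_self_eq_zero.1 (hgbW gb (hdirle hmem)))
      exact swsep_Dmap_ne_zero q _ hqind hnotin (by rw [← hFmq]; exact h0)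
  -- (10) connectivity argument
  set S : Set (Fin d → Fin d → ℝ) := Set.univ.pi (fun i => convexHull ℝ (π '' P i)) with hSdef
  have hSconv : Convex ℝ S := convex_pi (fun i _ => convex_convexHull ℝ _)
  have hFcont : Continuous Fm := by
    apply Continuous.neg
    apply continuous_finset_sum
    intro i _
    exact (Continuous.update continuous_id i continuous_const).matrix_det
  have hbS : b ∈ S := by
    intro i _
    exact subset_convexHull ℝ _ ⟨b i, hb i, hπfix (b i) (hbH i)⟩
  have hπpS : (fun i => π (p i)) ∈ S := by
    intro i _
    exact subset_convexHull ℝ _ ⟨p i, hp i, rfl⟩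
  have hFmb_pos : 0 < Fm b := by rw [← hgb_Fm]; exact hgbgb
  have hT : IsPreconnected (Fm '' S) := hSconv.isPreconnected.image Fm hFcont.continuousOn
  have h0T : (0 : ℝ) ∉ Fm '' S := by
    rintro ⟨q, hqS, hq0⟩
    exact hFne q (fun i => hqS i (Set.mem_univ i)) hq0
  have hpos : ∀ y ∈ Fm '' S, 0 < y := by
    intro y hy
    by_contra hyn
    push_neg at hyn
    exact h0T (hT.ordConnected.out hy (Set.mem_image_of_mem Fm hbS) ⟨hyn, hFmb_pos.le⟩)
  rw [hgp_Fm, hFmπ p]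
  exact hpos _ (Set.mem_image_of_mem Fm hπpS)
end

section
/- Let d ≥ 2 and write points of ℝ^d as (y, s) with y ∈ ℝ^{d−1} and s ∈ ℝ; let H_0 = {(y, 0) : y ∈ ℝ^{d−1}} be the horizontal hyperplane. For each i ∈ {1,…,d}, let b_i = (β_i, 0) ∈ H_0 (non-movable) and m_i = (μ_i, 0) ∈ H_0 (movable) be points, and assume b_1,…,b_d affinely span H_0. Suppose there exists an affine subspace f ⊆ H_0 of dimension at most d−2 that intersects the segment [b_i, m_i] for every i ∈ {1,…,d} (i.e., the flattened family is not well-separated). For t ∈ ℝ^d define the lifted points m_i(t) := (μ_i, t_i). Then there exist t ∈ ℝ^d and two distinct pairs (u, c) ≠ (u′, c′) in ℝ^{d−1} × ℝ such that both are colorful lower tangents of the lifted family {b_i, m_i(t) : i ∈ {1,…,d}}. -/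
open scoped Matrix

/-- `(u, c)` is a colorful lower tangent of the lifted family
`{(β i, 0), (μ i, t i) : i}` in `ℝ^{d-1} × ℝ`: writing `g (y, s) = s - ⟨u, y⟩ - c`,
all points lie on or above the hyperplane `s = ⟨u, y⟩ + c`, and for every color at
least one of its two points lies on it. -/
def ColorfulLowerTangent {d : ℕ} (β μ : Fin d → (Fin (d - 1) → ℝ))
    (t : Fin d → ℝ) (u : Fin (d - 1) → ℝ) (c : ℝ) : Prop :=
  (∀ i, 0 ≤ 0 - u ⬝ᵥ β i - c ∧ 0 ≤ t i - u ⬝ᵥ μ i - c) ∧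
  (∀ i, 0 - u ⬝ᵥ β i - c = 0 ∨ t i - u ⬝ᵥ μ i - c = 0)

set_option maxHeartbeats 1000000

/-- If the non-movable points `b i = (β i, 0)` affinely span the horizontal hyperplane
`H₀` and some affine flat `f ⊆ H₀` of dimension at most `d - 2` intersects every
segment `[b i, m i]` (the flattened family is not well-separated), then the movable
points can be lifted to heights `t` so that two distinct hyperplanes are both
colorful lower tangents of the lifted family. -/
theorem not_wellSeparated_two_lower_tangents {d : ℕ} (hd : 2 ≤ d)
    (β μ : Fin d → (Fin (d - 1) → ℝ))
    (hspan : affineSpan ℝ (Set.range β) = ⊤)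
    (f : AffineSubspace ℝ (Fin (d - 1) → ℝ))
    (hf : (Module.finrank ℝ f.direction : ℤ) ≤ (d : ℤ) - 2)
    (hstab : ∀ i, ((f : Set (Fin (d - 1) → ℝ)) ∩ segment ℝ (β i) (μ i)).Nonempty) :
    ∃ (t : Fin d → ℝ) (u u' : Fin (d - 1) → ℝ) (c c' : ℝ),
      (u, c) ≠ (u', c') ∧
      ColorfulLowerTangent β μ t u c ∧ ColorfulLowerTangent β μ t u' c' := by
  classical
  -- a base point of `f`
  obtain ⟨q, hqf, -⟩ := hstab ⟨0, by omega⟩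
  -- the direction of `f` is a proper subspace
  have hdirlt : f.direction < ⊤ := by
    apply Submodule.lt_top_of_finrank_lt_finrank
    rw [Module.finrank_fin_fun]
    omega
  -- a nonzero linear functional vanishing on the direction of `f`
  obtain ⟨φ, hφ0, hφmap⟩ :=
    Submodule.exists_dual_map_eq_bot_of_lt_top hdirlt inferInstance
  have hφf : ∀ x ∈ f.direction, φ x = 0 := by
    intro x hx
    have h1 : φ x ∈ Submodule.map φ f.direction := Submodule.mem_map_of_mem hx
    rw [hφmap] at h1
    simpa using h1
  -- express `φ` as a dot product
  set u₀ : Fin (d - 1) → ℝ := fun j => φ (Pi.single j 1) with hu₀def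
  have hφdot : ∀ y, φ y = u₀ ⬝ᵥ y := by
    intro y
    rw [LinearMap.pi_apply_eq_sum_univ φ y, dotProduct]
    refine Finset.sum_congr rfl fun i _ => ?_
    have h1 : (fun j => if i = j then (1 : ℝ) else 0) = Pi.single i 1 := by
      funext j
      simp [Pi.single_apply, eq_comm]
    rw [h1, smul_eq_mul, mul_comm]
  have hu₀ne : u₀ ≠ 0 := by
    intro h
    apply hφ0
    apply LinearMap.ext
    intro y
    rw [hφdot y, h]
    simp
  -- the values of the affine functional `ℓ y = φ y - φ q` on the points
  set la : Fin d → ℝ := fun i => φ (β i) - φ q with hla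
  set lb : Fin d → ℝ := fun i => φ (μ i) - φ q with hlb
  -- sign condition coming from the stabbing hypothesis
  have hsign : ∀ i, (0 < la i → lb i ≤ 0) ∧ (la i < 0 → 0 ≤ lb i) := by
    intro i
    obtain ⟨x, hxf, hxseg⟩ := hstab i
    obtain ⟨a, b, ha, hb, hab, hx⟩ := hxseg
    have hx0 : φ x - φ q = 0 := by
      have h1 : x -ᵥ q ∈ f.direction := AffineSubspace.vsub_mem_direction hxf hqf
      have h2 := hφf _ h1
      rw [vsub_eq_sub, map_sub] at h2
      linarith
    have h1 : φ x = a * φ (β i) + b * φ (μ i) := by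
      rw [← hx]
      simp [map_add, map_smul, smul_eq_mul]
    have key : a * la i + b * lb i = 0 := by
      simp only [hla, hlb]
      rw [h1] at hx0
      linear_combination hx0 - φ q * hab
    constructor
    · intro hpos
      by_contra hcon
      push_neg at hcon
      have h2 : a * la i = 0 := by
        have h3 : 0 ≤ a * la i := mul_nonneg ha hpos.le
        have h4 : 0 ≤ b * lb i := mul_nonneg hb hcon.le
        linarith
      have ha0 : a = 0 := by
        rcases mul_eq_zero.mp h2 with h' | h'
        · exact h'
        · exact absurd h' (ne_of_gt hpos)
      have hb1 : b = 1 := by linarith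
      rw [ha0, hb1] at key
      simp at key
      linarith
    · intro hneg
      by_contra hcon
      push_neg at hcon
      have h2 : a * la i = 0 := by
        have h3 : a * la i ≤ 0 := mul_nonpos_of_nonneg_of_nonpos ha hneg.le
        have h4 : b * lb i ≤ 0 := mul_nonpos_of_nonneg_of_nonpos hb hcon.le
        linarith
      have ha0 : a = 0 := by
        rcases mul_eq_zero.mp h2 with h' | h'
        · exact h'
        · exact absurd h' (ne_of_lt hneg)
      have hb1 : b = 1 := by linarith
      rw [ha0, hb1] at key
      simp at key
      linarith
  -- the evaluation map for affine functionals at the points β i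
  let L : ((Fin (d - 1) → ℝ) × ℝ) →ₗ[ℝ] (Fin d → ℝ) :=
    { toFun := fun p => fun i => p.1 ⬝ᵥ β i + p.2
      map_add' := by
        intro p₁ p₂
        funext i
        simp [add_dotProduct]
        ring
      map_smul' := by
        intro r p
        funext i
        simp [smul_dotProduct, smul_eq_mul]
        ring }
  have hLinj : Function.Injective L := by
    rw [← LinearMap.ker_eq_bot, Submodule.eq_bot_iff]
    rintro ⟨v, e⟩ hve
    have hve' : ∀ i, v ⬝ᵥ β i + e = 0 := by
      intro i
      have := congrFun (LinearMap.mem_ker.mp hve) i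
      simpa [L] using this
    have hall : ∀ y : Fin (d - 1) → ℝ, v ⬝ᵥ y + e = 0 := by
      set Q : AffineSubspace ℝ (Fin (d - 1) → ℝ) :=
        { carrier := {y | v ⬝ᵥ y + e = 0}
          smul_vsub_vadd_mem' := by
            intro c p₁ p₂ p₃ h₁ h₂ h₃
            simp only [Set.mem_setOf_eq] at h₁ h₂ h₃ ⊢
            have hcomp : v ⬝ᵥ (c • (p₁ -ᵥ p₂) +ᵥ p₃)
                = c * (v ⬝ᵥ p₁) - c * (v ⬝ᵥ p₂) + v ⬝ᵥ p₃ := by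
              rw [vadd_eq_add, vsub_eq_sub, dotProduct_add,
                dotProduct_smul, dotProduct_sub, smul_eq_mul]
              ring
            have e₁ : v ⬝ᵥ p₁ = -e := by linarith
            have e₂ : v ⬝ᵥ p₂ = -e := by linarith
            have e₃ : v ⬝ᵥ p₃ = -e := by linarith
            rw [hcomp, e₁, e₂, e₃]
            ring } with hQ
      have hsub : Set.range β ⊆ (Q : Set (Fin (d - 1) → ℝ)) := by
        rintro - ⟨i, rfl⟩
        exact hve' i
      have hle : affineSpan ℝ (Set.range β) ≤ Q := affineSpan_le.mpr hsub
      rw [hspan] at hle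
      intro y
      exact hle (AffineSubspace.mem_top ℝ _ y)
    have he : e = 0 := by
      have := hall 0
      simpa using this
    have hv : v = 0 := by
      funext j
      have := hall (Pi.single j 1)
      rw [dotProduct_single] at this
      simp only [he, add_zero, mul_one] at this
      simpa using this
    simp [hv, he, Prod.ext_iff]
  have hLsurj : Function.Surjective L := by
    have hfr : Module.finrank ℝ ((Fin (d - 1) → ℝ) × ℝ)
        = Module.finrank ℝ (Fin d → ℝ) := by
      rw [Module.finrank_prod, Module.finrank_fin_fun, Module.finrank_fin_fun,
        Module.finrank_self]
      omega
    exact (LinearMap.injective_iff_surjective_of_finrank_eq_finrank hfr).mp hLinj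
  -- the affine functional `g` with `g (β i) = min (la i) 0`
  obtain ⟨⟨v, e⟩, hveL⟩ := hLsurj fun i => min (la i) 0
  have hg : ∀ i, v ⬝ᵥ β i + e = min (la i) 0 := by
    intro i
    have := congrFun hveL i
    simpa [L] using this
  -- the two tangents and the lift
  set T : Fin d → ℝ := fun i => (v ⬝ᵥ μ i + e) + max 0 (-(lb i)) with hTdef
  have hTi : ∀ i, T i = (v ⬝ᵥ μ i + e) + max 0 (-(lb i)) := fun i => rfl
  refine ⟨T, v, v - u₀, e, e + φ q, ?_, ?_, ?_⟩
  · -- distinctness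
    intro h
    apply hu₀ne
    have h1 : v = v - u₀ := congrArg Prod.fst h
    have h2 : v - u₀ = v := h1.symm
    rw [sub_eq_self] at h2
    exact h2
  · -- first tangent
    constructor
    · intro i
      constructor
      · have h1 := hg i
        have h2 : min (la i) 0 ≤ 0 := min_le_right _ _
        linarith
      · have h2 : (0 : ℝ) ≤ max 0 (-(lb i)) := le_max_left _ _
        have h4 := hTi i
        linarith
    · intro i
      rcases le_or_gt 0 (la i) with hla0 | hla0
      · left
        have h1 := hg i
        have h2 : min (la i) 0 = 0 := min_eq_right hla0
        linarith
      · right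
        have h2 : 0 ≤ lb i := (hsign i).2 hla0
        have h3 : max 0 (-(lb i)) = 0 := max_eq_left (by linarith)
        rw [hTi i, h3]
        ring
  · -- second tangent
    have hβ' : ∀ i, (v - u₀) ⬝ᵥ β i + (e + φ q) = min (la i) 0 - la i := by
      intro i
      rw [sub_dotProduct]
      have h1 := hg i
      have h2 := hφdot (β i)
      simp only [hla]
      linarith
    have hμ' : ∀ i, (v - u₀) ⬝ᵥ μ i + (e + φ q) = (v ⬝ᵥ μ i + e) - lb i := by
      intro i
      rw [sub_dotProduct]
      have h2 := hφdot (μ i)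
      simp only [hlb]
      linarith
    constructor
    · intro i
      constructor
      · have h1 := hβ' i
        have h2 : min (la i) 0 ≤ la i := min_le_left _ _
        linarith
      · have h1 := hμ' i
        have h2 : -(lb i) ≤ max 0 (-(lb i)) := le_max_right _ _
        have h4 := hTi i
        linarith
    · intro i
      rcases le_or_gt (la i) 0 with hla0 | hla0
      · left
        have h1 := hβ' i
        have h2 : min (la i) 0 = la i := min_eq_left hla0
        linarith
      · right
        have h1 := hμ' i
        have h2 : lb i ≤ 0 := (hsign i).1 hla0
        have h3 : max 0 (-(lb i)) = -(lb i) := max_eq_right (by linarith)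
        have h4 := hTi i
        rw [h3] at h4
        linarith
end

section
/- Let d ≥ 1 and for each i ∈ {1,…,d} let P_i = {p_{i,0}, p_{i,1}} ⊂ ℝ^d be a two-point set. Assume the sets P_1,…,P_d are well-separated, and assume general position in the sense that for every colorful selection v ∈ {0,1}^d (selecting p_{i,v_i} from P_i) and every i ∈ {1,…,d}, D_v(p_{i, 1−v_i}) ≠ 0, where D_v := D_{(p_{1,v_1},…,p_{d,v_d})}. Let α_1,…,α_d ∈ {1, 2}. Define an orientation O of the d-dimensional hypercube with vertex set {0,1}^d by: O(v)_i := 0 if |{j ∈ {0,1} : D_v(p_{i,j}) ≥ 0}| = α_i, and O(v)_i := 1 otherwise. Then O is a unique sink orientation: for every pair of vertices a ≤ b (componentwise) in {0,1}^d, there is exactly one vertex v with a ≤ v ≤ b such that O(v)_i = 0 for every i with a_i ≠ b_i. -/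
open scoped Matrix

namespace USO

variable {d : ℕ}

/-- lift a point of `ℝ^d` to the row `(1, x)` in `ℝ^{d+1}`. -/
def lift (x : Fin d → ℝ) : Fin (d + 1) → ℝ := Fin.cons 1 x

/-- The `(d+1) × (d+1)` matrix with first row `x` and remaining rows `r i`. -/
def Rmat (x : Fin (d + 1) → ℝ) (r : Fin d → Fin (d + 1) → ℝ) :
    Matrix (Fin (d + 1)) (Fin (d + 1)) ℝ := Matrix.of (Fin.cons x r)

noncomputable def Rdet (x : Fin (d + 1) → ℝ) (r : Fin d → Fin (d + 1) → ℝ) : ℝ :=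
  (Rmat x r).det

@[simp] lemma Rmat_zero (x : Fin (d + 1) → ℝ) (r : Fin d → Fin (d + 1) → ℝ) :
    Rmat x r 0 = x := rfl

@[simp] lemma Rmat_succ (x : Fin (d + 1) → ℝ) (r : Fin d → Fin (d + 1) → ℝ) (i : Fin d) :
    Rmat x r i.succ = r i := rfl

@[simp] lemma lift_zero (x : Fin d → ℝ) : lift x 0 = 1 := rfl

@[simp] lemma lift_succ (x : Fin d → ℝ) (j : Fin d) : lift x j.succ = x j := by
  simp [lift]

/-- Bridge: the `(d+1)`-determinant with rows `(1,x), (1, pts i)` equals `Dmap pts x`. -/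
lemma Rdet_lift (pts : Fin d → Fin d → ℝ) (x : Fin d → ℝ) :
    Rdet (lift x) (fun i => lift (pts i)) = Dmap pts x := by
  have h1 : Rdet (lift x) (fun i => lift (pts i)) =
      (Rmat (lift x) (fun i => Fin.cons 0 (fun j => pts i j - x j))).det := by
    apply Matrix.det_eq_of_forall_row_eq_smul_add_const
      (c := fun i : Fin (d+1) => if i = 0 then 0 else 1) (k := 0)
    · simp
    · intro i j
      refine Fin.cases ?_ (fun i => ?_) i <;> refine Fin.cases ?_ (fun j => ?_) j <;>
        simp [Rmat, Matrix.of_apply, lift, Fin.cons_zero, Fin.cons_succ,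
          Fin.succ_ne_zero] <;> ring
  rw [h1]
  rw [Matrix.det_succ_column_zero]
  rw [Finset.sum_eq_single 0 (fun i _ hi => by
      obtain ⟨i, rfl⟩ := Fin.exists_succ_eq.mpr hi
      simp) (by simp)]
  simp only [Fin.val_zero, pow_zero, one_mul, Rmat_zero, lift_zero]
  have : (Rmat (lift x) (fun i => Fin.cons 0 fun j => pts i j - x j)).submatrix
      (Fin.succAbove 0) Fin.succ = Matrix.of fun i j => pts i j - x j := by
    ext i j
    simp [Matrix.submatrix_apply, Fin.succAbove_zero]
  rw [this, Dmap]

end USO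

variable {d : ℕ}
namespace USO

/-- replacing the first row. -/
lemma Rmat_eq_updateRow (x y : Fin (d + 1) → ℝ) (r : Fin d → Fin (d + 1) → ℝ) :
    Rmat x r = Matrix.updateRow (Rmat y r) 0 x := by
  ext i j
  rcases Fin.eq_zero_or_eq_succ i with rfl | ⟨i, rfl⟩
  · simp
  · simp [Matrix.updateRow_apply, Fin.succ_ne_zero]

/-- `Rdet` as a linear map in the first row. -/
noncomputable def RdetL (r : Fin d → Fin (d + 1) → ℝ) : (Fin (d + 1) → ℝ) →ₗ[ℝ] ℝ where
  toFun x := Rdet x r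
  map_add' x y := by
    simp only [Rdet]
    rw [Rmat_eq_updateRow (x + y) 0, Rmat_eq_updateRow x 0,
      Rmat_eq_updateRow y 0, Matrix.det_updateRow_add]
  map_smul' c x := by
    simp only [Rdet]
    rw [Rmat_eq_updateRow (c • x) 0, Rmat_eq_updateRow x 0,
      Matrix.det_updateRow_smul]
    rfl

/-- the cofactor vector of the rows `r`. -/
noncomputable def nu (r : Fin d → Fin (d + 1) → ℝ) : Fin (d + 1) → ℝ :=
  fun k => Rdet (fun j => if k = j then 1 else 0) r

lemma Rdet_eq_dot (x : Fin (d + 1) → ℝ) (r : Fin d → Fin (d + 1) → ℝ) :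
    Rdet x r = nu r ⬝ᵥ x := by
  have := LinearMap.pi_apply_eq_sum_univ (RdetL r) x
  simp only [RdetL, LinearMap.coe_mk, AddHom.coe_mk] at this
  rw [this, dotProduct]
  exact Finset.sum_congr rfl fun k _ => by rw [nu, smul_eq_mul, mul_comm]

lemma nu_dot_row (r : Fin d → Fin (d + 1) → ℝ) (i : Fin d) : nu r ⬝ᵥ r i = 0 := by
  rw [← Rdet_eq_dot]
  exact Matrix.det_zero_of_row_eq (Fin.succ_ne_zero i).symm (by simp)

lemma nu_dot_self (r : Fin d → Fin (d + 1) → ℝ) : nu r ⬝ᵥ nu r = Rdet (nu r) r :=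
  (Rdet_eq_dot _ r).symm

lemma dot_self_pos {x : Fin (d + 1) → ℝ} (hx : x ≠ 0) : 0 < x ⬝ᵥ x := by
  rcases eq_or_lt_of_le (Finset.sum_nonneg fun i _ => mul_self_nonneg (x i)) with h | h
  · exact absurd (dotProduct_self_eq_zero.mp h.symm) hx
  · exact h

end USO

namespace USO
variable {d : ℕ}

/-- Well-separation implies that no nontrivial linear combination of lifted points,
one from each segment, vanishes. -/
lemma indep_rows (hd : 1 ≤ d) {p : Fin d → Bool → (Fin d → ℝ)}
    (hws : WellSeparated fun i => ({p i false, p i true} : Set (Fin d → ℝ)))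
    (c : Fin d → Fin d → ℝ) (hc : ∀ i, c i ∈ segment ℝ (p i false) (p i true))
    (γ : Fin d → ℝ) (h0 : ∑ i, γ i • lift (c i) = 0) : γ = 0 := by
  by_contra hγ
  have hsum : ∑ i, γ i = 0 := by
    have := congrFun h0 0
    simpa [Finset.sum_apply] using this
  have hpt : ∑ i, γ i • c i = 0 := by
    funext k
    have := congrFun h0 k.succ
    simpa [Finset.sum_apply] using this
  have hnAI : ¬ AffineIndependent ℝ c := by
    intro hAI
    refine hγ (funext fun i => ?_)
    exact affineIndependent_iff.mp hAI Finset.univ γ hsum hpt i (Finset.mem_univ i)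
  by_cases hd2 : 2 ≤ d
  · have hcard : Fintype.card (Fin d) = (d - 2) + 2 := by simp; omega
    have hrk : Module.finrank ℝ (vectorSpan ℝ (Set.range c)) ≤ d - 2 :=
      (finrank_vectorSpan_le_iff_not_affineIndependent ℝ c hcard).mpr hnAI
    refine hws ⟨affineSpan ℝ (Set.range c), ?_, ?_⟩
    · rw [direction_affineSpan]
      have : ((d : ℤ) - 2) = ((d - 2 : ℕ) : ℤ) := by omega
      rw [this]
      exact_mod_cast hrk
    · intro i
      refine ⟨c i, ?_, ?_⟩
      · exact subset_affineSpan ℝ _ ⟨i, rfl⟩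
      · rw [convexHull_pair]
        exact hc i
  · interval_cases d
    exact hnAI (affineIndependent_of_subsingleton ℝ c)

end USO

namespace USO
variable {d : ℕ}

def rowsXY (p : Fin d → Bool → Fin d → ℝ) (v w : Fin d → Bool) (x y : Fin d → ℝ) :
    Fin d → Fin (d + 1) → ℝ :=
  fun i => if v i = w i then lift (p i (v i))
    else x i • lift (p i (v i)) + y i • lift (p i (w i))

lemma sum_ne_zero_of_mul_pos {x y : ℝ} (h : 0 < x * y) : x + y ≠ 0 := by
  rcases mul_pos_iff.mp h with ⟨hx, hy⟩ | ⟨hx, hy⟩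
  · positivity
  · have : x + y < 0 := by linarith
    exact ne_of_lt this

lemma ratio_nonneg_of_mul_pos {x y : ℝ} (h : 0 < x * y) :
    0 ≤ x / (x + y) ∧ 0 ≤ y / (x + y) := by
  rcases mul_pos_iff.mp h with ⟨hx, hy⟩ | ⟨hx, hy⟩
  · constructor <;> positivity
  · constructor <;>
      exact div_nonneg_iff.mpr (Or.inr ⟨le_of_lt ‹_›, by linarith⟩)

/-- The key degeneracy lemma: if a vector `h` is orthogonal to all the (possibly rescaled)
rows through interior points of the segments and the corresponding determinant vanishes,
then `h = 0`. -/
lemma key_dep (hd : 1 ≤ d) {p : Fin d → Bool → (Fin d → ℝ)}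
    (hws : WellSeparated fun i => ({p i false, p i true} : Set (Fin d → ℝ)))
    (v w : Fin d → Bool) (x y : Fin d → ℝ) (h : Fin (d + 1) → ℝ)
    (hxy : ∀ i, v i ≠ w i → 0 < x i * y i)
    (horth : ∀ i, h ⬝ᵥ rowsXY p v w x y i = 0)
    (hdet : (Rmat h (rowsXY p v w x y)).det = 0) : h = 0 := by
  obtain ⟨γ, hγne, hγ⟩ := Matrix.exists_vecMul_eq_zero_iff.mpr hdet
  set R := rowsXY p v w x y with hR
  have hcomb : γ 0 • h + ∑ i : Fin d, γ i.succ • R i = 0 := by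
    funext k
    have h1 : Matrix.vecMul γ (Rmat h R) k = 0 := congrFun hγ k
    rw [Matrix.vecMul, dotProduct, Fin.sum_univ_succ] at h1
    simpa [Finset.sum_apply] using h1
  rcases eq_or_ne (γ 0) 0 with hγ0 | hγ0
  · -- the segment rows are dependent: contradiction with well-separation
    exfalso
    classical
    set δ : Fin d → ℝ := fun i => if v i = w i then 1 else x i + y i with hδdef
    set m : Fin d → Fin d → ℝ := fun i =>
      if v i = w i then p i (v i)
      else (x i / (x i + y i)) • p i (v i) + (y i / (x i + y i)) • p i (w i) with hmdef
    have hδ : ∀ i, δ i ≠ 0 := by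
      intro i
      simp only [hδdef]
      split
      · exact one_ne_zero
      · exact sum_ne_zero_of_mul_pos (hxy i ‹_›)
    have hrow : ∀ i, R i = δ i • lift (m i) := by
      intro i
      simp only [hR, rowsXY, hδdef, hmdef]
      split
      · rw [one_smul]
      · have hne := hxy i ‹_›
        have hsum := sum_ne_zero_of_mul_pos hne
        funext k
        rcases Fin.eq_zero_or_eq_succ k with rfl | ⟨k, rfl⟩
        · simp only [Pi.add_apply, Pi.smul_apply, lift_zero, smul_eq_mul, mul_one]
        · simp only [Pi.add_apply, Pi.smul_apply, lift_succ, smul_eq_mul]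
          field_simp
    have hm : ∀ i, m i ∈ segment ℝ (p i false) (p i true) := by
      intro i
      simp only [hmdef]
      split
      · cases hv : v i
        case false => exact left_mem_segment ℝ _ _
        case true => exact right_mem_segment ℝ _ _
      · have hne := hxy i ‹_›
        obtain ⟨h1, h2⟩ := ratio_nonneg_of_mul_pos hne
        have hsumne := sum_ne_zero_of_mul_pos hne
        have hs : x i / (x i + y i) + y i / (x i + y i) = 1 := by
          rw [← add_div, div_self hsumne]
        have hvw : v i ≠ w i := ‹_›
        cases hv : v i <;> cases hw : w i
        · exact absurd (hv.trans hw.symm) hvw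
        · exact ⟨_, _, h1, h2, hs, rfl⟩
        · exact ⟨_, _, h2, h1, by linarith, by rw [add_comm]⟩
        · exact absurd (hv.trans hw.symm) hvw

    have hzero : ∑ i, (γ i.succ * δ i) • lift (m i) = 0 := by
      have := hcomb
      rw [hγ0, zero_smul, zero_add] at this
      rw [← this]
      exact Finset.sum_congr rfl fun i _ => by rw [hrow i, smul_smul]
    have hall := indep_rows hd hws m hm _ hzero
    apply hγne
    funext j
    rcases Fin.eq_zero_or_eq_succ j with rfl | ⟨j, rfl⟩
    · exact hγ0
    · have := congrFun hall j
      simp only [Pi.zero_apply] at this ⊢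
      rcases mul_eq_zero.mp this with h' | h'
      · exact h'
      · exact absurd h' (hδ j)
  · -- `h` is in the span of the rows and orthogonal to them, hence zero
    have hdot : (γ 0 • h + ∑ i : Fin d, γ i.succ • R i) ⬝ᵥ h = 0 := by
      rw [hcomb, zero_dotProduct]
    have hsplit : (∑ i : Fin d, γ i.succ • R i) ⬝ᵥ h
        = ∑ i : Fin d, γ i.succ * (R i ⬝ᵥ h) := by
      simp only [dotProduct, Finset.sum_apply, Pi.smul_apply, smul_eq_mul,
        Finset.sum_mul, Finset.mul_sum]
      rw [Finset.sum_comm]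
      apply Finset.sum_congr rfl; intro i _
      apply Finset.sum_congr rfl; intro k _
      ring
    rw [add_dotProduct, smul_dotProduct, hsplit] at hdot
    have hz : (∑ i : Fin d, γ i.succ * (R i ⬝ᵥ h)) = 0 := by
      apply Finset.sum_eq_zero; intro i _
      rw [dotProduct_comm (R i) h, horth i, mul_zero]
    rw [hz, add_zero] at hdot
    have : h ⬝ᵥ h = 0 := by
      have := smul_eq_zero.mp hdot
      rcases this with h' | h'
      · exact absurd h' hγ0
      · exact h'
    exact dotProduct_self_eq_zero.mp this

end USO

namespace USO
variable {d : ℕ}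

/-- The main geometric lemma: two distinct vertices of the cube cannot have, for every
coordinate where they differ, positively-proportional tangency values. -/
lemma pos_mul_of_mul_pos {a b c : ℝ} (h1 : 0 < a * c) (h2 : 0 < b * c) : 0 < a * b := by
  rcases mul_pos_iff.mp h1 with ⟨ha, hc⟩ | ⟨ha, hc⟩ <;>
    rcases mul_pos_iff.mp h2 with ⟨hb, hc'⟩ | ⟨hb, hc'⟩
  · exact mul_pos ha hb
  · linarith
  · linarith
  · exact mul_pos_of_neg_of_neg ha hb

/-- The main geometric lemma: two distinct vertices of the cube cannot have, for every
coordinate where they differ, positively-proportional tangency values. -/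
lemma no_collision (hd : 1 ≤ d) {p : Fin d → Bool → (Fin d → ℝ)}
    (hws : WellSeparated fun i => ({p i false, p i true} : Set (Fin d → ℝ)))
    (hgp : ∀ (v : Fin d → Bool) (i : Fin d),
      Dmap (fun j => p j (v j)) (p i (!v i)) ≠ 0)
    (v w : Fin d → Bool) (hne : v ≠ w)
    (hcol : ∀ i, v i ≠ w i →
      (0 < Dmap (fun l => p l (v l)) (p i (w i)) ↔
       0 < Dmap (fun l => p l (w l)) (p i (v i)))) : False := by
  classical
  set νv : Fin (d + 1) → ℝ := nu (fun i => lift (p i (v i))) with hνv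
  set νw : Fin (d + 1) → ℝ := nu (fun i => lift (p i (w i))) with hνw
  have hv0 : ∀ i, νv ⬝ᵥ lift (p i (v i)) = 0 := fun i =>
    nu_dot_row (fun i => lift (p i (v i))) i
  have hw0 : ∀ i, νw ⬝ᵥ lift (p i (w i)) = 0 := fun i =>
    nu_dot_row (fun i => lift (p i (w i))) i
  set A : Fin d → ℝ := fun i => νv ⬝ᵥ lift (p i (w i)) with hA
  set B : Fin d → ℝ := fun i => νw ⬝ᵥ lift (p i (v i)) with hB
  have hAD : ∀ i, A i = Dmap (fun l => p l (v l)) (p i (w i)) := by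
    intro i
    rw [hA, ← Rdet_lift (fun l => p l (v l)) (p i (w i)), Rdet_eq_dot]
  have hBD : ∀ i, B i = Dmap (fun l => p l (w l)) (p i (v i)) := by
    intro i
    rw [hB, ← Rdet_lift (fun l => p l (w l)) (p i (v i)), Rdet_eq_dot]
  have hswap : ∀ i, v i ≠ w i → w i = !v i := by
    intro i hi; cases hv : v i <;> cases hw : w i <;> simp_all
  have hswap' : ∀ i, v i ≠ w i → v i = !w i := by
    intro i hi; cases hv : v i <;> cases hw : w i <;> simp_all
  have hAne : ∀ i, v i ≠ w i → A i ≠ 0 := by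
    intro i hi
    rw [hAD i, hswap i hi]
    exact hgp v i
  have hBne : ∀ i, v i ≠ w i → B i ≠ 0 := by
    intro i hi
    rw [hBD i, hswap' i hi]
    exact hgp w i
  have hABpos : ∀ i, v i ≠ w i → 0 < A i * B i := by
    intro i hi
    have hiff : 0 < A i ↔ 0 < B i := by
      rw [hAD i, hBD i]; exact hcol i hi
    rcases lt_or_gt_of_ne (hAne i hi) with hA' | hA'
    · have hB' : B i < 0 := by
        rcases lt_or_gt_of_ne (hBne i hi) with h' | h'
        · exact h'
        · exact absurd (hiff.mpr h') (by linarith)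
      exact mul_pos_of_neg_of_neg hA' hB'
    · exact mul_pos hA' (hiff.mp hA')
  obtain ⟨i₀, hi₀⟩ := Function.ne_iff.mp hne
  have hνvne : νv ≠ 0 := by
    intro h0
    exact hAne i₀ hi₀ (by rw [hA]; simp only [h0, zero_dotProduct])
  have hνwne : νw ≠ 0 := by
    intro h0
    exact hBne i₀ hi₀ (by rw [hB]; simp only [h0, zero_dotProduct])
  have hQv : 0 < νv ⬝ᵥ νv := dot_self_pos hνvne
  have hQw : 0 < νw ⬝ᵥ νw := dot_self_pos hνwne
  -- the pencil determinant and its reversal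
  set f : ℝ → ℝ := fun t => (Rmat ((1 - t) • νv + t • νw)
    (rowsXY p v w (fun i => (t - 1) * A i) (fun i => t * B i))).det with hf
  set g : ℝ → ℝ := fun s => (Rmat ((s - 1) • νv + νw)
    (rowsXY p v w (fun i => (1 - s) * A i) (fun i => B i))).det with hg
  -- continuity
  have hfc : Continuous f := by
    rw [hf]
    apply Continuous.matrix_det
    apply continuous_matrix
    intro j k
    refine Fin.cases ?_ (fun i => ?_) j
    · simp only [Rmat_zero, Pi.add_apply, Pi.smul_apply, smul_eq_mul]
      fun_prop
    · simp only [Rmat_succ, rowsXY]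
      by_cases hvw : v i = w i
      · simp only [if_pos hvw]; fun_prop
      · simp only [if_neg hvw, Pi.add_apply, Pi.smul_apply, smul_eq_mul]
        fun_prop
  have hgc : Continuous g := by
    rw [hg]
    apply Continuous.matrix_det
    apply continuous_matrix
    intro j k
    refine Fin.cases ?_ (fun i => ?_) j
    · simp only [Rmat_zero, Pi.add_apply, Pi.smul_apply, smul_eq_mul]
      fun_prop
    · simp only [Rmat_succ, rowsXY]
      by_cases hvw : v i = w i
      · simp only [if_pos hvw]; fun_prop
      · simp only [if_neg hvw, Pi.add_apply, Pi.smul_apply, smul_eq_mul]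
        fun_prop
  -- orthogonality of the pencil vector to the rows
  have horthf : ∀ t : ℝ, ∀ i, ((1 - t) • νv + t • νw) ⬝ᵥ
      rowsXY p v w (fun i => (t - 1) * A i) (fun i => t * B i) i = 0 := by
    intro t i
    by_cases hvw : v i = w i
    · simp only [rowsXY, if_pos hvw, add_dotProduct, smul_dotProduct,
        hv0 i, smul_eq_mul, mul_zero, zero_add]
      have : νw ⬝ᵥ lift (p i (v i)) = 0 := by rw [hvw]; exact hw0 i
      rw [this, mul_zero]
    · simp only [rowsXY, if_neg hvw, add_dotProduct, smul_dotProduct,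
        dotProduct_add, dotProduct_smul, hv0 i, hw0 i, smul_eq_mul,
        ← hA, ← hB]
      ring
  have horthg : ∀ i, (νw - νv) ⬝ᵥ
      rowsXY p v w (fun i => A i) (fun i => B i) i = 0 := by
    intro i
    by_cases hvw : v i = w i
    · simp only [rowsXY, if_pos hvw, sub_dotProduct, hv0 i]
      have : νw ⬝ᵥ lift (p i (v i)) = 0 := by rw [hvw]; exact hw0 i
      rw [this, sub_zero]
    · simp only [rowsXY, if_neg hvw, sub_dotProduct, dotProduct_add,
        dotProduct_smul, hv0 i, hw0 i, smul_eq_mul, ← hA, ← hB]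
      ring
  -- evaluations at 0 and 1
  have hf0 : f 0 = (∏ i, (if v i = w i then (1:ℝ) else -A i)) * (νv ⬝ᵥ νv) := by
    simp only [hf]
    have hM : (Rmat ((1 - (0:ℝ)) • νv + (0:ℝ) • νw)
        (rowsXY p v w (fun i => ((0:ℝ) - 1) * A i) (fun i => (0:ℝ) * B i))) =
        Matrix.of (fun j k => (Fin.cons 1 (fun i => if v i = w i then (1:ℝ) else -A i) :
          Fin (d+1) → ℝ) j * (Rmat νv (fun i => lift (p i (v i)))) j k) := by
      ext j k
      refine Fin.cases ?_ (fun i => ?_) j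
      · simp [Matrix.of_apply]
      · simp only [Matrix.of_apply, Rmat_succ, rowsXY, Fin.cons_succ]
        by_cases hvw : v i = w i
        · simp [hvw]
        · simp only [if_neg hvw, Pi.add_apply, Pi.smul_apply, smul_eq_mul]
          ring
    rw [hM, Matrix.det_mul_column, Fin.prod_univ_succ]
    have : Rdet νv (fun i => lift (p i (v i))) = νv ⬝ᵥ νv := by
      rw [Rdet_eq_dot, ← hνv]
    rw [← Rdet, this]
    simp [Fin.cons_succ]
  have hf1 : f 1 = (∏ i, (if v i = w i then (1:ℝ) else B i)) * (νw ⬝ᵥ νw) := by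
    simp only [hf]
    have hM : (Rmat ((1 - (1:ℝ)) • νv + (1:ℝ) • νw)
        (rowsXY p v w (fun i => ((1:ℝ) - 1) * A i) (fun i => (1:ℝ) * B i))) =
        Matrix.of (fun j k => (Fin.cons 1 (fun i => if v i = w i then (1:ℝ) else B i) :
          Fin (d+1) → ℝ) j * (Rmat νw (fun i => lift (p i (w i)))) j k) := by
      ext j k
      refine Fin.cases ?_ (fun i => ?_) j
      · simp [Matrix.of_apply]
      · simp only [Matrix.of_apply, Rmat_succ, rowsXY, Fin.cons_succ]
        by_cases hvw : v i = w i
        · simp [hvw]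
        · simp only [if_neg hvw, Pi.add_apply, Pi.smul_apply, smul_eq_mul]
          ring
    rw [hM, Matrix.det_mul_column, Fin.prod_univ_succ]
    have : Rdet νw (fun i => lift (p i (w i))) = νw ⬝ᵥ νw := by
      rw [Rdet_eq_dot, ← hνw]
    rw [← Rdet, this]
    simp [Fin.cons_succ]
  -- the reversal identity
  have hfg : ∀ t : ℝ, t ≠ 0 →
      f t = (t * ∏ i, (if v i = w i then (1:ℝ) else t)) * g (1/t) := by
    intro t ht
    simp only [hf, hg]
    have hM : (Rmat ((1 - t) • νv + t • νw)
        (rowsXY p v w (fun i => (t - 1) * A i) (fun i => t * B i))) =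
        Matrix.of (fun j k => (Fin.cons t (fun i => if v i = w i then (1:ℝ) else t) :
          Fin (d+1) → ℝ) j * (Rmat ((1/t - 1) • νv + νw)
            (rowsXY p v w (fun i => (1 - 1/t) * A i) (fun i => B i))) j k) := by
      ext j k
      refine Fin.cases ?_ (fun i => ?_) j
      · simp only [Matrix.of_apply, Rmat_zero, Fin.cons_zero, Pi.add_apply,
          Pi.smul_apply, smul_eq_mul]
        field_simp
      · simp only [Matrix.of_apply, Rmat_succ, rowsXY, Fin.cons_succ]
        by_cases hvw : v i = w i
        · simp [hvw]
        · simp only [if_neg hvw, Pi.add_apply, Pi.smul_apply, smul_eq_mul]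
          field_simp
    rw [hM, Matrix.det_mul_column, Fin.prod_univ_succ]
    simp only [Fin.cons_zero, Fin.cons_succ]
  by_cases hL : g 0 = 0
  · -- degenerate leading coefficient case
    have hdet : (Rmat (νw - νv) (rowsXY p v w (fun i => A i) (fun i => B i))).det = 0 := by
      have h1 : ((0:ℝ) - 1) • νv + νw = νw - νv := by
        funext k; simp; ring
      have h2 : rowsXY p v w (fun i => (1 - (0:ℝ)) * A i) (fun i => B i) =
          rowsXY p v w (fun i => A i) (fun i => B i) := by
        funext i; simp [rowsXY]
      simp only [hg] at hL
      rw [← h1, ← h2]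
      exact hL
    have hkey := key_dep hd hws v w (fun i => A i) (fun i => B i) (νw - νv)
      (fun i hi => hABpos i hi) horthg hdet
    have hvw' : νv = νw := by
      have := sub_eq_zero.mp hkey
      exact this.symm
    apply hAne i₀ hi₀
    rw [hA]
    simp only
    rw [hvw']
    exact hw0 i₀
  · -- nondegenerate leading coefficient: sign analysis
    obtain ⟨ε, hε, hball⟩ : ∃ ε > (0:ℝ), ∀ s : ℝ, |s| < ε → 0 < g s * g 0 := by
      have hc := hgc.continuousAt (x := 0)
      rw [Metric.continuousAt_iff] at hc
      obtain ⟨ε, hε0, hb⟩ := hc |g 0| (abs_pos.mpr hL)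
      refine ⟨ε, hε0, fun s hs => ?_⟩
      have hd' : dist s 0 < ε := by simpa [Real.dist_eq] using hs
      have := hb hd'
      rw [Real.dist_eq] at this
      rcases abs_sub_lt_iff.mp this with ⟨h1', h2'⟩
      rcases lt_or_gt_of_ne hL with hneg | hpos
      · rw [abs_of_neg hneg] at h1' h2'
        have : g s < 0 := by linarith
        exact mul_pos_of_neg_of_neg this hneg
      · rw [abs_of_pos hpos] at h1' h2'
        have : 0 < g s := by linarith
        exact mul_pos this hpos
    set tp : ℝ := max 2 (2/ε) with htpdef
    have htp2 : (2:ℝ) ≤ tp := le_max_left _ _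
    have htp1 : (1:ℝ) < tp := by linarith
    have htppos : (0:ℝ) < tp := by linarith
    have hinvp : |1/tp| < ε := by
      have h2ε : 2/ε ≤ tp := le_max_right _ _
      have hεt : 2 ≤ ε * tp := by
        have := mul_le_mul_of_nonneg_left h2ε (le_of_lt hε)
        rwa [mul_div_cancel₀ 2 (ne_of_gt hε)] at this
      rw [abs_of_pos (by positivity)]
      rw [div_lt_iff₀ htppos]
      nlinarith
    set tm : ℝ := -tp with htmdef
    have htmneg : tm < 0 := by rw [htmdef]; linarith
    have hinvm : |1/tm| < ε := by
      rw [htmdef]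
      rw [show (1:ℝ)/(-tp) = -(1/tp) by ring, abs_neg]
      exact hinvp
    have hgp2 : 0 < g (1/tp) * g 0 := hball _ hinvp
    have hgm2 : 0 < g (1/tm) * g 0 := hball _ hinvm
    have hgp2ne : g (1/tp) ≠ 0 := by
      intro h0; rw [h0, zero_mul] at hgp2; exact lt_irrefl 0 hgp2
    have hgm2ne : g (1/tm) ≠ 0 := by
      intro h0; rw [h0, zero_mul] at hgm2; exact lt_irrefl 0 hgm2
    by_cases hroot : ∃ t : ℝ, (t < 0 ∨ 1 < t) ∧ f t = 0
    · -- a root gives a degenerate tangent configuration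
      obtain ⟨t, ht, hft⟩ := hroot
      have htt : 0 < (t - 1) * t := by
        rcases ht with h | h
        · exact mul_pos_of_neg_of_neg (by linarith) h
        · exact mul_pos (by linarith) (by linarith)
      have hkey := key_dep hd hws v w (fun i => (t - 1) * A i) (fun i => t * B i)
        ((1 - t) • νv + t • νw)
        (fun i hi => by
          rw [show ((t - 1) * A i) * (t * B i) = ((t - 1) * t) * (A i * B i) by ring]
          exact mul_pos htt (hABpos i hi))
        (horthf t) (by simp only [hf] at hft; exact hft)
      have h1t : (1:ℝ) - t ≠ 0 := by
        rcases ht with h | h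
        · intro h0; linarith
        · intro h0; linarith
      have hνveq : νv = ((-t)/(1 - t)) • νw := by
        funext k
        have := congrFun hkey k
        simp only [Pi.add_apply, Pi.smul_apply, smul_eq_mul, Pi.zero_apply] at this ⊢
        field_simp
        linarith
      apply hAne i₀ hi₀
      rw [hA]
      simp only
      rw [hνveq, smul_dotProduct, hw0 i₀, smul_zero]
    · -- no root: intermediate value theorem forces consistent signs, contradiction
      push_neg at hroot
      have hf1ne : f 1 ≠ 0 := by
        rw [hf1]
        apply mul_ne_zero _ (ne_of_gt hQw)
        rw [Finset.prod_ne_zero_iff]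
        intro i _
        by_cases hvw : v i = w i
        · simp [hvw]
        · simp only [if_neg hvw]
          exact hBne i hvw
      have hf0ne : f 0 ≠ 0 := by
        rw [hf0]
        apply mul_ne_zero _ (ne_of_gt hQv)
        rw [Finset.prod_ne_zero_iff]
        intro i _
        by_cases hvw : v i = w i
        · simp [hvw]
        · simp only [if_neg hvw]
          exact neg_ne_zero.mpr (hAne i hvw)
      have hftp : f tp = (tp * ∏ i, (if v i = w i then (1:ℝ) else tp)) * g (1/tp) :=
        hfg tp (ne_of_gt htppos)
      have hftm : f tm = (tm * ∏ i, (if v i = w i then (1:ℝ) else tm)) * g (1/tm) :=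
        hfg tm (ne_of_lt htmneg)
      have hftpne : f tp ≠ 0 := by
        rw [hftp]
        apply mul_ne_zero _ hgp2ne
        apply mul_ne_zero (ne_of_gt htppos)
        rw [Finset.prod_ne_zero_iff]
        intro i _
        split
        · exact one_ne_zero
        · exact ne_of_gt htppos
      have hftmne : f tm ≠ 0 := by
        rw [hftm]
        apply mul_ne_zero _ hgm2ne
        apply mul_ne_zero (ne_of_lt htmneg)
        rw [Finset.prod_ne_zero_iff]
        intro i _
        split
        · exact one_ne_zero
        · exact ne_of_lt htmneg
      have hposp : 0 < f 1 * f tp := by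
        rcases lt_or_gt_of_ne (mul_ne_zero hf1ne hftpne) with hlt | hgt
        · exfalso
          rcases mul_neg_iff.mp hlt with ⟨hp, hn⟩ | ⟨hn, hp⟩
          · obtain ⟨u, hu, hfu⟩ := intermediate_value_Ioo' (le_of_lt htp1)
              hfc.continuousOn (show (0:ℝ) ∈ Set.Ioo (f tp) (f 1) from ⟨hn, hp⟩)
            exact hroot u (Or.inr hu.1) hfu
          · obtain ⟨u, hu, hfu⟩ := intermediate_value_Ioo (le_of_lt htp1)
              hfc.continuousOn (show (0:ℝ) ∈ Set.Ioo (f 1) (f tp) from ⟨hn, hp⟩)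
            exact hroot u (Or.inr hu.1) hfu
        · exact hgt
      have hposm : 0 < f tm * f 0 := by
        rcases lt_or_gt_of_ne (mul_ne_zero hftmne hf0ne) with hlt | hgt
        · exfalso
          rcases mul_neg_iff.mp hlt with ⟨hp, hn⟩ | ⟨hn, hp⟩
          · obtain ⟨u, hu, hfu⟩ := intermediate_value_Ioo' (le_of_lt htmneg)
              hfc.continuousOn (show (0:ℝ) ∈ Set.Ioo (f 0) (f tm) from ⟨hn, hp⟩)
            exact hroot u (Or.inl hu.2) hfu
          · obtain ⟨u, hu, hfu⟩ := intermediate_value_Ioo (le_of_lt htmneg)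
              hfc.continuousOn (show (0:ℝ) ∈ Set.Ioo (f tm) (f 0) from ⟨hn, hp⟩)
            exact hroot u (Or.inl hu.2) hfu
        · exact hgt
      -- combine the four values; derive the sign contradiction
      have hX : 0 < (f 1 * f tp) * (f tm * f 0) := mul_pos hposp hposm
      have hmerge : (∏ i, (if v i = w i then (1:ℝ) else B i)) *
          (∏ i, (if v i = w i then (1:ℝ) else tp)) *
          ((∏ i, (if v i = w i then (1:ℝ) else tm)) *
          (∏ i, (if v i = w i then (1:ℝ) else -A i))) =
          ∏ i, (if v i = w i then (1:ℝ) else B i * tp * (tm * (-A i))) := by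
        rw [← Finset.prod_mul_distrib, ← Finset.prod_mul_distrib, ← Finset.prod_mul_distrib]
        apply Finset.prod_congr rfl
        intro i _
        split <;> ring
      have hPP : 0 < ∏ i, (if v i = w i then (1:ℝ) else B i * tp * (tm * (-A i))) := by
        apply Finset.prod_pos
        intro i _
        split
        · exact one_pos
        · rw [show B i * tp * (tm * (-A i)) = (A i * B i) * (tp * (-tm)) by ring]
          apply mul_pos (hABpos i ‹_›)
          apply mul_pos htppos
          linarith
      have hXeq : (f 1 * f tp) * (f tm * f 0) =
          (tp * tm) * ((∏ i, (if v i = w i then (1:ℝ) else B i * tp * (tm * (-A i)))) *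
            ((νv ⬝ᵥ νv) * (νw ⬝ᵥ νw) * (g (1/tp) * g (1/tm)))) := by
        rw [hf1, hf0, hftp, hftm, ← hmerge]
        ring
      have hgg : 0 < g (1/tp) * g (1/tm) := pos_mul_of_mul_pos hgp2 hgm2
      have htneg : tp * tm < 0 := by
        rw [htmdef]
        nlinarith
      have hXneg : (f 1 * f tp) * (f tm * f 0) < 0 := by
        rw [hXeq]
        apply mul_neg_of_neg_of_pos htneg
        exact mul_pos hPP (mul_pos (mul_pos hQv hQw) hgg)
      linarith

end USO

namespace USO
variable {d : ℕ}

lemma Dmap_self (p : Fin d → Bool → (Fin d → ℝ)) (v : Fin d → Bool) (i : Fin d) :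
    Dmap (fun l => p l (v l)) (p i (v i)) = 0 := by
  apply Matrix.det_eq_zero_of_row_eq_zero i
  intro j
  simp [Dmap, sub_self]

lemma card_filter_eq (p : Fin d → Bool → (Fin d → ℝ))
    (hgp : ∀ (v : Fin d → Bool) (i : Fin d),
      Dmap (fun j => p j (v j)) (p i (!v i)) ≠ 0)
    (v : Fin d → Bool) (i : Fin d) :
    (Finset.univ.filter fun j : Bool =>
      0 ≤ Dmap (fun l => p l (v l)) (p i j)).card =
    if 0 < Dmap (fun l => p l (v l)) (p i (!v i)) then 2 else 1 := by
  classical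
  have h0 : (0:ℝ) ≤ Dmap (fun l => p l (v l)) (p i (v i)) := le_of_eq (Dmap_self p v i).symm
  by_cases hpos : 0 < Dmap (fun l => p l (v l)) (p i (!v i))
  · rw [if_pos hpos]
    have : ∀ j : Bool, 0 ≤ Dmap (fun l => p l (v l)) (p i j) := by
      intro j
      rcases Bool.eq_or_eq_not j (v i) with rfl | rfl
      · exact h0
      · exact le_of_lt hpos
    rw [Finset.filter_true_of_mem (fun j _ => this j)]
    simp
  · rw [if_neg hpos]
    have hneg : Dmap (fun l => p l (v l)) (p i (!v i)) < 0 :=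
      lt_of_le_of_ne (not_lt.mp hpos) (hgp v i)
    have hfil : (Finset.univ.filter fun j : Bool =>
        0 ≤ Dmap (fun l => p l (v l)) (p i j)) = {v i} := by
      ext j
      simp only [Finset.mem_filter, Finset.mem_univ, true_and, Finset.mem_singleton]
      constructor
      · intro hj
        rcases Bool.eq_or_eq_not j (v i) with rfl | rfl
        · rfl
        · exact absurd hj (not_le.mpr hneg)
      · rintro rfl
        exact h0
    rw [hfil]
    simp

theorem twoPoint_tangent_cube_uso' {d : ℕ} (hd : 1 ≤ d)
    (p : Fin d → Bool → (Fin d → ℝ))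
    (hws : WellSeparated fun i => ({p i false, p i true} : Set (Fin d → ℝ)))
    (hgp : ∀ (v : Fin d → Bool) (i : Fin d),
      Dmap (fun j => p j (v j)) (p i (!v i)) ≠ 0)
    (α : Fin d → ℕ) (hα : ∀ i, α i = 1 ∨ α i = 2) :
    ∀ a b : Fin d → Bool, (∀ i, a i ≤ b i) →
      ∃! v : Fin d → Bool,
        (∀ i, a i ≤ v i ∧ v i ≤ b i) ∧
        ∀ i, a i ≠ b i →
          (Finset.univ.filter fun j : Bool =>
            0 ≤ Dmap (fun l => p l (v l)) (p i j)).card = α i := by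
  classical
  intro a b hab
  -- the condition `card = α i` is equivalent to a boolean condition
  have hcond : ∀ (v : Fin d → Bool) (i : Fin d),
      ((Finset.univ.filter fun j : Bool =>
        0 ≤ Dmap (fun l => p l (v l)) (p i j)).card = α i ↔
      (0 < Dmap (fun l => p l (v l)) (p i (!v i)) ↔ α i = 2)) := by
    intro v i
    rw [card_filter_eq p hgp v i]
    rcases hα i with h1 | h2
    · rw [h1]
      constructor
      · intro h
        constructor
        · intro hpos
          rw [if_pos hpos] at h
          exact absurd h (by norm_num)
        · intro h'; exact absurd h' (by norm_num)
      · intro h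
        have : ¬ 0 < Dmap (fun l => p l (v l)) (p i (!v i)) := by
          intro hpos
          exact absurd (h.mp hpos) (by norm_num)
        rw [if_neg this]
    · rw [h2]
      constructor
      · intro h
        constructor
        · intro _; rfl
        · intro _
          by_contra hpos
          rw [if_neg hpos] at h
          exact absurd h (by norm_num)
      · intro h
        rw [if_pos (h.mpr rfl)]
  -- subcube parametrization
  set S := {i : Fin d // a i ≠ b i} with hS
  set e : (S → Bool) → (Fin d → Bool) :=
    fun u i => if h : a i ≠ b i then u ⟨i, h⟩ else a i with he
  have hmem : ∀ u : S → Bool, ∀ i, a i ≤ e u i ∧ e u i ≤ b i := by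
    intro u i
    simp only [he]
    by_cases h : a i ≠ b i
    · rw [dif_pos h]
      have hib := hab i
      cases ha : a i <;> cases hb : b i
      · exact absurd (ha.trans hb.symm) h
      · exact ⟨Bool.false_le _, Bool.le_true _⟩
      · rw [ha, hb] at hib
        exact absurd hib (by simp)
      · exact absurd (ha.trans hb.symm) h
    · rw [dif_neg h]
      push_neg at h
      exact ⟨le_refl _, h ▸ le_refl _⟩
  have heinj : Function.Injective e := by
    intro u u' huu
    funext j
    have := congrFun huu j.1
    simp only [he] at this
    rwa [dif_pos j.2, dif_pos j.2] at this
  have hesur : ∀ v : Fin d → Bool, (∀ i, a i ≤ v i ∧ v i ≤ b i) →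
      e (fun j => v j.1) = v := by
    intro v hv
    funext i
    simp only [he]
    by_cases h : a i ≠ b i
    · rw [dif_pos h]
    · rw [dif_neg h]
      push_neg at h
      have h1 := (hv i).1
      have h2 := (hv i).2
      rw [← h] at h2
      exact le_antisymm h1 h2
  -- the outmap on the subcube
  set Φ : (S → Bool) → (S → Bool) := fun u j =>
    decide (0 < Dmap (fun l => p l (e u l)) (p j.1 (!(e u j.1))) ↔ α j.1 = 2) with hΦ
  have hΦinj : Function.Injective Φ := by
    intro u u' huu
    by_contra hne'
    have hvw : e u ≠ e u' := fun h => hne' (heinj h)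
    apply no_collision hd hws hgp (e u) (e u') hvw
    intro i hi
    have hiS : a i ≠ b i := by
      intro hab'
      apply hi
      have h1 : e u i = a i := by
        simp only [he]; rw [dif_neg (not_not.mpr hab')]
      have h2 : e u' i = a i := by
        simp only [he]; rw [dif_neg (not_not.mpr hab')]
      rw [h1, h2]
    have hswap1 : e u' i = !(e u i) := by
      cases h1 : e u i <;> cases h2 : e u' i <;> simp_all
    have hswap2 : e u i = !(e u' i) := by
      cases h1 : e u i <;> cases h2 : e u' i <;> simp_all
    have hj := congrFun huu ⟨i, hiS⟩
    rw [hΦ] at hj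
    simp only [decide_eq_decide] at hj
    rw [← hswap1, ← hswap2] at hj
    tauto
  obtain ⟨u, hu⟩ := Finite.injective_iff_surjective.mp hΦinj (fun _ => true)
  refine ⟨e u, ⟨hmem u, ?_⟩, ?_⟩
  · intro i hi
    rw [hcond (e u) i]
    have := congrFun hu ⟨i, hi⟩
    rw [hΦ] at this
    simpa [decide_eq_true_iff] using this
  · rintro v ⟨hv1, hv2⟩
    set u' : S → Bool := fun j => v j.1 with hu'
    have heu' : e u' = v := hesur v hv1
    have hΦu' : Φ u' = fun _ => true := by
      funext j
      rw [hΦ]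
      simp only [decide_eq_true_iff]
      rw [heu']
      exact (hcond v j.1).mp (hv2 j.1 j.2)
    have : u' = u := hΦinj (hΦu'.trans hu.symm)
    rw [← heu', this]

end USO

/-- Given well-separated two-point sets `P i = {p i false, p i true}` in general
position and `α i ∈ {1, 2}`, the orientation `O` of the `d`-cube with
`O(v) i = 0 ↔ #{j : D_v (p i j) ≥ 0} = α i` is a unique sink orientation: every
subcube (given by `a ≤ b`) has exactly one vertex whose edges inside the subcube
are all incoming. -/
theorem twoPoint_tangent_cube_uso {d : ℕ} (hd : 1 ≤ d)
    (p : Fin d → Bool → (Fin d → ℝ))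
    (hws : WellSeparated fun i => ({p i false, p i true} : Set (Fin d → ℝ)))
    (hgp : ∀ (v : Fin d → Bool) (i : Fin d),
      Dmap (fun j => p j (v j)) (p i (!v i)) ≠ 0)
    (α : Fin d → ℕ) (hα : ∀ i, α i = 1 ∨ α i = 2) :
    ∀ a b : Fin d → Bool, (∀ i, a i ≤ b i) →
      ∃! v : Fin d → Bool,
        (∀ i, a i ≤ v i ∧ v i ≤ b i) ∧
        ∀ i, a i ≠ b i →
          (Finset.univ.filter fun j : Bool =>
            0 ≤ Dmap (fun l => p l (v l)) (p i j)).card = α i := by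
  exact USO.twoPoint_tangent_cube_uso' hd p hws hgp α hα
end
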